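/- arXiv:1502.05361 — 2 statements merged into one kernel-verified Lean document; each statement's English description precedes it below -/
import Mathlib

section
/- Let G = (V, E) be a graph with |V| = n that admits a nice tree decomposition of width τ with N nodes. Then there exist a polytope P = {x ∈ ℝ^m : Ax ≤ b, Cx = d}, where m and the total number of rows of A and C are at most c·2^(τ+1)·N for an absolute constant c, and a linear map π : ℝ^m → ℝ^V, such that π(P) equals the vertex cover polytope of G, i.e., the convex hull of the characteristic vectors χ_C ∈ {0,1}^V of all vertex covers C of G. -/
/-! Common definitions: CSP instances, configurations, nice tree decompositions,
and the polytopes from Kolman–Koutecký. -/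

/-- A constraint with scope `scope`; its satisfaction depends only on the
coordinates in the scope (it is a relation on the domains of the scope). -/
structure CSPConstraint (n : ℕ) where
  scope : Finset (Fin n)
  sat : (Fin n → ℝ) → Prop
  sat_congr : ∀ z z' : Fin n → ℝ, (∀ v ∈ scope, z v = z' v) → sat z → sat z'

/-- A CSP instance: finite real domains, hard constraints and soft constraints. -/
structure CSPInstance (n : ℕ) where
  dom : Fin n → Finset ℝ
  hard : List (CSPConstraint n)
  soft : List (CSPConstraint n)

variable {n : ℕ}

/-- The list of all constraints (hard and soft). -/
def consList (Q : CSPInstance n) : List (CSPConstraint n) := Q.hard ++ Q.soft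

/-- A feasible assignment: values in the domains, satisfying all hard constraints. -/
def Feasible (Q : CSPInstance n) (z : Fin n → ℝ) : Prop :=
  (∀ v, z v ∈ Q.dom v) ∧ ∀ C ∈ Q.hard, C.sat z

-- Configurations of a set `W` of variables: partial assignments (with `none`
-- playing the role of the symbol `λ`) defined exactly on `W`.
open Classical in
noncomputable def configs (Q : CSPInstance n) (W : Finset (Fin n)) :
    Finset (Fin n → Option ℝ) :=
  (Fintype.piFinset fun v =>
      if v ∈ W then (Q.dom v).image some else ({none} : Finset (Option ℝ))).filter
    (fun K => ∀ C ∈ Q.hard, C.scope ⊆ W → C.sat (fun v => (K v).getD 0))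

/-- Restriction `K↾_W` of a configuration: coordinates outside `W` are set to `λ`. -/
def restrictCfg (K : Fin n → Option ℝ) (W : Finset (Fin n)) : Fin n → Option ℝ :=
  fun v => if v ∈ W then K v else none

/-- A (rooted) nice tree: leaves, introduce nodes, forget nodes and join nodes. -/
inductive NiceTree (n : ℕ) : Type
  | leaf (v : Fin n) : NiceTree n
  | introduce (v : Fin n) (t : NiceTree n) : NiceTree n
  | forget (v : Fin n) (t : NiceTree n) : NiceTree n
  | join (t₁ t₂ : NiceTree n) : NiceTree n

namespace NiceTree

/-- The bag of the root node of a nice tree. -/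
def bag : NiceTree n → Finset (Fin n)
  | leaf v => {v}
  | introduce v t => insert v (bag t)
  | forget v t => (bag t).erase v
  | join t₁ _ => bag t₁

/-- All vertices appearing in bags of the tree. -/
def verts : NiceTree n → Finset (Fin n)
  | leaf v => {v}
  | introduce v t => insert v (verts t)
  | forget _ t => verts t
  | join t₁ t₂ => verts t₁ ∪ verts t₂

/-- Number of nodes of the tree. -/
def size : NiceTree n → ℕ
  | leaf _ => 1
  | introduce _ t => size t + 1
  | forget _ t => size t + 1
  | join t₁ t₂ => size t₁ + size t₂ + 1

/-- Structural validity of a nice tree (in particular, the connectivity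
condition of tree decompositions: an introduced vertex does not occur below,
and vertices shared by the two subtrees of a join lie in its bag). -/
def valid : NiceTree n → Prop
  | leaf _ => True
  | introduce v t => v ∉ verts t ∧ valid t
  | forget v t => v ∈ bag t ∧ valid t
  | join t₁ t₂ => bag t₁ = bag t₂ ∧ verts t₁ ∩ verts t₂ ⊆ bag t₁ ∧ valid t₁ ∧ valid t₂

/-- `isSubtree s t`: `s` is a node (subtree) of `t`. -/
def isSubtree (s : NiceTree n) : NiceTree n → Prop
  | leaf v => s = leaf v
  | introduce v t => s = introduce v t ∨ isSubtree s t
  | forget v t => s = forget v t ∨ isSubtree s t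
  | join t₁ t₂ => s = join t₁ t₂ ∨ isSubtree s t₁ ∨ isSubtree s t₂

-- The configurations relevant to the subtree: `ℛ(a) = ⋃_{b ∈ T(a)} 𝒦(B(b))`.
open Classical in
noncomputable def relConfigs (Q : CSPInstance n) : NiceTree n → Finset (Fin n → Option ℝ)
  | leaf v => configs Q {v}
  | introduce v t => configs Q (insert v (bag t)) ∪ relConfigs Q t
  | forget v t => configs Q ((bag t).erase v) ∪ relConfigs Q t
  | join t₁ t₂ => relConfigs Q t₁ ∪ relConfigs Q t₂

end NiceTree

/-- A valid nice tree decomposition for the CSP instance `Q`: every variable is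
in some bag and every constraint scope is contained in some bag. -/
def IsNiceTreeDecompCSP (Q : CSPInstance n) (T : NiceTree n) : Prop :=
  T.valid ∧ (∀ v : Fin n, v ∈ T.verts) ∧
    ∀ C ∈ consList Q, ∃ s : NiceTree n, s.isSubtree T ∧ C.scope ⊆ s.bag

/-- A valid nice tree decomposition of a graph `G`: every vertex is in some bag
and both endpoints of every edge lie in a common bag. -/
def IsNiceTreeDecompGraph (G : SimpleGraph (Fin n)) (T : NiceTree n) : Prop :=
  T.valid ∧ (∀ v : Fin n, v ∈ T.verts) ∧
    ∀ u v : Fin n, G.Adj u v → ∃ s : NiceTree n, s.isSubtree T ∧ u ∈ s.bag ∧ v ∈ s.bag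

/-- The constraint graph of a CSP instance. -/
def constraintGraph (Q : CSPInstance n) : SimpleGraph (Fin n) where
  Adj u v := u ≠ v ∧ ∃ C ∈ consList Q, u ∈ C.scope ∧ v ∈ C.scope
  symm := by
    constructor
    rintro u v ⟨hne, C, hC, hu, hv⟩
    exact ⟨hne.symm, C, hC, hv, hu⟩
  loopless := by
    constructor
    rintro v ⟨hne, -⟩
    exact hne rfl

-- The LP constraints of `P(Q)` relevant to the subtree `t`: bag equations and
-- consistency equations at introduce and forget nodes of `t`.
def RelCons (Q : CSPInstance n) (f : (Fin n → Option ℝ) → ℝ) : NiceTree n → Prop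
  | .leaf v => ∑ K ∈ configs Q {v}, f K = 1
  | .introduce v t =>
      RelCons Q f t ∧ (∑ K ∈ configs Q (insert v t.bag), f K = 1) ∧
      ∀ K ∈ configs Q t.bag,
        ∑ K' ∈ (configs Q (insert v t.bag)).filter
            (fun K' => restrictCfg K' t.bag = K), f K' = f K
  | .forget v t =>
      RelCons Q f t ∧ (∑ K ∈ configs Q (t.bag.erase v), f K = 1) ∧
      ∀ K ∈ configs Q (t.bag.erase v),
        ∑ K' ∈ (configs Q t.bag).filter
            (fun K' => restrictCfg K' (t.bag.erase v) = K), f K' = f K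
  | .join t₁ t₂ => RelCons Q f t₁ ∧ RelCons Q f t₂

/-- All the constraints of `P(Q)` relevant to the subtree `t`, including the
bounds `0 ≤ f(K) ≤ 1` for relevant configurations. -/
def RelevantLP (Q : CSPInstance n) (t : NiceTree n) (f : (Fin n → Option ℝ) → ℝ) : Prop :=
  RelCons Q f t ∧ ∀ K ∈ t.relConfigs Q, 0 ≤ f K ∧ f K ≤ 1

/-- The polytope `P(Q) ⊆ ℝ^{𝒦_ℬ}` (coordinates outside `𝒦_ℬ` are zero). -/
def Ppoly (Q : CSPInstance n) (T : NiceTree n) : Set ((Fin n → Option ℝ) → ℝ) :=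
  {f | RelevantLP Q T f ∧ ∀ K, K ∉ T.relConfigs Q → f K = 0}

/-- Extended feasible assignments `(z, h)`. -/
def ExtAssignments (Q : CSPInstance n) :
    Set ((Fin n → ℝ) × (Fin Q.soft.length → ℝ)) :=
  {p | Feasible Q p.1 ∧ ∀ i : Fin Q.soft.length,
      ((Q.soft.get i).sat p.1 ∧ p.2 i = 1) ∨ (¬ (Q.soft.get i).sat p.1 ∧ p.2 i = 0)}

/-- `CSP(Q)`: the convex hull of all extended feasible assignments. -/
def CSPpolytope (Q : CSPInstance n) : Set ((Fin n → ℝ) × (Fin Q.soft.length → ℝ)) :=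
  convexHull ℝ (ExtAssignments Q)

/-- `CSP'(Q)`: the convex hull of all feasible assignments. -/
def CSPpolytope' (Q : CSPInstance n) : Set (Fin n → ℝ) :=
  convexHull ℝ {z | Feasible Q z}

/-- The `y`-variables of the basic LP: one for each `v ∈ V` and `i ∈ D_v`. -/
abbrev YType (Q : CSPInstance n) := (v : Fin n) → {i : ℝ // i ∈ Q.dom v} → ℝ

/-- The `g`-variables of the basic LP: one for each constraint `C_U ∈ 𝒞 ∪ ℋ`
and each configuration `K ∈ 𝒦(U)`. -/
abbrev GType (Q : CSPInstance n) :=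
  (c : Fin (consList Q).length) →
    {K : Fin n → Option ℝ // K ∈ configs Q ((consList Q).get c).scope} → ℝ

/-- The basic LP (1)–(3). -/
def BasicLP (Q : CSPInstance n) (p : YType Q × GType Q) : Prop :=
  (∀ v : Fin n, ∑ i ∈ (Q.dom v).attach, p.1 v i = 1) ∧
  (∀ c : Fin (consList Q).length, ∀ v ∈ ((consList Q).get c).scope,
    ∀ (i : ℝ) (hi : i ∈ Q.dom v),
      ∑ K ∈ (configs Q ((consList Q).get c).scope).attach.filter
          (fun K => K.1 v = some i), p.2 c K = p.1 v ⟨i, hi⟩) ∧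
  (∀ v i, 0 ≤ p.1 v i ∧ p.1 v i ≤ 1) ∧ (∀ c K, 0 ≤ p.2 c K ∧ p.2 c K ≤ 1)

/-- Integrality (all coordinates in `{0,1}`) of a `(y, g)` vector. -/
def IntegralYG (Q : CSPInstance n) (p : YType Q × GType Q) : Prop :=
  (∀ v i, p.1 v i = 0 ∨ p.1 v i = 1) ∧ ∀ c K, p.2 c K = 0 ∨ p.2 c K = 1

-- The map sending a (feasible) assignment `z` to the `(y, g)` vector of the basic LP.
open Classical in
noncomputable def exMap (Q : CSPInstance n) (z : Fin n → ℝ) : YType Q × GType Q :=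
  (fun v i => if z v = i.1 then 1 else 0,
   fun c K => if ∀ u ∈ ((consList Q).get c).scope, K.1 u = some (z u) then 1 else 0)

/-! ### Auxiliary development for Statement 13 -/

namespace VCEF

open NiceTree Finset

variable {n : ℕ}

/-- `S` covers all edges of `G` inside `B`. -/
def coversIn (G : SimpleGraph (Fin n)) (S B : Finset (Fin n)) : Prop :=
  ∀ u ∈ B, ∀ v ∈ B, G.Adj u v → u ∈ S ∨ v ∈ S

lemma coversIn_mono {G : SimpleGraph (Fin n)} {S S' B : Finset (Fin n)} (h : S ⊆ S')
    (hc : coversIn G S B) : coversIn G S' B :=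
  fun u hu v hv ha => (hc u hu v hv ha).imp (@h u) (@h v)

lemma coversIn_anti {G : SimpleGraph (Fin n)} {S B B' : Finset (Fin n)} (h : B' ⊆ B)
    (hc : coversIn G S B) : coversIn G S B' :=
  fun u hu v hv ha => hc u (h hu) v (h hv) ha

lemma coversIn_inter {G : SimpleGraph (Fin n)} {S B : Finset (Fin n)}
    (hc : coversIn G S B) : coversIn G (S ∩ B) B := fun u hu v hv ha =>
  (hc u hu v hv ha).imp (fun h => Finset.mem_inter.2 ⟨h, hu⟩)
    (fun h => Finset.mem_inter.2 ⟨h, hv⟩)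

lemma coversIn_singleton {G : SimpleGraph (Fin n)} (S : Finset (Fin n)) (v : Fin n) :
    coversIn G S {v} := by
  intro u hu w hw ha
  rw [Finset.mem_singleton] at hu hw
  subst hu; subst hw
  exact absurd ha (G.loopless.irrefl _)

/-- Local configurations at a bag `B`: subsets of `B` covering all edges inside `B`. -/
def Cfg (G : SimpleGraph (Fin n)) (B : Finset (Fin n)) : Type :=
  {A : Finset (Fin n) // A ⊆ B ∧ coversIn G A B}

noncomputable instance (G : SimpleGraph (Fin n)) (B : Finset (Fin n)) : Fintype (Cfg G B) := by
  classical exact Subtype.fintype _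

instance (G : SimpleGraph (Fin n)) (B : Finset (Fin n)) : DecidableEq (Cfg G B) := fun a b =>
  decidable_of_iff (a.1 = b.1) Subtype.ext_iff.symm

open Classical in
lemma sum_cfg {G : SimpleGraph (Fin n)} {B A : Finset (Fin n)} (f : Finset (Fin n) → ℝ) :
    (∑ K : Cfg G B, if K.1 = A then f K.1 else 0)
      = if A ⊆ B ∧ coversIn G A B then f A else 0 := by
  classical
  split_ifs with h
  · have heq := Finset.sum_eq_single_of_mem (f := fun K : Cfg G B => if K.1 = A then f K.1 else 0)
      (⟨A, h⟩ : Cfg G B) (Finset.mem_univ _)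
      (fun K _ hK => if_neg fun hh => hK (Subtype.ext hh))
    exact heq.trans (by simp)
  · apply Finset.sum_eq_zero
    intro K _
    exact if_neg fun hh => h (by rw [← hh]; exact K.2)

lemma sum_subtype_ite {α : Type*} {P : α → Prop} [Fintype {a // P a}] [DecidableEq α]
    (i : {a // P a}) (f : {a // P a} → ℝ) :
    (∑ K : {a // P a}, if K.1 = i.1 then f K else 0) = f i := by
  have heq := Finset.sum_eq_single_of_mem (f := fun K : {a // P a} => if K.1 = i.1 then f K else 0)
    i (Finset.mem_univ _) (fun K _ hK => if_neg fun h => hK (Subtype.ext h))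
  exact heq.trans (by simp)

lemma sum_powerset_ite {V A : Finset (Fin n)} (hA : A ⊆ V) (f : Finset (Fin n) → ℝ) :
    (∑ S ∈ V.powerset, if A = S then f S else 0) = f A := by
  rw [Finset.sum_ite_eq]
  exact if_pos (Finset.mem_powerset.2 hA)

lemma ite_sum_zero {α : Type*} {c : Prop} [Decidable c] {s : Finset α} (f : α → ℝ) :
    (if c then (∑ x ∈ s, f x) else 0) = ∑ x ∈ s, (if c then f x else 0) := by
  split_ifs with h
  · rfl
  · exact Finset.sum_const_zero.symm

lemma erase_inter_right (S B : Finset (Fin n)) (v : Fin n) :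
    (S ∩ B).erase v = S ∩ B.erase v := by
  ext x
  simp only [Finset.mem_erase, Finset.mem_inter]
  tauto

lemma inter_insert_of_not_mem_left {S B : Finset (Fin n)} {v : Fin n} (hv : v ∉ S) :
    S ∩ insert v B = S ∩ B := by
  ext x
  simp only [Finset.mem_inter, Finset.mem_insert]
  constructor
  · rintro ⟨hS, rfl | hB⟩
    · exact absurd hS hv
    · exact ⟨hS, hB⟩
  · rintro ⟨hS, hB⟩; exact ⟨hS, Or.inr hB⟩

lemma insert_inter_insert (S B : Finset (Fin n)) (v : Fin n) :
    (insert v S) ∩ (insert v B) = insert v (S ∩ B) := by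
  ext x
  simp only [Finset.mem_inter, Finset.mem_insert]
  tauto

lemma insert_inter_of_not_mem_right {S B : Finset (Fin n)} {v : Fin n} (hv : v ∉ B) :
    (insert v S) ∩ B = S ∩ B := by
  ext x
  simp only [Finset.mem_inter, Finset.mem_insert]
  constructor
  · rintro ⟨rfl | hS, hB⟩
    · exact absurd hB hv
    · exact ⟨hS, hB⟩
  · rintro ⟨hS, hB⟩; exact ⟨Or.inr hS, hB⟩

lemma erase_eq_iff {A K : Finset (Fin n)} {v : Fin n} (hv : v ∉ A) :
    K.erase v = A ↔ K = A ∨ K = insert v A := by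
  constructor
  · intro h
    by_cases hvK : v ∈ K
    · right
      rw [← h, Finset.insert_erase hvK]
    · left
      rw [← h, Finset.erase_eq_of_notMem hvK]
  · rintro (rfl | rfl)
    · exact Finset.erase_eq_of_notMem hv
    · exact Finset.erase_insert hv

/-! ### Structural lemmas for nice trees -/

lemma isSubtree_refl : ∀ t : NiceTree n, t.isSubtree t
  | .leaf _ => rfl
  | .introduce _ _ => Or.inl rfl
  | .forget _ _ => Or.inl rfl
  | .join _ _ => Or.inl rfl

lemma bag_subset_verts : ∀ t : NiceTree n, t.bag ⊆ t.verts
  | .leaf _ => Finset.Subset.refl _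
  | .introduce v t => Finset.insert_subset_insert _ (bag_subset_verts t)
  | .forget v t => (Finset.erase_subset _ _).trans (bag_subset_verts t)
  | .join t₁ t₂ => (bag_subset_verts t₁).trans Finset.subset_union_left

/-- The collection of all bags of a nice tree. -/
def bags : NiceTree n → Finset (Finset (Fin n))
  | .leaf v => {{v}}
  | .introduce v t => insert (insert v t.bag) (bags t)
  | .forget v t => insert (t.bag.erase v) (bags t)
  | .join t₁ t₂ => bags t₁ ∪ bags t₂

lemma bag_mem_bags : ∀ t : NiceTree n, t.bag ∈ bags t
  | .leaf _ => Finset.mem_singleton_self _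
  | .introduce _ _ => Finset.mem_insert_self _ _
  | .forget _ _ => Finset.mem_insert_self _ _
  | .join t₁ _ => Finset.mem_union_left _ (bag_mem_bags t₁)

lemma mem_bags_subset_verts : ∀ t : NiceTree n, ∀ B ∈ bags t, B ⊆ t.verts := by
  intro t
  induction t with
  | leaf v =>
      intro B hB
      simp only [bags, Finset.mem_singleton] at hB
      subst hB; exact Finset.Subset.refl _
  | introduce v t ih =>
      intro B hB
      simp only [bags, Finset.mem_insert] at hB
      rcases hB with rfl | hB
      · exact Finset.insert_subset_insert _ (bag_subset_verts t)
      · exact (ih B hB).trans (Finset.subset_insert _ _)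
  | forget v t ih =>
      intro B hB
      simp only [bags, Finset.mem_insert] at hB
      rcases hB with rfl | hB
      · exact (Finset.erase_subset _ _).trans (bag_subset_verts t)
      · exact ih B hB
  | join t₁ t₂ ih₁ ih₂ =>
      intro B hB
      simp only [bags, Finset.mem_union] at hB
      rcases hB with hB | hB
      · exact (ih₁ B hB).trans Finset.subset_union_left
      · exact (ih₂ B hB).trans Finset.subset_union_right

lemma bags_subtree : ∀ {s t : NiceTree n}, s.isSubtree t → bags s ⊆ bags t := by
  intro s t
  induction t with
  | leaf v =>
      intro h
      simp only [NiceTree.isSubtree] at h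
      subst h; exact Finset.Subset.refl _
  | introduce v t ih =>
      intro h
      simp only [NiceTree.isSubtree] at h
      rcases h with rfl | h
      · exact Finset.Subset.refl _
      · exact (ih h).trans (Finset.subset_insert _ _)
  | forget v t ih =>
      intro h
      simp only [NiceTree.isSubtree] at h
      rcases h with rfl | h
      · exact Finset.Subset.refl _
      · exact (ih h).trans (Finset.subset_insert _ _)
  | join t₁ t₂ ih₁ ih₂ =>
      intro h
      simp only [NiceTree.isSubtree] at h
      rcases h with rfl | h | h
      · exact Finset.Subset.refl _
      · exact (ih₁ h).trans Finset.subset_union_left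
      · exact (ih₂ h).trans Finset.subset_union_right

/-! ### Variables of the extended formulation -/

/-- The variable indices: one variable per node and per configuration of its bag. -/
def VarIdx (G : SimpleGraph (Fin n)) : NiceTree n → Type
  | .leaf v => Cfg G {v}
  | .introduce v t => Cfg G (insert v t.bag) ⊕ VarIdx G t
  | .forget v t => Cfg G (t.bag.erase v) ⊕ VarIdx G t
  | .join t₁ t₂ => VarIdx G t₁ ⊕ VarIdx G t₂

noncomputable instance instFintypeVarIdx (G : SimpleGraph (Fin n)) :
    ∀ t : NiceTree n, Fintype (VarIdx G t)
  | .leaf v => inferInstanceAs (Fintype (Cfg G {v}))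
  | .introduce v t =>
      letI := instFintypeVarIdx G t
      inferInstanceAs (Fintype (Cfg G (insert v t.bag) ⊕ VarIdx G t))
  | .forget v t =>
      letI := instFintypeVarIdx G t
      inferInstanceAs (Fintype (Cfg G (t.bag.erase v) ⊕ VarIdx G t))
  | .join t₁ t₂ =>
      letI := instFintypeVarIdx G t₁
      letI := instFintypeVarIdx G t₂
      inferInstanceAs (Fintype (VarIdx G t₁ ⊕ VarIdx G t₂))

/-- The bag at which a variable lives. -/
def bagOf (G : SimpleGraph (Fin n)) : (t : NiceTree n) → VarIdx G t → Finset (Fin n)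
  | .leaf v, _ => {v}
  | .introduce v t, .inl _ => insert v t.bag
  | .introduce _ t, .inr j => bagOf G t j
  | .forget v t, .inl _ => t.bag.erase v
  | .forget _ t, .inr j => bagOf G t j
  | .join t₁ _, .inl j => bagOf G t₁ j
  | .join _ t₂, .inr j => bagOf G t₂ j

/-- The configuration of a variable. -/
def cfgOf (G : SimpleGraph (Fin n)) : (t : NiceTree n) → VarIdx G t → Finset (Fin n)
  | .leaf _, K => K.1
  | .introduce _ _, .inl K => K.1
  | .introduce _ t, .inr j => cfgOf G t j
  | .forget _ _, .inl K => K.1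
  | .forget _ t, .inr j => cfgOf G t j
  | .join t₁ _, .inl j => cfgOf G t₁ j
  | .join _ t₂, .inr j => cfgOf G t₂ j

/-- The variable of the root node associated to a root configuration. -/
def rootIdx (G : SimpleGraph (Fin n)) : (t : NiceTree n) → Cfg G t.bag → VarIdx G t
  | .leaf _, K => K
  | .introduce _ _, K => .inl K
  | .forget _ _, K => .inl K
  | .join t₁ _, K => .inl (rootIdx G t₁ K)

lemma bagOf_rootIdx (G : SimpleGraph (Fin n)) :
    ∀ (t : NiceTree n) (K : Cfg G t.bag), bagOf G t (rootIdx G t K) = t.bag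
  | .leaf _, _ => rfl
  | .introduce _ _, _ => rfl
  | .forget _ _, _ => rfl
  | .join t₁ _, K => bagOf_rootIdx G t₁ K

lemma cfgOf_rootIdx (G : SimpleGraph (Fin n)) :
    ∀ (t : NiceTree n) (K : Cfg G t.bag), cfgOf G t (rootIdx G t K) = K.1
  | .leaf _, _ => rfl
  | .introduce _ _, _ => rfl
  | .forget _ _, _ => rfl
  | .join t₁ _, K => cfgOf_rootIdx G t₁ K

lemma bagOf_mem_bags (G : SimpleGraph (Fin n)) :
    ∀ (t : NiceTree n) (i : VarIdx G t), bagOf G t i ∈ bags t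
  | .leaf _, _ => Finset.mem_singleton_self _
  | .introduce _ _, .inl _ => Finset.mem_insert_self _ _
  | .introduce _ t, .inr j => Finset.mem_insert_of_mem (bagOf_mem_bags G t j)
  | .forget _ _, .inl _ => Finset.mem_insert_self _ _
  | .forget _ t, .inr j => Finset.mem_insert_of_mem (bagOf_mem_bags G t j)
  | .join t₁ _, .inl j => Finset.mem_union_left _ (bagOf_mem_bags G t₁ j)
  | .join _ t₂, .inr j => Finset.mem_union_right _ (bagOf_mem_bags G t₂ j)

/-- The `0/1` point of the extended space associated with a vertex set `S`. -/
def vec (G : SimpleGraph (Fin n)) (t : NiceTree n) (S : Finset (Fin n)) : VarIdx G t → ℝ :=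
  fun i => if cfgOf G t i = S ∩ bagOf G t i then 1 else 0

lemma vec_nonneg (G : SimpleGraph (Fin n)) (t : NiceTree n) (S : Finset (Fin n))
    (i : VarIdx G t) : 0 ≤ vec G t S i := by
  unfold vec
  split_ifs <;> norm_num

lemma vec_rootIdx (G : SimpleGraph (Fin n)) (t : NiceTree n) (S : Finset (Fin n))
    (K : Cfg G t.bag) :
    vec G t S (rootIdx G t K) = if K.1 = S ∩ t.bag then 1 else 0 := by
  simp only [vec, cfgOf_rootIdx, bagOf_rootIdx]

/-- The (local-consistency) feasibility conditions of the extended formulation. -/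
def Feas (G : SimpleGraph (Fin n)) : (t : NiceTree n) → (VarIdx G t → ℝ) → Prop
  | .leaf v, μ => (∀ i, 0 ≤ μ i) ∧ ∑ K : Cfg G {v}, μ K = 1
  | .introduce v t, μ => (∀ i, 0 ≤ μ i) ∧ Feas G t (μ ∘ Sum.inr) ∧
      ∀ K : Cfg G t.bag,
        (∑ K' : Cfg G (insert v t.bag), if K'.1.erase v = K.1 then μ (Sum.inl K') else 0)
          = μ (Sum.inr (rootIdx G t K))
  | .forget v t, μ => (∀ i, 0 ≤ μ i) ∧ Feas G t (μ ∘ Sum.inr) ∧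
      ∀ K : Cfg G (t.bag.erase v),
        μ (Sum.inl K)
          = ∑ K' : Cfg G t.bag, if K'.1.erase v = K.1 then μ (Sum.inr (rootIdx G t K')) else 0
  | .join t₁ t₂, μ => (∀ i, 0 ≤ μ i) ∧ Feas G t₁ (μ ∘ Sum.inl) ∧ Feas G t₂ (μ ∘ Sum.inr) ∧
      ∀ K : Cfg G t₁.bag,
        μ (Sum.inl (rootIdx G t₁ K))
          = ∑ K' : Cfg G t₂.bag, if K'.1 = K.1 then μ (Sum.inr (rootIdx G t₂ K')) else 0

lemma root_mass (G : SimpleGraph (Fin n)) (t : NiceTree n) (w : Finset (Fin n) → ℝ)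
    (μ : VarIdx G t → ℝ)
    (h : ∀ i, μ i = ∑ S ∈ t.verts.powerset, w S * vec G t S i) (K : Cfg G t.bag) :
    μ (rootIdx G t K) = ∑ S ∈ t.verts.powerset, (if S ∩ t.bag = K.1 then w S else 0) := by
  rw [h]
  refine Finset.sum_congr rfl fun S _ => ?_
  rw [vec_rootIdx]
  by_cases hh : K.1 = S ∩ t.bag
  · rw [if_pos hh, if_pos hh.symm, mul_one]
  · rw [if_neg hh, if_neg (Ne.symm hh), mul_zero]
lemma ite_eq_symm {β : Type*} {α : Type*} [DecidableEq α] (a b : α) (x y : β) :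
    (if a = b then x else y) = if b = a then x else y := if_congr eq_comm rfl rfl

open Classical in
lemma sum_cfg_two {G : SimpleGraph (Fin n)} {B : Finset (Fin n)} (A : Finset (Fin n))
    (cond : Finset (Fin n) → Prop) [DecidablePred cond] (c : ℝ) :
    (∑ K : Cfg G B, if cond K.1 then (if A = K.1 then c else 0) else 0)
      = if (A ⊆ B ∧ coversIn G A B) ∧ cond A then c else 0 := by
  have h1 : ∀ K : Cfg G B, (if cond K.1 then (if A = K.1 then c else 0) else 0)
      = (if K.1 = A then (if cond K.1 then c else 0) else 0) := by
    intro K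
    by_cases h2 : K.1 = A
    · subst h2
      simp
    · rw [if_neg h2, if_neg (show ¬ A = K.1 from fun hh => h2 hh.symm)]
      exact ite_self 0
  rw [Finset.sum_congr rfl fun K _ => h1 K, sum_cfg (fun X => if cond X then c else 0)]
  by_cases h : A ⊆ B ∧ coversIn G A B
  · rw [if_pos h]
    by_cases hc : cond A
    · rw [if_pos hc, if_pos ⟨h, hc⟩]
    · rw [if_neg hc, if_neg fun hh => hc hh.2]
  · rw [if_neg h, if_neg fun hh => h hh.1]

/-- Every vertex-set that covers all bags yields a feasible `0/1` point. -/
lemma good_vec_feas (G : SimpleGraph (Fin n)) :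
    ∀ t : NiceTree n, t.valid → ∀ S : Finset (Fin n),
      (∀ B ∈ bags t, coversIn G S B) → Feas G t (vec G t S) := by
  intro t
  induction t with
  | leaf v =>
      intro _ S hS
      refine ⟨vec_nonneg G _ S, ?_⟩
      have h0 : ∀ K : Cfg G {v}, vec G (NiceTree.leaf v) S K
          = if K.1 = S ∩ {v} then (1:ℝ) else 0 := fun K => rfl
      rw [Finset.sum_congr rfl fun K _ => h0 K, sum_cfg (fun _ => (1:ℝ)),
        if_pos ⟨Finset.inter_subset_right, coversIn_singleton _ v⟩]
  | introduce v t ih =>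
      intro hval S hS
      obtain ⟨hv, hvalt⟩ := hval
      have hvB : v ∉ t.bag := fun h => hv (bag_subset_verts t h)
      refine ⟨vec_nonneg G _ S, ih hvalt S (fun B hB => hS B (Finset.mem_insert_of_mem hB)), ?_⟩
      intro K
      have hA : S ∩ insert v t.bag ⊆ insert v t.bag
          ∧ coversIn G (S ∩ insert v t.bag) (insert v t.bag) :=
        ⟨Finset.inter_subset_right, coversIn_inter (hS _ (Finset.mem_insert_self _ _))⟩
      have h1 : ∀ K' : Cfg G (insert v t.bag),
          (if K'.1.erase v = K.1 then vec G (NiceTree.introduce v t) S (Sum.inl K') else 0)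
            = (if K'.1.erase v = K.1
                then (if S ∩ insert v t.bag = K'.1 then (1:ℝ) else 0) else 0) := by
        intro K'
        by_cases hc : K'.1.erase v = K.1
        · rw [if_pos hc, if_pos hc]
          show (if K'.1 = S ∩ insert v t.bag then (1:ℝ) else 0) = _
          exact ite_eq_symm _ _ _ _
        · rw [if_neg hc, if_neg hc]
      rw [Finset.sum_congr rfl fun K' _ => h1 K',
        sum_cfg_two (S ∩ insert v t.bag) (fun X => X.erase v = K.1) 1]
      have hAe : (S ∩ insert v t.bag).erase v = S ∩ t.bag := by
        rw [erase_inter_right, Finset.erase_insert hvB]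
      rw [hAe]
      show _ = vec G t S (rootIdx G t K)
      rw [vec_rootIdx]
      by_cases h : K.1 = S ∩ t.bag
      · rw [if_pos ⟨hA, h.symm⟩, if_pos h]
      · rw [if_neg fun hh => h hh.2.symm, if_neg h]
  | forget v t ih =>
      intro hval S hS
      obtain ⟨hv, hvalt⟩ := hval
      refine ⟨vec_nonneg G _ S, ih hvalt S (fun B hB => hS B (Finset.mem_insert_of_mem hB)), ?_⟩
      intro K
      have hA : S ∩ t.bag ⊆ t.bag ∧ coversIn G (S ∩ t.bag) t.bag :=
        ⟨Finset.inter_subset_right,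
          coversIn_inter (hS _ (Finset.mem_insert_of_mem (bag_mem_bags t)))⟩
      have h1 : ∀ K' : Cfg G t.bag,
          (if K'.1.erase v = K.1
              then vec G (NiceTree.forget v t) S (Sum.inr (rootIdx G t K')) else 0)
            = (if K'.1.erase v = K.1 then (if S ∩ t.bag = K'.1 then (1:ℝ) else 0) else 0) := by
        intro K'
        by_cases hc : K'.1.erase v = K.1
        · rw [if_pos hc, if_pos hc]
          show vec G t S (rootIdx G t K') = _
          rw [vec_rootIdx]
          exact ite_eq_symm _ _ _ _
        · rw [if_neg hc, if_neg hc]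
      rw [Finset.sum_congr rfl fun K' _ => h1 K',
        sum_cfg_two (S ∩ t.bag) (fun X => X.erase v = K.1) 1, erase_inter_right]
      show (if K.1 = S ∩ t.bag.erase v then (1:ℝ) else 0) = _
      by_cases h : K.1 = S ∩ t.bag.erase v
      · rw [if_pos h, if_pos ⟨hA, h.symm⟩]
      · rw [if_neg h, if_neg fun hh => h hh.2.symm]
  | join t₁ t₂ ih₁ ih₂ =>
      intro hval S hS
      obtain ⟨hb, hint, hval1, hval2⟩ := hval
      refine ⟨vec_nonneg G _ S, ih₁ hval1 S (fun B hB => hS B (Finset.mem_union_left _ hB)),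
        ih₂ hval2 S (fun B hB => hS B (Finset.mem_union_right _ hB)), ?_⟩
      intro K
      have hA : S ∩ t₂.bag ⊆ t₂.bag ∧ coversIn G (S ∩ t₂.bag) t₂.bag :=
        ⟨Finset.inter_subset_right,
          coversIn_inter (hS _ (Finset.mem_union_right _ (bag_mem_bags t₂)))⟩
      have h1 : ∀ K' : Cfg G t₂.bag,
          (if K'.1 = K.1 then vec G (NiceTree.join t₁ t₂) S (Sum.inr (rootIdx G t₂ K')) else 0)
            = (if K'.1 = K.1 then (if S ∩ t₂.bag = K'.1 then (1:ℝ) else 0) else 0) := by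
        intro K'
        by_cases hc : K'.1 = K.1
        · rw [if_pos hc, if_pos hc]
          show vec G t₂ S (rootIdx G t₂ K') = _
          rw [vec_rootIdx]
          exact ite_eq_symm _ _ _ _
        · rw [if_neg hc, if_neg hc]
      rw [Finset.sum_congr rfl fun K' _ => h1 K',
        sum_cfg_two (S ∩ t₂.bag) (fun X => X = K.1) 1]
      show vec G t₁ S (rootIdx G t₁ K) = _
      rw [vec_rootIdx]
      have hbb : S ∩ t₁.bag = S ∩ t₂.bag := by rw [hb]
      rw [hbb]
      by_cases h : K.1 = S ∩ t₂.bag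
      · rw [if_pos h, if_pos ⟨hA, h.symm⟩]
      · rw [if_neg h, if_neg fun hh => h hh.2.symm]
/-- Every feasible point is a convex combination of the `0/1` points `vec`. -/
lemma feas_decomp (G : SimpleGraph (Fin n)) :
    ∀ t : NiceTree n, t.valid → ∀ μ : VarIdx G t → ℝ, Feas G t μ →
      ∃ w : Finset (Fin n) → ℝ,
        (∀ S, 0 ≤ w S) ∧
        (∀ S, w S ≠ 0 → S ⊆ t.verts ∧ ∀ B ∈ bags t, coversIn G S B) ∧
        (∑ S ∈ t.verts.powerset, w S = 1) ∧
        (∀ i, μ i = ∑ S ∈ t.verts.powerset, w S * vec G t S i) := by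
  intro t
  induction t with
  | leaf v =>
      intro _ μ hμ
      classical
      obtain ⟨hpos, hsum⟩ := hμ
      refine ⟨fun S => ∑ K : Cfg G {v}, if K.1 = S then μ K else 0, ?_, ?_, ?_, ?_⟩
      · intro S
        exact Finset.sum_nonneg fun K _ => by split_ifs; exacts [hpos K, le_rfl]
      · intro S hS
        obtain ⟨K, -, hK⟩ := Finset.exists_ne_zero_of_sum_ne_zero hS
        have hKS : K.1 = S := by
          by_contra h
          rw [if_neg h] at hK
          exact hK rfl
        subst hKS
        refine ⟨K.2.1, ?_⟩
        intro B hB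
        simp only [bags, Finset.mem_singleton] at hB
        subst hB
        exact coversIn_singleton _ v
      · show (∑ S ∈ Finset.powerset {v}, ∑ K : Cfg G {v}, if K.1 = S then μ K else 0) = 1
        rw [Finset.sum_comm]
        rw [Finset.sum_congr rfl fun (K : Cfg G {v}) (_ : K ∈ Finset.univ) =>
          sum_powerset_ite K.2.1 (fun _ => μ K)]
        exact hsum
      · intro i
        show μ i = ∑ S ∈ Finset.powerset {v},
          (∑ K : Cfg G {v}, if K.1 = S then μ K else 0) * vec G (NiceTree.leaf v) S i
        have h1 : ∀ S ∈ Finset.powerset {v},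
            (∑ K : Cfg G {v}, if K.1 = S then μ K else 0) * vec G (NiceTree.leaf v) S i
              = ∑ K : Cfg G {v}, (if K.1 = S then μ K * vec G (NiceTree.leaf v) S i else 0) := by
          intro S _
          rw [Finset.sum_mul]
          exact Finset.sum_congr rfl fun K _ => by split_ifs <;> simp
        rw [Finset.sum_congr rfl h1, Finset.sum_comm]
        rw [Finset.sum_congr rfl fun (K : Cfg G {v}) (_ : K ∈ Finset.univ) =>
          sum_powerset_ite K.2.1 (fun S => μ K * vec G (NiceTree.leaf v) S i)]
        have h2 : ∀ K : Cfg G {v}, μ K * vec G (NiceTree.leaf v) K.1 i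
            = if K.1 = i.1 then μ K else 0 := by
          intro K
          have hvv : vec G (NiceTree.leaf v) K.1 i = if i.1 = K.1 then (1:ℝ) else 0 := by
            show (if i.1 = K.1 ∩ {v} then (1:ℝ) else 0) = _
            rw [Finset.inter_eq_left.2 K.2.1]
          rw [hvv, mul_ite, mul_one, mul_zero]
          by_cases h : i.1 = K.1
          · rw [if_pos h, if_pos h.symm]
          · rw [if_neg h, if_neg fun hh => h hh.symm]
        rw [Finset.sum_congr rfl fun K _ => h2 K]
        exact (sum_subtype_ite i μ).symm
  | forget v t ih =>
      intro hval μ hμ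
      classical
      obtain ⟨hvb, hvalt⟩ := hval
      obtain ⟨hpos, hF, hrow⟩ := hμ
      obtain ⟨w, hw0, hwsup, hwsum, hwco⟩ := ih hvalt (μ ∘ Sum.inr) hF
      refine ⟨w, hw0, ?_, hwsum, ?_⟩
      · intro S hS
        obtain ⟨h1, h2⟩ := hwsup S hS
        refine ⟨h1, ?_⟩
        intro B hB
        simp only [bags, Finset.mem_insert] at hB
        rcases hB with rfl | hB
        · exact coversIn_anti (Finset.erase_subset _ _) (h2 _ (bag_mem_bags t))
        · exact h2 B hB
      · intro i
        cases i with
        | inr j => exact hwco j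
        | inl K =>
            rw [hrow K]
            have h1 : ∀ K' : Cfg G t.bag,
                (if K'.1.erase v = K.1 then μ (Sum.inr (rootIdx G t K')) else 0)
                  = ∑ S ∈ t.verts.powerset,
                      (if K'.1.erase v = K.1 then (if S ∩ t.bag = K'.1 then w S else 0) else 0) := by
              intro K'
              rw [← ite_sum_zero]
              by_cases hc : K'.1.erase v = K.1
              · rw [if_pos hc, if_pos hc]
                exact root_mass G t w (μ ∘ Sum.inr) hwco K'
              · rw [if_neg hc, if_neg hc]
            rw [Finset.sum_congr rfl fun K' _ => h1 K', Finset.sum_comm]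
            refine Finset.sum_congr rfl fun S hS => ?_
            rw [sum_cfg_two (S ∩ t.bag) (fun X => X.erase v = K.1) (w S), erase_inter_right]
            show _ = w S * (if K.1 = S ∩ t.bag.erase v then (1:ℝ) else 0)
            rw [mul_ite, mul_one, mul_zero]
            by_cases hw : w S = 0
            · rw [hw]
              simp
            · obtain ⟨-, h2⟩ := hwsup S hw
              have hcfg : S ∩ t.bag ⊆ t.bag ∧ coversIn G (S ∩ t.bag) t.bag :=
                ⟨Finset.inter_subset_right, coversIn_inter (h2 _ (bag_mem_bags t))⟩
              by_cases h : K.1 = S ∩ t.bag.erase v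
              · rw [if_pos ⟨hcfg, h.symm⟩, if_pos h]
              · rw [if_neg fun hh => h hh.2.symm, if_neg h]
  | introduce v t ih =>
      intro hval μ hμ
      classical
      obtain ⟨hvv, hvalt⟩ := hval
      have hvB : v ∉ t.bag := fun h => hvv (bag_subset_verts t h)
      obtain ⟨hpos, hF, hrow⟩ := hμ
      obtain ⟨w, hw0, hwsup, hwsum, hwco⟩ := ih hvalt (μ ∘ Sum.inr) hF
      set B := t.bag with hBdef
      set V := t.verts with hVdef
      set mf : Finset (Fin n) → ℝ := fun A => ∑ S ∈ V.powerset, (if S ∩ B = A then w S else 0)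
        with hmf
      set pf : Finset (Fin n) → ℝ :=
        fun A => ∑ K' : Cfg G (insert v B), (if K'.1 = insert v A then μ (Sum.inl K') else 0)
        with hpf
      set qf : Finset (Fin n) → ℝ :=
        fun A => ∑ K' : Cfg G (insert v B), (if K'.1 = A then μ (Sum.inl K') else 0) with hqf
      set rho : Finset (Fin n) → ℝ := fun A => if mf A = 0 then 0 else pf A / mf A with hrho
      have hmf0 : ∀ A, 0 ≤ mf A := fun A =>
        Finset.sum_nonneg fun S _ => by split_ifs; exacts [hw0 S, le_rfl]
      have hpf0 : ∀ A, 0 ≤ pf A := fun A =>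
        Finset.sum_nonneg fun K' _ => by split_ifs; exacts [hpos _, le_rfl]
      have hqf0 : ∀ A, 0 ≤ qf A := fun A =>
        Finset.sum_nonneg fun K' _ => by split_ifs; exacts [hpos _, le_rfl]
      have hmfeq : ∀ K : Cfg G B, mf K.1 = μ (Sum.inr (rootIdx G t K)) := fun K =>
        (root_mass G t w (μ ∘ Sum.inr) hwco K).symm
      have hpq : ∀ K : Cfg G B, pf K.1 + qf K.1 = mf K.1 := by
        intro K
        have hvK : v ∉ K.1 := fun h => hvB (K.2.1 h)
        have key : ∀ K' : Cfg G (insert v B),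
            (if K'.1.erase v = K.1 then μ (Sum.inl K') else 0)
              = (if K'.1 = insert v K.1 then μ (Sum.inl K') else 0)
                + (if K'.1 = K.1 then μ (Sum.inl K') else 0) := by
          intro K'
          by_cases h1 : K'.1 = K.1
          · rw [if_pos ((erase_eq_iff hvK).2 (Or.inl h1)), if_pos h1, if_neg, zero_add]
            intro h2
            rw [h1] at h2
            exact hvK (h2 ▸ Finset.mem_insert_self v K.1)
          · by_cases h2 : K'.1 = insert v K.1
            · rw [if_pos ((erase_eq_iff hvK).2 (Or.inr h2)), if_pos h2, if_neg h1, add_zero]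
            · rw [if_neg, if_neg h2, if_neg h1, add_zero]
              intro h3
              rcases (erase_eq_iff hvK).1 h3 with h | h
              exacts [h1 h, h2 h]
        have hmain : (∑ K' : Cfg G (insert v B),
            if K'.1.erase v = K.1 then μ (Sum.inl K') else 0) = pf K.1 + qf K.1 := by
          rw [Finset.sum_congr rfl fun K' _ => key K', Finset.sum_add_distrib]
        rw [← hmain, hrow K, ← hmfeq K]
      have hdesc : ∀ A : Finset (Fin n), A ⊆ B → coversIn G (insert v A) (insert v B)
          → coversIn G A B := by
        intro A hA hc u hu x hx ha
        rcases hc u (Finset.mem_insert_of_mem hu) x (Finset.mem_insert_of_mem hx) ha with h | h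
        · rcases Finset.mem_insert.1 h with rfl | h
          · exact absurd hu hvB
          · exact Or.inl h
        · rcases Finset.mem_insert.1 h with rfl | h
          · exact absurd hx hvB
          · exact Or.inr h
      have hqinval : ∀ A : Finset (Fin n), A ⊆ B → ¬(A ⊆ B ∧ coversIn G A B) → qf A = 0 := by
        intro A hA hnc
        apply Finset.sum_eq_zero
        intro K' _
        apply if_neg
        intro hh
        exact hnc ⟨hA, coversIn_anti (Finset.subset_insert _ _) (hh ▸ K'.2.2)⟩
      have hpinval : ∀ A : Finset (Fin n), A ⊆ B → ¬(A ⊆ B ∧ coversIn G A B) → pf A = 0 := by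
        intro A hA hnc
        apply Finset.sum_eq_zero
        intro K' _
        apply if_neg
        intro hh
        exact hnc ⟨hA, hdesc A hA (hh ▸ K'.2.2)⟩
      have hmval : ∀ A : Finset (Fin n), mf A ≠ 0 → A ⊆ B ∧ coversIn G A B := by
        intro A hm
        obtain ⟨S, -, hS⟩ := Finset.exists_ne_zero_of_sum_ne_zero hm
        have hcond : S ∩ B = A := by
          by_contra h
          rw [if_neg h] at hS
          exact hS rfl
        have hw' : w S ≠ 0 := by
          intro h
          rw [if_pos hcond, h] at hS
          exact hS rfl
        obtain ⟨-, h2⟩ := hwsup S hw'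
        subst hcond
        exact ⟨Finset.inter_subset_right, coversIn_inter (h2 _ (bag_mem_bags t))⟩
      have hF1 : ∀ A : Finset (Fin n), A ⊆ B → pf A = rho A * mf A := by
        intro A hA
        by_cases hm : mf A = 0
        · rw [hm, mul_zero]
          by_cases hval' : A ⊆ B ∧ coversIn G A B
          · have h : pf A + qf A = mf A := hpq ⟨A, hval'⟩
            rw [hm] at h
            linarith [hpf0 A, hqf0 A]
          · exact hpinval A hA hval'
        · simp only [hrho]
          rw [if_neg hm, div_mul_cancel₀ _ hm]
      have hqok : ∀ A : Finset (Fin n), A ⊆ B → qf A = (1 - rho A) * mf A := by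
        intro A hA
        by_cases hm : mf A = 0
        · rw [hm, mul_zero]
          by_cases hval' : A ⊆ B ∧ coversIn G A B
          · have h : pf A + qf A = mf A := hpq ⟨A, hval'⟩
            rw [hm] at h
            linarith [hpf0 A, hqf0 A]
          · exact hqinval A hA hval'
        · have hvalA := hmval A hm
          have h : pf A + qf A = mf A := hpq ⟨A, hvalA⟩
          simp only [hrho]
          rw [if_neg hm]
          field_simp
          linarith
      have hrho01 : ∀ A : Finset (Fin n), A ⊆ B → 0 ≤ rho A ∧ rho A ≤ 1 := by
        intro A hA
        simp only [hrho]
        split_ifs with hm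
        · norm_num
        · have hmpos : 0 < mf A := lt_of_le_of_ne (hmf0 A) (Ne.symm hm)
          have hvalA := hmval A hm
          have h : pf A + qf A = mf A := hpq ⟨A, hvalA⟩
          constructor
          · exact div_nonneg (hpf0 A) (le_of_lt hmpos)
          · rw [div_le_one hmpos]
            linarith [hqf0 A]
      have hdisj : Disjoint V.powerset (V.powerset.image (insert v)) := by
        rw [Finset.disjoint_left]
        intro S hSmem hSimg
        obtain ⟨S₀, hS₀, rfl⟩ := Finset.mem_image.1 hSimg
        exact hvv (Finset.mem_powerset.1 hSmem (Finset.mem_insert_self v S₀))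
      have hinj : ∀ S₁ ∈ V.powerset, ∀ S₂ ∈ V.powerset,
          insert v S₁ = insert v S₂ → S₁ = S₂ := by
        intro S₁ h₁ S₂ h₂ h
        have hv₁ : v ∉ S₁ := fun hh => hvv (Finset.mem_powerset.1 h₁ hh)
        have hv₂ : v ∉ S₂ := fun hh => hvv (Finset.mem_powerset.1 h₂ hh)
        rw [← Finset.erase_insert hv₁, ← Finset.erase_insert hv₂, h]
      have hsplitsum : ∀ f : Finset (Fin n) → ℝ,
          (∑ S ∈ (insert v V).powerset, f S)
            = (∑ S ∈ V.powerset, f S) + ∑ S ∈ V.powerset, f (insert v S) := by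
        intro f
        rw [Finset.powerset_insert, Finset.sum_union hdisj, Finset.sum_image hinj]
      set w' : Finset (Fin n) → ℝ := fun S => if v ∈ S then w (S.erase v) * rho ((S.erase v) ∩ B)
        else w S * (1 - rho (S ∩ B)) with hw'
      have hvS' : ∀ S ∈ V.powerset, v ∉ S := fun S hS hh =>
        hvv (Finset.mem_powerset.1 hS hh)
      refine ⟨w', ?_, ?_, ?_, ?_⟩
      · intro S
        simp only [hw']
        split_ifs with hvS
        · exact mul_nonneg (hw0 _) (hrho01 _ Finset.inter_subset_right).1
        · exact mul_nonneg (hw0 S)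
            (by linarith [(hrho01 (S ∩ B) Finset.inter_subset_right).2])
      · intro S hS
        by_cases hvS : v ∈ S
        · replace hS : (if v ∈ S then w (S.erase v) * rho (S.erase v ∩ B)
            else w S * (1 - rho (S ∩ B))) ≠ 0 := hS
          rw [if_pos hvS] at hS
          have hw1 : w (S.erase v) ≠ 0 := fun h => hS (by rw [h, zero_mul])
          have hr1 : rho ((S.erase v) ∩ B) ≠ 0 := fun h => hS (by rw [h, mul_zero])
          obtain ⟨h1, h2⟩ := hwsup _ hw1
          have hp1 : pf ((S.erase v) ∩ B) ≠ 0 := by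
            intro h
            apply hr1
            simp only [hrho]
            split_ifs with hm
            · rfl
            · rw [h, zero_div]
          obtain ⟨K', -, hK'⟩ := Finset.exists_ne_zero_of_sum_ne_zero hp1
          have hK'c : K'.1 = insert v ((S.erase v) ∩ B) := by
            by_contra h
            rw [if_neg h] at hK'
            exact hK' rfl
          have hcov : coversIn G S (insert v B) := by
            apply coversIn_mono _ (hK'c ▸ K'.2.2)
            intro x hx
            rcases Finset.mem_insert.1 hx with rfl | hx
            · exact hvS
            · exact Finset.mem_of_mem_erase (Finset.mem_inter.1 hx).1
          constructor
          · intro x hx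
            by_cases hxv : x = v
            · subst hxv
              exact Finset.mem_insert_self _ _
            · exact Finset.mem_insert_of_mem (h1 (Finset.mem_erase.2 ⟨hxv, hx⟩))
          · intro B₀ hB₀
            simp only [bags, Finset.mem_insert] at hB₀
            rcases hB₀ with rfl | hB₀
            · exact hcov
            · exact coversIn_mono (Finset.erase_subset _ _) (h2 B₀ hB₀)
        · replace hS : (if v ∈ S then w (S.erase v) * rho (S.erase v ∩ B)
            else w S * (1 - rho (S ∩ B))) ≠ 0 := hS
          rw [if_neg hvS] at hS
          have hw1 : w S ≠ 0 := fun h => hS (by rw [h, zero_mul])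
          have hr1 : (1 : ℝ) - rho (S ∩ B) ≠ 0 := fun h => hS (by rw [h, mul_zero])
          obtain ⟨h1, h2⟩ := hwsup _ hw1
          have hmge : w S ≤ mf (S ∩ B) := by
            have := Finset.single_le_sum
              (f := fun S' => if S' ∩ B = S ∩ B then w S' else 0)
              (fun S' _ => by
                show (0:ℝ) ≤ if S' ∩ B = S ∩ B then w S' else 0
                split_ifs
                exacts [hw0 S', le_rfl])
              (Finset.mem_powerset.2 h1)
            simpa using this
          have hm1 : mf (S ∩ B) ≠ 0 := by
            intro h
            rw [h] at hmge
            exact hw1 (le_antisymm hmge (hw0 S))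
          have hq1 : qf (S ∩ B) ≠ 0 := by
            rw [hqok _ Finset.inter_subset_right]
            exact mul_ne_zero hr1 hm1
          obtain ⟨K', -, hK'⟩ := Finset.exists_ne_zero_of_sum_ne_zero hq1
          have hK'c : K'.1 = S ∩ B := by
            by_contra h
            rw [if_neg h] at hK'
            exact hK' rfl
          have hcov : coversIn G S (insert v B) :=
            coversIn_mono Finset.inter_subset_left (hK'c ▸ K'.2.2)
          constructor
          · exact fun x hx => Finset.mem_insert_of_mem (h1 hx)
          · intro B₀ hB₀
            simp only [bags, Finset.mem_insert] at hB₀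
            rcases hB₀ with rfl | hB₀
            · exact hcov
            · exact h2 B₀ hB₀
      · show (∑ S ∈ (insert v V).powerset, w' S) = 1
        rw [hsplitsum w']
        have e1 : ∀ S ∈ V.powerset, w' S = w S * (1 - rho (S ∩ B)) := by
          intro S hS
          simp only [hw']
          exact if_neg (hvS' S hS)
        have e2 : ∀ S ∈ V.powerset, w' (insert v S) = w S * rho (S ∩ B) := by
          intro S hS
          simp only [hw']
          rw [if_pos (Finset.mem_insert_self _ _), Finset.erase_insert (hvS' S hS)]
        rw [Finset.sum_congr rfl e1, Finset.sum_congr rfl e2, ← Finset.sum_add_distrib]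
        rw [Finset.sum_congr rfl (fun S _ => by ring :
          ∀ S ∈ V.powerset, w S * (1 - rho (S ∩ B)) + w S * rho (S ∩ B) = w S)]
        exact hwsum
      · intro i
        cases i with
        | inr j =>
            show μ (Sum.inr j) = ∑ S ∈ (insert v V).powerset,
              w' S * vec G (NiceTree.introduce v t) S (Sum.inr j)
            rw [hsplitsum]
            have hbj : v ∉ bagOf G t j :=
              fun h => hvv (mem_bags_subset_verts t _ (bagOf_mem_bags G t j) h)
            have e1 : ∀ S ∈ V.powerset,
                w' S * vec G (NiceTree.introduce v t) S (Sum.inr j)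
                  = w S * (1 - rho (S ∩ B)) * vec G t S j := by
              intro S hS
              simp only [hw']
              rw [if_neg (hvS' S hS)]
              rfl
            have e2 : ∀ S ∈ V.powerset,
                w' (insert v S) * vec G (NiceTree.introduce v t) (insert v S) (Sum.inr j)
                  = w S * rho (S ∩ B) * vec G t S j := by
              intro S hS
              simp only [hw']
              rw [if_pos (Finset.mem_insert_self _ _), Finset.erase_insert (hvS' S hS)]
              congr 1
              show (if cfgOf G t j = (insert v S) ∩ bagOf G t j then (1:ℝ) else 0) = _
              rw [insert_inter_of_not_mem_right hbj]
              rfl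
            rw [Finset.sum_congr rfl e1, Finset.sum_congr rfl e2, ← Finset.sum_add_distrib]
            rw [Finset.sum_congr rfl (fun S _ => by ring : ∀ S ∈ V.powerset,
              w S * (1 - rho (S ∩ B)) * vec G t S j + w S * rho (S ∩ B) * vec G t S j
                = w S * vec G t S j)]
            exact hwco j
        | inl K' =>
            show μ (Sum.inl K') = ∑ S ∈ (insert v V).powerset,
              w' S * vec G (NiceTree.introduce v t) S (Sum.inl K')
            rw [hsplitsum]
            by_cases hvK : v ∈ K'.1
            · have e1 : ∀ S ∈ V.powerset,
                  w' S * vec G (NiceTree.introduce v t) S (Sum.inl K') = 0 := by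
                intro S hS
                have hvec : vec G (NiceTree.introduce v t) S (Sum.inl K') = 0 := by
                  show (if K'.1 = S ∩ insert v B then (1:ℝ) else 0) = 0
                  rw [if_neg]
                  intro h
                  rw [inter_insert_of_not_mem_left (hvS' S hS)] at h
                  rw [h] at hvK
                  exact hvB (Finset.mem_inter.1 hvK).2
                rw [hvec, mul_zero]
              have e2 : ∀ S ∈ V.powerset,
                  w' (insert v S) * vec G (NiceTree.introduce v t) (insert v S) (Sum.inl K')
                    = rho (K'.1.erase v) * (if S ∩ B = K'.1.erase v then w S else 0) := by
                intro S hS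
                have hv' := hvS' S hS
                simp only [hw']
                rw [if_pos (Finset.mem_insert_self _ _), Finset.erase_insert hv']
                have hnv : v ∉ S ∩ B := fun hhh => hvB (Finset.mem_inter.1 hhh).2
                have hvec : vec G (NiceTree.introduce v t) (insert v S) (Sum.inl K')
                    = if S ∩ B = K'.1.erase v then (1:ℝ) else 0 := by
                  show (if K'.1 = (insert v S) ∩ insert v B then (1:ℝ) else 0) = _
                  rw [insert_inter_insert]
                  by_cases h : S ∩ B = K'.1.erase v
                  · rw [if_pos h, if_pos]
                    rw [h, Finset.insert_erase hvK]
                  · rw [if_neg h, if_neg]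
                    intro hh
                    exact h (by rw [hh, Finset.erase_insert hnv])
                rw [hvec, mul_ite, mul_one, mul_zero, mul_ite, mul_zero]
                by_cases h : S ∩ B = K'.1.erase v
                · rw [if_pos h, if_pos h, h]
                  simp only [hrho]
                  split_ifs with h0 <;> ring
                · rw [if_neg h, if_neg h]
                  ring
              rw [Finset.sum_congr rfl e1, Finset.sum_congr rfl e2, Finset.sum_const_zero,
                zero_add, ← Finset.mul_sum]
              have hsub : K'.1.erase v ⊆ B := by
                intro x hx
                obtain ⟨hxv, hxK⟩ := Finset.mem_erase.1 hx
                rcases Finset.mem_insert.1 (K'.2.1 hxK) with rfl | h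
                · exact absurd rfl hxv
                · exact h
              have hmfe : (∑ S ∈ V.powerset, if S ∩ B = K'.1.erase v then w S else 0)
                  = mf (K'.1.erase v) := rfl
              rw [hmfe, ← hF1 _ hsub]
              have hins : insert v (K'.1.erase v) = K'.1 := Finset.insert_erase hvK
              simp only [hpf]
              rw [hins]
              exact (sum_subtype_ite K' (fun K'' => μ (Sum.inl K''))).symm
            · have e2 : ∀ S ∈ V.powerset,
                  w' (insert v S) * vec G (NiceTree.introduce v t) (insert v S) (Sum.inl K')
                    = 0 := by
                intro S hS
                have hvec : vec G (NiceTree.introduce v t) (insert v S) (Sum.inl K') = 0 := by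
                  show (if K'.1 = (insert v S) ∩ insert v B then (1:ℝ) else 0) = 0
                  rw [insert_inter_insert, if_neg]
                  intro h
                  exact hvK (h ▸ Finset.mem_insert_self v (S ∩ B))
                rw [hvec, mul_zero]
              have e1 : ∀ S ∈ V.powerset,
                  w' S * vec G (NiceTree.introduce v t) S (Sum.inl K')
                    = (1 - rho K'.1) * (if S ∩ B = K'.1 then w S else 0) := by
                intro S hS
                have hv' := hvS' S hS
                simp only [hw']
                rw [if_neg hv']
                have hvec : vec G (NiceTree.introduce v t) S (Sum.inl K')
                    = if S ∩ B = K'.1 then (1:ℝ) else 0 := by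
                  show (if K'.1 = S ∩ insert v B then (1:ℝ) else 0) = _
                  rw [inter_insert_of_not_mem_left hv']
                  exact ite_eq_symm _ _ _ _
                rw [hvec, mul_ite, mul_one, mul_zero, mul_ite, mul_zero]
                by_cases h : S ∩ B = K'.1
                · rw [if_pos h, if_pos h, h]
                  simp only [hrho]
                  split_ifs with h0 <;> ring
                · rw [if_neg h, if_neg h]
              rw [Finset.sum_congr rfl e1, Finset.sum_congr rfl e2, Finset.sum_const_zero,
                add_zero, ← Finset.mul_sum]
              have hsub : K'.1 ⊆ B := by
                intro x hx
                rcases Finset.mem_insert.1 (K'.2.1 hx) with rfl | h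
                · exact absurd hx hvK
                · exact h
              have hmfe : (∑ S ∈ V.powerset, if S ∩ B = K'.1 then w S else 0) = mf K'.1 := rfl
              rw [hmfe, ← hqok _ hsub]
              simp only [hqf]
              exact (sum_subtype_ite K' (fun K'' => μ (Sum.inl K''))).symm
  | join t₁ t₂ ih₁ ih₂ =>
      intro hval μ hμ
      classical
      obtain ⟨hb, hint, hval1, hval2⟩ := hval
      obtain ⟨hpos, hF1, hF2, hrow⟩ := hμ
      obtain ⟨w₁, hw₁0, hw₁sup, hw₁sum, hw₁co⟩ := ih₁ hval1 (μ ∘ Sum.inl) hF1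
      obtain ⟨w₂, hw₂0, hw₂sup, hw₂sum, hw₂co⟩ := ih₂ hval2 (μ ∘ Sum.inr) hF2
      set B := t₁.bag with hBdef
      set V₁ := t₁.verts with hV₁def
      set V₂ := t₂.verts with hV₂def
      set m₁ : Finset (Fin n) → ℝ := fun A => ∑ S ∈ V₁.powerset, (if S ∩ B = A then w₁ S else 0)
        with hm₁
      set m₂ : Finset (Fin n) → ℝ :=
        fun A => ∑ S ∈ V₂.powerset, (if S ∩ t₂.bag = A then w₂ S else 0) with hm₂
      have hm₁0 : ∀ A, 0 ≤ m₁ A := fun A =>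
        Finset.sum_nonneg fun S _ => by split_ifs; exacts [hw₁0 S, le_rfl]
      have hm₁eq : ∀ K : Cfg G B, m₁ K.1 = μ (Sum.inl (rootIdx G t₁ K)) := fun K =>
        (root_mass G t₁ w₁ (μ ∘ Sum.inl) hw₁co K).symm
      have hm₂eq : ∀ K : Cfg G t₂.bag, m₂ K.1 = μ (Sum.inr (rootIdx G t₂ K)) := fun K =>
        (root_mass G t₂ w₂ (μ ∘ Sum.inr) hw₂co K).symm
      have hBB : ∀ S : Finset (Fin n), S ∩ B = S ∩ t₂.bag := fun S => by rw [hb]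
      have hmatch : ∀ A, m₁ A = m₂ A := by
        intro A
        by_cases h₁ : A ⊆ B ∧ coversIn G A B
        · have h₂ : A ⊆ t₂.bag ∧ coversIn G A t₂.bag := by
            rw [← hb]
            exact h₁
          have e1 : m₁ A = μ (Sum.inl (rootIdx G t₁ ⟨A, h₁⟩)) := hm₁eq ⟨A, h₁⟩
          have e2 : m₂ A = μ (Sum.inr (rootIdx G t₂ ⟨A, h₂⟩)) := hm₂eq ⟨A, h₂⟩
          have e3 : μ (Sum.inl (rootIdx G t₁ ⟨A, h₁⟩))
              = ∑ K' : Cfg G t₂.bag, if K'.1 = A then μ (Sum.inr (rootIdx G t₂ K')) else 0 :=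
            hrow ⟨A, h₁⟩
          rw [e1, e2, e3]
          exact sum_subtype_ite (⟨A, h₂⟩ : Cfg G t₂.bag)
            (fun K' => μ (Sum.inr (rootIdx G t₂ K')))
        · have h₂ : ¬(A ⊆ t₂.bag ∧ coversIn G A t₂.bag) := by
            rw [← hb]
            exact h₁
          have z₁ : m₁ A = 0 := by
            apply Finset.sum_eq_zero
            intro S _
            by_cases hw : w₁ S = 0
            · split_ifs
              exacts [hw, rfl]
            · apply if_neg
              intro hcond
              obtain ⟨-, h2⟩ := hw₁sup S hw
              exact h₁ (hcond ▸
                ⟨Finset.inter_subset_right, coversIn_inter (h2 _ (bag_mem_bags t₁))⟩)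
          have z₂ : m₂ A = 0 := by
            apply Finset.sum_eq_zero
            intro S _
            by_cases hw : w₂ S = 0
            · split_ifs
              exacts [hw, rfl]
            · apply if_neg
              intro hcond
              obtain ⟨-, h2⟩ := hw₂sup S hw
              exact h₂ (hcond ▸
                ⟨Finset.inter_subset_right, coversIn_inter (h2 _ (bag_mem_bags t₂))⟩)
          rw [z₁, z₂]
      have hm₁ge : ∀ S ∈ V₁.powerset, w₁ S ≤ m₁ (S ∩ B) := by
        intro S hS
        have := Finset.single_le_sum (f := fun S' => if S' ∩ B = S ∩ B then w₁ S' else 0)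
          (fun S' _ => by
            show (0:ℝ) ≤ if S' ∩ B = S ∩ B then w₁ S' else 0
            split_ifs
            exacts [hw₁0 S', le_rfl]) hS
        simpa using this
      have hm₂ge : ∀ S ∈ V₂.powerset, w₂ S ≤ m₂ (S ∩ t₂.bag) := by
        intro S hS
        have := Finset.single_le_sum
          (f := fun S' => if S' ∩ t₂.bag = S ∩ t₂.bag then w₂ S' else 0)
          (fun S' _ => by
            show (0:ℝ) ≤ if S' ∩ t₂.bag = S ∩ t₂.bag then w₂ S' else 0
            split_ifs
            exacts [hw₂0 S', le_rfl]) hS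
        simpa using this
      set c : Finset (Fin n) → Finset (Fin n) → ℝ := fun S₁ S₂ =>
        if (S₁ ∩ B = S₂ ∩ B ∧ m₁ (S₁ ∩ B) ≠ 0) then w₁ S₁ * w₂ S₂ / m₁ (S₁ ∩ B) else 0
        with hcdef
      have hc0 : ∀ S₁ S₂, 0 ≤ c S₁ S₂ := by
        intro S₁ S₂
        simp only [hcdef]
        split_ifs with h
        · exact div_nonneg (mul_nonneg (hw₁0 _) (hw₂0 _)) (hm₁0 _)
        · exact le_rfl
      have hcw : ∀ S₁ S₂, c S₁ S₂ ≠ 0 → w₁ S₁ ≠ 0 ∧ w₂ S₂ ≠ 0 ∧ S₁ ∩ B = S₂ ∩ B := by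
        intro S₁ S₂ h
        simp only [hcdef] at h
        split_ifs at h with hcond
        · refine ⟨?_, ?_, hcond.1⟩ <;> intro hz <;> apply h <;> rw [hz] <;> ring
        · exact absurd rfl h
      have hcsum1 : ∀ S₁ ∈ V₁.powerset, (∑ S₂ ∈ V₂.powerset, c S₁ S₂) = w₁ S₁ := by
        intro S₁ hS₁
        by_cases hm : m₁ (S₁ ∩ B) = 0
        · have hz : ∀ S₂ ∈ V₂.powerset, c S₁ S₂ = 0 := by
            intro S₂ _
            simp only [hcdef]
            exact if_neg fun hcond => hcond.2 hm
          rw [Finset.sum_eq_zero hz]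
          have h1 := hm₁ge S₁ hS₁
          rw [hm] at h1
          linarith [hw₁0 S₁]
        · have e : ∀ S₂ ∈ V₂.powerset,
              c S₁ S₂ = (if S₂ ∩ t₂.bag = S₁ ∩ B then w₂ S₂ else 0) * (w₁ S₁ / m₁ (S₁ ∩ B)) := by
            intro S₂ _
            simp only [hcdef]
            by_cases hcond : S₂ ∩ t₂.bag = S₁ ∩ B
            · rw [if_pos ⟨by rw [hBB S₂, hcond], hm⟩, if_pos hcond]
              ring
            · rw [if_neg, if_neg hcond, zero_mul]
              intro hcond'
              exact hcond (by rw [← hBB S₂, ← hcond'.1])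
          rw [Finset.sum_congr rfl e, ← Finset.sum_mul]
          have hmm : (∑ S₂ ∈ V₂.powerset, if S₂ ∩ t₂.bag = S₁ ∩ B then w₂ S₂ else 0)
              = m₂ (S₁ ∩ B) := rfl
          rw [hmm, ← hmatch, mul_comm]
          exact div_mul_cancel₀ _ hm
      have hcsum2 : ∀ S₂ ∈ V₂.powerset, (∑ S₁ ∈ V₁.powerset, c S₁ S₂) = w₂ S₂ := by
        intro S₂ hS₂
        by_cases hm : m₁ (S₂ ∩ t₂.bag) = 0
        · have hz : ∀ S₁ ∈ V₁.powerset, c S₁ S₂ = 0 := by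
            intro S₁ _
            simp only [hcdef]
            apply if_neg
            intro hcond
            apply hcond.2
            rw [hcond.1, hBB S₂]
            exact hm
          rw [Finset.sum_eq_zero hz]
          have h1 : w₂ S₂ ≤ m₂ (S₂ ∩ t₂.bag) := hm₂ge S₂ hS₂
          have h2 : m₂ (S₂ ∩ t₂.bag) = 0 := by
            rw [← hmatch]
            exact hm
          rw [h2] at h1
          linarith [hw₂0 S₂]
        · have e : ∀ S₁ ∈ V₁.powerset,
              c S₁ S₂ = (if S₁ ∩ B = S₂ ∩ t₂.bag then w₁ S₁ else 0)
                * (w₂ S₂ / m₁ (S₂ ∩ t₂.bag)) := by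
            intro S₁ _
            simp only [hcdef]
            by_cases hcond : S₁ ∩ B = S₂ ∩ t₂.bag
            · rw [if_pos ⟨by rw [hcond, ← hBB S₂], by rw [hcond]; exact hm⟩, if_pos hcond, hcond]
              ring
            · rw [if_neg, if_neg hcond, zero_mul]
              intro hcond'
              exact hcond (by rw [hcond'.1, hBB S₂])
          rw [Finset.sum_congr rfl e, ← Finset.sum_mul]
          have hmm : (∑ S₁ ∈ V₁.powerset, if S₁ ∩ B = S₂ ∩ t₂.bag then w₁ S₁ else 0)
              = m₁ (S₂ ∩ t₂.bag) := rfl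
          rw [hmm, mul_comm]
          exact div_mul_cancel₀ _ hm
      set w' : Finset (Fin n) → ℝ := fun U => ∑ S₁ ∈ V₁.powerset, ∑ S₂ ∈ V₂.powerset,
        (if S₁ ∪ S₂ = U then c S₁ S₂ else 0) with hw'
      have hmemU : ∀ S₁ ∈ V₁.powerset, ∀ S₂ ∈ V₂.powerset, S₁ ∪ S₂ ∈ (V₁ ∪ V₂).powerset := by
        intro S₁ hS₁ S₂ hS₂
        exact Finset.mem_powerset.2 (Finset.union_subset
          ((Finset.mem_powerset.1 hS₁).trans Finset.subset_union_left)
          ((Finset.mem_powerset.1 hS₂).trans Finset.subset_union_right))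
      refine ⟨w', ?_, ?_, ?_, ?_⟩
      · intro U
        simp only [hw']
        exact Finset.sum_nonneg fun S₁ _ => Finset.sum_nonneg fun S₂ _ => by
          split_ifs
          exacts [hc0 S₁ S₂, le_rfl]
      · intro U hU
        rw [hw'] at hU
        obtain ⟨S₁, hS₁, hrow1⟩ := Finset.exists_ne_zero_of_sum_ne_zero hU
        obtain ⟨S₂, hS₂, hterm⟩ := Finset.exists_ne_zero_of_sum_ne_zero hrow1
        have hUeq : S₁ ∪ S₂ = U := by
          by_contra h
          rw [if_neg h] at hterm
          exact hterm rfl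
        rw [if_pos hUeq] at hterm
        obtain ⟨hww1, hww2, -⟩ := hcw S₁ S₂ hterm
        obtain ⟨ha1, ha2⟩ := hw₁sup S₁ hww1
        obtain ⟨hb1, hb2⟩ := hw₂sup S₂ hww2
        subst hUeq
        constructor
        · exact Finset.union_subset (ha1.trans Finset.subset_union_left)
            (hb1.trans Finset.subset_union_right)
        · intro B₀ hB₀
          simp only [bags, Finset.mem_union] at hB₀
          rcases hB₀ with hB₀ | hB₀
          · exact coversIn_mono Finset.subset_union_left (ha2 B₀ hB₀)
          · exact coversIn_mono Finset.subset_union_right (hb2 B₀ hB₀)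
      · show (∑ U ∈ (V₁ ∪ V₂).powerset, w' U) = 1
        simp only [hw']
        rw [Finset.sum_comm]
        have e : ∀ S₁ ∈ V₁.powerset, (∑ U ∈ (V₁ ∪ V₂).powerset, ∑ S₂ ∈ V₂.powerset,
            (if S₁ ∪ S₂ = U then c S₁ S₂ else 0)) = ∑ S₂ ∈ V₂.powerset, c S₁ S₂ := by
          intro S₁ hS₁
          rw [Finset.sum_comm]
          refine Finset.sum_congr rfl fun S₂ hS₂ => ?_
          rw [Finset.sum_ite_eq]
          exact if_pos (hmemU S₁ hS₁ S₂ hS₂)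
        rw [Finset.sum_congr rfl e, Finset.sum_congr rfl hcsum1]
        exact hw₁sum
      · intro i
        have collapse : ∀ g : Finset (Fin n) → ℝ,
            (∑ U ∈ (V₁ ∪ V₂).powerset, w' U * g U)
              = ∑ S₁ ∈ V₁.powerset, ∑ S₂ ∈ V₂.powerset, c S₁ S₂ * g (S₁ ∪ S₂) := by
          intro g
          simp only [hw']
          have e0 : ∀ U ∈ (V₁ ∪ V₂).powerset, (∑ S₁ ∈ V₁.powerset, ∑ S₂ ∈ V₂.powerset,
              (if S₁ ∪ S₂ = U then c S₁ S₂ else 0)) * g U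
                = ∑ S₁ ∈ V₁.powerset, ∑ S₂ ∈ V₂.powerset,
                  (if S₁ ∪ S₂ = U then c S₁ S₂ * g U else 0) := by
            intro U _
            rw [Finset.sum_mul]
            refine Finset.sum_congr rfl fun S₁ _ => ?_
            rw [Finset.sum_mul]
            refine Finset.sum_congr rfl fun S₂ _ => ?_
            split_ifs <;> simp
          rw [Finset.sum_congr rfl e0, Finset.sum_comm]
          refine Finset.sum_congr rfl fun S₁ hS₁ => ?_
          rw [Finset.sum_comm]
          refine Finset.sum_congr rfl fun S₂ hS₂ => ?_
          have e3 : ∀ U ∈ (V₁ ∪ V₂).powerset, (if S₁ ∪ S₂ = U then c S₁ S₂ * g U else 0)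
              = (if S₁ ∪ S₂ = U then c S₁ S₂ * g (S₁ ∪ S₂) else 0) := by
            intro U _
            split_ifs with h
            · rw [h]
            · rfl
          rw [Finset.sum_congr rfl e3, Finset.sum_ite_eq, if_pos (hmemU S₁ hS₁ S₂ hS₂)]
        cases i with
        | inl j =>
            show μ (Sum.inl j) = ∑ U ∈ (V₁ ∪ V₂).powerset,
              w' U * vec G (NiceTree.join t₁ t₂) U (Sum.inl j)
            rw [collapse (fun U => vec G (NiceTree.join t₁ t₂) U (Sum.inl j))]
            have e1 : ∀ S₁ ∈ V₁.powerset, ∀ S₂ ∈ V₂.powerset,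
                c S₁ S₂ * vec G (NiceTree.join t₁ t₂) (S₁ ∪ S₂) (Sum.inl j)
                  = c S₁ S₂ * vec G t₁ S₁ j := by
              intro S₁ hS₁ S₂ hS₂
              by_cases hcz : c S₁ S₂ = 0
              · rw [hcz, zero_mul, zero_mul]
              · obtain ⟨-, -, hmatch'⟩ := hcw S₁ S₂ hcz
                congr 1
                show (if cfgOf G t₁ j = (S₁ ∪ S₂) ∩ bagOf G t₁ j then (1:ℝ) else 0) = _
                have hUj : (S₁ ∪ S₂) ∩ bagOf G t₁ j = S₁ ∩ bagOf G t₁ j := by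
                  ext x
                  simp only [Finset.mem_inter, Finset.mem_union]
                  constructor
                  · rintro ⟨hx1 | hx2, hxb⟩
                    · exact ⟨hx1, hxb⟩
                    · have hxv1 : x ∈ V₁ :=
                        mem_bags_subset_verts t₁ _ (bagOf_mem_bags G t₁ j) hxb
                      have hxv2 : x ∈ V₂ := (Finset.mem_powerset.1 hS₂) hx2
                      have hxB : x ∈ B := hint (Finset.mem_inter.2 ⟨hxv1, hxv2⟩)
                      have hxSB : x ∈ S₂ ∩ B := Finset.mem_inter.2 ⟨hx2, hxB⟩
                      rw [← hmatch'] at hxSB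
                      exact ⟨(Finset.mem_inter.1 hxSB).1, hxb⟩
                  · rintro ⟨hx1, hxb⟩
                    exact ⟨Or.inl hx1, hxb⟩
                rw [hUj]
                rfl
            rw [Finset.sum_congr rfl fun S₁ hS₁ =>
              Finset.sum_congr rfl fun S₂ hS₂ => e1 S₁ hS₁ S₂ hS₂]
            have e2 : ∀ S₁ ∈ V₁.powerset,
                (∑ S₂ ∈ V₂.powerset, c S₁ S₂ * vec G t₁ S₁ j) = w₁ S₁ * vec G t₁ S₁ j := by
              intro S₁ hS₁
              rw [← Finset.sum_mul, hcsum1 S₁ hS₁]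
            rw [Finset.sum_congr rfl e2]
            exact hw₁co j
        | inr j =>
            show μ (Sum.inr j) = ∑ U ∈ (V₁ ∪ V₂).powerset,
              w' U * vec G (NiceTree.join t₁ t₂) U (Sum.inr j)
            rw [collapse (fun U => vec G (NiceTree.join t₁ t₂) U (Sum.inr j))]
            have e1 : ∀ S₁ ∈ V₁.powerset, ∀ S₂ ∈ V₂.powerset,
                c S₁ S₂ * vec G (NiceTree.join t₁ t₂) (S₁ ∪ S₂) (Sum.inr j)
                  = c S₁ S₂ * vec G t₂ S₂ j := by
              intro S₁ hS₁ S₂ hS₂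
              by_cases hcz : c S₁ S₂ = 0
              · rw [hcz, zero_mul, zero_mul]
              · obtain ⟨-, -, hmatch'⟩ := hcw S₁ S₂ hcz
                congr 1
                show (if cfgOf G t₂ j = (S₁ ∪ S₂) ∩ bagOf G t₂ j then (1:ℝ) else 0) = _
                have hUj : (S₁ ∪ S₂) ∩ bagOf G t₂ j = S₂ ∩ bagOf G t₂ j := by
                  ext x
                  simp only [Finset.mem_inter, Finset.mem_union]
                  constructor
                  · rintro ⟨hx1 | hx2, hxb⟩
                    · have hxv2 : x ∈ V₂ :=
                        mem_bags_subset_verts t₂ _ (bagOf_mem_bags G t₂ j) hxb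
                      have hxv1 : x ∈ V₁ := (Finset.mem_powerset.1 hS₁) hx1
                      have hxB : x ∈ B := hint (Finset.mem_inter.2 ⟨hxv1, hxv2⟩)
                      have hxSB : x ∈ S₁ ∩ B := Finset.mem_inter.2 ⟨hx1, hxB⟩
                      rw [hmatch'] at hxSB
                      exact ⟨(Finset.mem_inter.1 hxSB).1, hxb⟩
                    · exact ⟨hx2, hxb⟩
                  · rintro ⟨hx2, hxb⟩
                    exact ⟨Or.inr hx2, hxb⟩
                rw [hUj]
                rfl
            rw [Finset.sum_congr rfl fun S₁ hS₁ =>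
              Finset.sum_congr rfl fun S₂ hS₂ => e1 S₁ hS₁ S₂ hS₂, Finset.sum_comm]
            have e2 : ∀ S₂ ∈ V₂.powerset,
                (∑ S₁ ∈ V₁.powerset, c S₁ S₂ * vec G t₂ S₂ j) = w₂ S₂ * vec G t₂ S₂ j := by
              intro S₂ hS₂
              rw [← Finset.sum_mul, hcsum2 S₂ hS₂]
            rw [Finset.sum_congr rfl e2]
            exact hw₂co j
/-! ### Rows of the linear system -/

lemma sum_cfg_ite {G : SimpleGraph (Fin n)} {B : Finset (Fin n)} (i : Cfg G B)
    (f : Cfg G B → ℝ) :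
    (∑ K : Cfg G B, if K.1 = i.1 then f K else 0) = f i := by
  have heq := Finset.sum_eq_single_of_mem (f := fun K : Cfg G B => if K.1 = i.1 then f K else 0)
    i (Finset.mem_univ _) (fun K _ hK => if_neg fun h => hK (Subtype.ext h))
  exact heq.trans (by simp)

lemma sum_split {α β : Type} [Fintype α] [Fintype β] (f : α ⊕ β → ℝ) :
    (∑ i, f i) = (∑ a, f (Sum.inl a)) + ∑ b, f (Sum.inr b) := Fintype.sum_sum_type f

/-- Lift a linear functional on root configurations to the variables. -/
def liftRow (G : SimpleGraph (Fin n)) : (t : NiceTree n) → (Cfg G t.bag → ℝ) → VarIdx G t → ℝ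
  | .leaf _, r, K => r K
  | .introduce _ _, r, i => Sum.elim r (fun _ => 0) i
  | .forget _ _, r, i => Sum.elim r (fun _ => 0) i
  | .join t₁ _, r, i => Sum.elim (liftRow G t₁ r) (fun _ => 0) i

lemma sum_liftRow (G : SimpleGraph (Fin n)) : ∀ (t : NiceTree n) (r : Cfg G t.bag → ℝ)
    (μ : VarIdx G t → ℝ),
    (∑ i, liftRow G t r i * μ i) = ∑ K : Cfg G t.bag, r K * μ (rootIdx G t K)
  | .leaf v, r, μ => rfl
  | .introduce v t, r, μ => by
      have h := sum_split (fun i : Cfg G (insert v t.bag) ⊕ VarIdx G t =>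
        liftRow G (NiceTree.introduce v t) r i * μ i)
      refine h.trans ?_
      have h2 : (∑ j : VarIdx G t,
          liftRow G (NiceTree.introduce v t) r (Sum.inr j) * μ (Sum.inr j)) = 0 :=
        Finset.sum_eq_zero fun j _ => zero_mul _
      rw [h2, add_zero]
      rfl
  | .forget v t, r, μ => by
      have h := sum_split (fun i : Cfg G (t.bag.erase v) ⊕ VarIdx G t =>
        liftRow G (NiceTree.forget v t) r i * μ i)
      refine h.trans ?_
      have h2 : (∑ j : VarIdx G t,
          liftRow G (NiceTree.forget v t) r (Sum.inr j) * μ (Sum.inr j)) = 0 :=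
        Finset.sum_eq_zero fun j _ => zero_mul _
      rw [h2, add_zero]
      rfl
  | .join t₁ t₂, r, μ => by
      have h := sum_split (fun i : VarIdx G t₁ ⊕ VarIdx G t₂ =>
        liftRow G (NiceTree.join t₁ t₂) r i * μ i)
      refine h.trans ?_
      have h2 : (∑ j : VarIdx G t₂,
          liftRow G (NiceTree.join t₁ t₂) r (Sum.inr j) * μ (Sum.inr j)) = 0 :=
        Finset.sum_eq_zero fun j _ => zero_mul _
      rw [h2, add_zero]
      exact sum_liftRow G t₁ r (μ ∘ Sum.inl)

/-- Index type for the equality rows. -/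
def EqIdx (G : SimpleGraph (Fin n)) : NiceTree n → Type
  | .leaf _ => Unit
  | .introduce _ t => Cfg G t.bag ⊕ EqIdx G t
  | .forget v t => Cfg G (t.bag.erase v) ⊕ EqIdx G t
  | .join t₁ t₂ => Cfg G t₁.bag ⊕ (EqIdx G t₁ ⊕ EqIdx G t₂)

noncomputable instance instFintypeEqIdx (G : SimpleGraph (Fin n)) :
    ∀ t : NiceTree n, Fintype (EqIdx G t)
  | .leaf _ => inferInstanceAs (Fintype Unit)
  | .introduce v t =>
      letI := instFintypeEqIdx G t
      inferInstanceAs (Fintype (Cfg G t.bag ⊕ EqIdx G t))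
  | .forget v t =>
      letI := instFintypeEqIdx G t
      inferInstanceAs (Fintype (Cfg G (t.bag.erase v) ⊕ EqIdx G t))
  | .join t₁ t₂ =>
      letI := instFintypeEqIdx G t₁
      letI := instFintypeEqIdx G t₂
      inferInstanceAs (Fintype (Cfg G t₁.bag ⊕ (EqIdx G t₁ ⊕ EqIdx G t₂)))

/-- Coefficients of the equality rows. -/
def coef (G : SimpleGraph (Fin n)) : (t : NiceTree n) → EqIdx G t → VarIdx G t → ℝ
  | .leaf _, _, _ => 1
  | .introduce v t, .inl K, i =>
      Sum.elim (fun K' : Cfg G (insert v t.bag) => if K'.1.erase v = K.1 then (1:ℝ) else 0)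
        (liftRow G t (fun K0 => if K0 = K then (-1 : ℝ) else 0)) i
  | .introduce _ t, .inr e, i => Sum.elim (fun _ => 0) (coef G t e) i
  | .forget v t, .inl K, i =>
      Sum.elim (fun K'' : Cfg G (t.bag.erase v) => if K'' = K then (-1:ℝ) else 0)
        (liftRow G t (fun K' => if K'.1.erase v = K.1 then (1:ℝ) else 0)) i
  | .forget _ t, .inr e, i => Sum.elim (fun _ => 0) (coef G t e) i
  | .join t₁ t₂, .inl K, i =>
      Sum.elim (liftRow G t₁ (fun K0 => if K0 = K then (-1:ℝ) else 0))
        (liftRow G t₂ (fun K' => if K'.1 = K.1 then (1:ℝ) else 0)) i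
  | .join t₁ _, .inr (.inl e), i => Sum.elim (coef G t₁ e) (fun _ => 0) i
  | .join _ t₂, .inr (.inr e), i => Sum.elim (fun _ => 0) (coef G t₂ e) i

/-- Right-hand sides of the equality rows. -/
def rhsv (G : SimpleGraph (Fin n)) : (t : NiceTree n) → EqIdx G t → ℝ
  | .leaf _, _ => 1
  | .introduce _ _, .inl _ => 0
  | .introduce _ t, .inr e => rhsv G t e
  | .forget _ _, .inl _ => 0
  | .forget _ t, .inr e => rhsv G t e
  | .join _ _, .inl _ => 0
  | .join t₁ _, .inr (.inl e) => rhsv G t₁ e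
  | .join _ t₂, .inr (.inr e) => rhsv G t₂ e

lemma feas_iff_rows (G : SimpleGraph (Fin n)) : ∀ (t : NiceTree n) (μ : VarIdx G t → ℝ),
    Feas G t μ ↔
      ((∀ i, 0 ≤ μ i) ∧ ∀ e : EqIdx G t, (∑ i, coef G t e i * μ i) = rhsv G t e) := by
  intro t
  induction t with
  | leaf v =>
      intro μ
      have hsum : ∀ e : EqIdx G (NiceTree.leaf v),
          (∑ i, coef G (NiceTree.leaf v) e i * μ i) = ∑ K : Cfg G {v}, μ K := by
        intro e
        refine Finset.sum_congr rfl fun K _ => ?_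
        show (1:ℝ) * μ K = μ K
        rw [one_mul]
      constructor
      · rintro ⟨h0, h1⟩
        refine ⟨h0, fun e => ?_⟩
        rw [hsum e, h1]
        rfl
      · rintro ⟨h0, h1⟩
        refine ⟨h0, ?_⟩
        have h2 := h1 ()
        rw [hsum ()] at h2
        exact h2
  | introduce v t ih =>
      intro μ
      have hrow : ∀ K : Cfg G t.bag,
          (∑ i, coef G (NiceTree.introduce v t) (Sum.inl K) i * μ i)
            = (∑ K' : Cfg G (insert v t.bag), if K'.1.erase v = K.1 then μ (Sum.inl K') else 0)
              - μ (Sum.inr (rootIdx G t K)) := by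
        intro K
        have h := sum_split (fun i : Cfg G (insert v t.bag) ⊕ VarIdx G t =>
          coef G (NiceTree.introduce v t) (Sum.inl K) i * μ i)
        refine h.trans ?_
        have h1 : (∑ K' : Cfg G (insert v t.bag),
            coef G (NiceTree.introduce v t) (Sum.inl K) (Sum.inl K') * μ (Sum.inl K'))
              = ∑ K' : Cfg G (insert v t.bag),
                  if K'.1.erase v = K.1 then μ (Sum.inl K') else 0 := by
          refine Finset.sum_congr rfl fun K' _ => ?_
          show (if K'.1.erase v = K.1 then (1:ℝ) else 0) * μ (Sum.inl K') = _
          rw [ite_mul, one_mul, zero_mul]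
        have h2 : (∑ j : VarIdx G t,
            coef G (NiceTree.introduce v t) (Sum.inl K) (Sum.inr j) * μ (Sum.inr j))
              = - μ (Sum.inr (rootIdx G t K)) := by
          have h3 := sum_liftRow G t (fun K0 => if K0 = K then (-1:ℝ) else 0) (μ ∘ Sum.inr)
          refine Eq.trans ?_ (h3.trans ?_)
          · rfl
          · have e : ∀ K0 : Cfg G t.bag,
                (if K0 = K then (-1:ℝ) else 0) * (μ ∘ Sum.inr) (rootIdx G t K0)
                  = if K0.1 = K.1 then -((μ ∘ Sum.inr) (rootIdx G t K0)) else 0 := by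
              intro K0
              by_cases h : K0 = K
              · rw [if_pos h, if_pos (by rw [h])]
                ring
              · rw [if_neg h, if_neg fun hh => h (Subtype.ext hh), zero_mul]
            rw [Finset.sum_congr rfl fun K0 _ => e K0,
              sum_cfg_ite K (fun K0 => -((μ ∘ Sum.inr) (rootIdx G t K0)))]
            rfl
        rw [h1, h2]
        ring
      have hchild : ∀ (e : EqIdx G t),
          (∑ i, coef G (NiceTree.introduce v t) (Sum.inr e) i * μ i)
            = ∑ j, coef G t e j * (μ ∘ Sum.inr) j := by
        intro e
        have h := sum_split (fun i : Cfg G (insert v t.bag) ⊕ VarIdx G t =>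
          coef G (NiceTree.introduce v t) (Sum.inr e) i * μ i)
        refine h.trans ?_
        have h1 : (∑ K' : Cfg G (insert v t.bag),
            coef G (NiceTree.introduce v t) (Sum.inr e) (Sum.inl K') * μ (Sum.inl K')) = 0 :=
          Finset.sum_eq_zero fun K' _ => zero_mul _
        rw [h1, zero_add]
        rfl
      constructor
      · rintro ⟨h0, hF, hcons⟩
        obtain ⟨-, hrows⟩ := (ih (μ ∘ Sum.inr)).1 hF
        refine ⟨h0, ?_⟩
        intro e
        cases e with
        | inl K =>
            rw [hrow K, hcons K]
            show _ = (0:ℝ)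
            ring
        | inr e =>
            rw [hchild e, hrows e]
            rfl
      · rintro ⟨h0, hrows⟩
        refine ⟨h0, ?_, ?_⟩
        · refine (ih (μ ∘ Sum.inr)).2 ⟨fun j => h0 _, fun e => ?_⟩
          rw [← hchild e]
          exact hrows (Sum.inr e)
        · intro K
          have h4 := hrows (Sum.inl K)
          rw [hrow K] at h4
          have h5 : rhsv G (NiceTree.introduce v t) (Sum.inl K) = 0 := rfl
          rw [h5] at h4
          linarith [h4]
  | forget v t ih =>
      intro μ
      have hrow : ∀ K : Cfg G (t.bag.erase v),
          (∑ i, coef G (NiceTree.forget v t) (Sum.inl K) i * μ i)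
            = (∑ K' : Cfg G t.bag,
                if K'.1.erase v = K.1 then μ (Sum.inr (rootIdx G t K')) else 0)
              - μ (Sum.inl K) := by
        intro K
        have h := sum_split (fun i : Cfg G (t.bag.erase v) ⊕ VarIdx G t =>
          coef G (NiceTree.forget v t) (Sum.inl K) i * μ i)
        refine h.trans ?_
        have h1 : (∑ K'' : Cfg G (t.bag.erase v),
            coef G (NiceTree.forget v t) (Sum.inl K) (Sum.inl K'') * μ (Sum.inl K''))
              = - μ (Sum.inl K) := by
          have e : ∀ K'' : Cfg G (t.bag.erase v),
              coef G (NiceTree.forget v t) (Sum.inl K) (Sum.inl K'') * μ (Sum.inl K'')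
                = if K''.1 = K.1 then -(μ (Sum.inl K'')) else 0 := by
            intro K''
            show (if K'' = K then (-1:ℝ) else 0) * μ (Sum.inl K'') = _
            by_cases h : K'' = K
            · rw [if_pos h, if_pos (by rw [h])]
              ring
            · rw [if_neg h, if_neg fun hh => h (Subtype.ext hh), zero_mul]
          rw [Finset.sum_congr rfl fun K'' _ => e K'',
            sum_cfg_ite K (fun K'' => -(μ (Sum.inl K'')))]
        have h2 : (∑ j : VarIdx G t,
            coef G (NiceTree.forget v t) (Sum.inl K) (Sum.inr j) * μ (Sum.inr j))
              = ∑ K' : Cfg G t.bag,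
                  if K'.1.erase v = K.1 then μ (Sum.inr (rootIdx G t K')) else 0 := by
          have h3 := sum_liftRow G t (fun K' => if K'.1.erase v = K.1 then (1:ℝ) else 0)
            (μ ∘ Sum.inr)
          refine Eq.trans ?_ (h3.trans ?_)
          · rfl
          · refine Finset.sum_congr rfl fun K' _ => ?_
            rw [ite_mul, one_mul, zero_mul]
            rfl
        rw [h1, h2]
        ring
      have hchild : ∀ (e : EqIdx G t),
          (∑ i, coef G (NiceTree.forget v t) (Sum.inr e) i * μ i)
            = ∑ j, coef G t e j * (μ ∘ Sum.inr) j := by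
        intro e
        have h := sum_split (fun i : Cfg G (t.bag.erase v) ⊕ VarIdx G t =>
          coef G (NiceTree.forget v t) (Sum.inr e) i * μ i)
        refine h.trans ?_
        have h1 : (∑ K' : Cfg G (t.bag.erase v),
            coef G (NiceTree.forget v t) (Sum.inr e) (Sum.inl K') * μ (Sum.inl K')) = 0 :=
          Finset.sum_eq_zero fun K' _ => zero_mul _
        rw [h1, zero_add]
        rfl
      constructor
      · rintro ⟨h0, hF, hcons⟩
        obtain ⟨-, hrows⟩ := (ih (μ ∘ Sum.inr)).1 hF
        refine ⟨h0, ?_⟩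
        intro e
        cases e with
        | inl K =>
            rw [hrow K, ← hcons K]
            show _ = (0:ℝ)
            ring
        | inr e =>
            rw [hchild e, hrows e]
            rfl
      · rintro ⟨h0, hrows⟩
        refine ⟨h0, ?_, ?_⟩
        · refine (ih (μ ∘ Sum.inr)).2 ⟨fun j => h0 _, fun e => ?_⟩
          rw [← hchild e]
          exact hrows (Sum.inr e)
        · intro K
          have h4 := hrows (Sum.inl K)
          rw [hrow K] at h4
          have h5 : rhsv G (NiceTree.forget v t) (Sum.inl K) = 0 := rfl
          rw [h5] at h4
          linarith [h4]
  | join t₁ t₂ ih₁ ih₂ =>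
      intro μ
      have hrow : ∀ K : Cfg G t₁.bag,
          (∑ i, coef G (NiceTree.join t₁ t₂) (Sum.inl K) i * μ i)
            = (∑ K' : Cfg G t₂.bag, if K'.1 = K.1 then μ (Sum.inr (rootIdx G t₂ K')) else 0)
              - μ (Sum.inl (rootIdx G t₁ K)) := by
        intro K
        have h := sum_split (fun i : VarIdx G t₁ ⊕ VarIdx G t₂ =>
          coef G (NiceTree.join t₁ t₂) (Sum.inl K) i * μ i)
        refine h.trans ?_
        have h1 : (∑ j : VarIdx G t₁,
            coef G (NiceTree.join t₁ t₂) (Sum.inl K) (Sum.inl j) * μ (Sum.inl j))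
              = - μ (Sum.inl (rootIdx G t₁ K)) := by
          have h3 := sum_liftRow G t₁ (fun K0 => if K0 = K then (-1:ℝ) else 0) (μ ∘ Sum.inl)
          refine Eq.trans ?_ (h3.trans ?_)
          · rfl
          · have e : ∀ K0 : Cfg G t₁.bag,
                (if K0 = K then (-1:ℝ) else 0) * (μ ∘ Sum.inl) (rootIdx G t₁ K0)
                  = if K0.1 = K.1 then -((μ ∘ Sum.inl) (rootIdx G t₁ K0)) else 0 := by
              intro K0
              by_cases h : K0 = K
              · rw [if_pos h, if_pos (by rw [h])]
                ring
              · rw [if_neg h, if_neg fun hh => h (Subtype.ext hh), zero_mul]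
            rw [Finset.sum_congr rfl fun K0 _ => e K0,
              sum_cfg_ite K (fun K0 => -((μ ∘ Sum.inl) (rootIdx G t₁ K0)))]
            rfl
        have h2 : (∑ j : VarIdx G t₂,
            coef G (NiceTree.join t₁ t₂) (Sum.inl K) (Sum.inr j) * μ (Sum.inr j))
              = ∑ K' : Cfg G t₂.bag,
                  if K'.1 = K.1 then μ (Sum.inr (rootIdx G t₂ K')) else 0 := by
          have h3 := sum_liftRow G t₂ (fun K' => if K'.1 = K.1 then (1:ℝ) else 0) (μ ∘ Sum.inr)
          refine Eq.trans ?_ (h3.trans ?_)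
          · rfl
          · refine Finset.sum_congr rfl fun K' _ => ?_
            rw [ite_mul, one_mul, zero_mul]
            rfl
        rw [h1, h2]
        ring
      have hchild₁ : ∀ (e : EqIdx G t₁),
          (∑ i, coef G (NiceTree.join t₁ t₂) (Sum.inr (Sum.inl e)) i * μ i)
            = ∑ j, coef G t₁ e j * (μ ∘ Sum.inl) j := by
        intro e
        have h := sum_split (fun i : VarIdx G t₁ ⊕ VarIdx G t₂ =>
          coef G (NiceTree.join t₁ t₂) (Sum.inr (Sum.inl e)) i * μ i)
        refine h.trans ?_
        have h1 : (∑ j : VarIdx G t₂,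
            coef G (NiceTree.join t₁ t₂) (Sum.inr (Sum.inl e)) (Sum.inr j) * μ (Sum.inr j)) = 0 :=
          Finset.sum_eq_zero fun j _ => zero_mul _
        rw [h1, add_zero]
        rfl
      have hchild₂ : ∀ (e : EqIdx G t₂),
          (∑ i, coef G (NiceTree.join t₁ t₂) (Sum.inr (Sum.inr e)) i * μ i)
            = ∑ j, coef G t₂ e j * (μ ∘ Sum.inr) j := by
        intro e
        have h := sum_split (fun i : VarIdx G t₁ ⊕ VarIdx G t₂ =>
          coef G (NiceTree.join t₁ t₂) (Sum.inr (Sum.inr e)) i * μ i)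
        refine h.trans ?_
        have h1 : (∑ j : VarIdx G t₁,
            coef G (NiceTree.join t₁ t₂) (Sum.inr (Sum.inr e)) (Sum.inl j) * μ (Sum.inl j)) = 0 :=
          Finset.sum_eq_zero fun j _ => zero_mul _
        rw [h1, zero_add]
        rfl
      constructor
      · rintro ⟨h0, hF1, hF2, hcons⟩
        obtain ⟨-, hrows₁⟩ := (ih₁ (μ ∘ Sum.inl)).1 hF1
        obtain ⟨-, hrows₂⟩ := (ih₂ (μ ∘ Sum.inr)).1 hF2
        refine ⟨h0, ?_⟩
        intro e
        rcases e with K | e | e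
        · rw [hrow K, ← hcons K]
          show _ = (0:ℝ)
          ring
        · rw [hchild₁ e, hrows₁ e]
          rfl
        · rw [hchild₂ e, hrows₂ e]
          rfl
      · rintro ⟨h0, hrows⟩
        refine ⟨h0, ?_, ?_, ?_⟩
        · refine (ih₁ (μ ∘ Sum.inl)).2 ⟨fun j => h0 _, fun e => ?_⟩
          rw [← hchild₁ e]
          exact hrows (Sum.inr (Sum.inl e))
        · refine (ih₂ (μ ∘ Sum.inr)).2 ⟨fun j => h0 _, fun e => ?_⟩
          rw [← hchild₂ e]
          exact hrows (Sum.inr (Sum.inr e))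
        · intro K
          have h4 := hrows (Sum.inl K)
          rw [hrow K] at h4
          have h5 : rhsv G (NiceTree.join t₁ t₂) (Sum.inl K) = 0 := rfl
          rw [h5] at h4
          linarith [h4]
/-! ### Cardinality bounds -/

lemma card_cfg_le (G : SimpleGraph (Fin n)) (B : Finset (Fin n)) :
    Fintype.card (Cfg G B) ≤ 2 ^ B.card := by
  classical
  have h1 : Fintype.card (Cfg G B) ≤ Fintype.card B.powerset := by
    apply Fintype.card_le_of_injective
      (fun K => (⟨K.1, Finset.mem_powerset.2 K.2.1⟩ : B.powerset))
    intro a b hab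
    simp only [Subtype.mk.injEq] at hab
    exact Subtype.ext hab
  rw [Fintype.card_coe, Finset.card_powerset] at h1
  exact h1

lemma card_cfg_le' (G : SimpleGraph (Fin n)) {B : Finset (Fin n)} {τ : ℕ}
    (h : B.card ≤ τ + 1) : Fintype.card (Cfg G B) ≤ 2 ^ (τ + 1) :=
  (card_cfg_le G B).trans (Nat.pow_le_pow_right (by norm_num) h)

lemma size_pos : ∀ t : NiceTree n, 1 ≤ t.size
  | .leaf _ => le_rfl
  | .introduce _ t => by show 1 ≤ t.size + 1; omega
  | .forget _ t => by show 1 ≤ t.size + 1; omega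
  | .join t₁ t₂ => by show 1 ≤ t₁.size + t₂.size + 1; omega

lemma card_varIdx_le (G : SimpleGraph (Fin n)) (τ : ℕ) :
    ∀ t : NiceTree n, (∀ s : NiceTree n, s.isSubtree t → s.bag.card ≤ τ + 1) →
      Fintype.card (VarIdx G t) ≤ 2 ^ (τ + 1) * t.size := by
  intro t
  induction t with
  | leaf v =>
      intro hbag
      have h : ({v} : Finset (Fin n)).card ≤ τ + 1 := hbag _ (isSubtree_refl _)
      calc Fintype.card (VarIdx G (NiceTree.leaf v)) = Fintype.card (Cfg G {v}) := rfl
        _ ≤ 2 ^ (τ + 1) := card_cfg_le' G h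
        _ = 2 ^ (τ + 1) * (NiceTree.leaf v : NiceTree n).size := by
            show _ = 2 ^ (τ + 1) * 1
            omega
  | introduce v t ih =>
      intro hbag
      have hb : (insert v t.bag).card ≤ τ + 1 := hbag _ (isSubtree_refl _)
      have h1 : Fintype.card (VarIdx G (NiceTree.introduce v t))
          = Fintype.card (Cfg G (insert v t.bag)) + Fintype.card (VarIdx G t) :=
        Fintype.card_sum
      have h3 := ih (fun s hs => hbag s (Or.inr hs))
      calc Fintype.card (VarIdx G (NiceTree.introduce v t))
          = Fintype.card (Cfg G (insert v t.bag)) + Fintype.card (VarIdx G t) := h1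
        _ ≤ 2 ^ (τ + 1) + 2 ^ (τ + 1) * t.size := Nat.add_le_add (card_cfg_le' G hb) h3
        _ = 2 ^ (τ + 1) * (t.size + 1) := by ring
        _ = 2 ^ (τ + 1) * (NiceTree.introduce v t).size := rfl
  | forget v t ih =>
      intro hbag
      have hb : (t.bag.erase v).card ≤ τ + 1 := hbag _ (isSubtree_refl _)
      have h1 : Fintype.card (VarIdx G (NiceTree.forget v t))
          = Fintype.card (Cfg G (t.bag.erase v)) + Fintype.card (VarIdx G t) :=
        Fintype.card_sum
      have h3 := ih (fun s hs => hbag s (Or.inr hs))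
      calc Fintype.card (VarIdx G (NiceTree.forget v t))
          = Fintype.card (Cfg G (t.bag.erase v)) + Fintype.card (VarIdx G t) := h1
        _ ≤ 2 ^ (τ + 1) + 2 ^ (τ + 1) * t.size := Nat.add_le_add (card_cfg_le' G hb) h3
        _ = 2 ^ (τ + 1) * (t.size + 1) := by ring
        _ = 2 ^ (τ + 1) * (NiceTree.forget v t).size := rfl
  | join t₁ t₂ ih₁ ih₂ =>
      intro hbag
      have h1 : Fintype.card (VarIdx G (NiceTree.join t₁ t₂))
          = Fintype.card (VarIdx G t₁) + Fintype.card (VarIdx G t₂) :=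
        Fintype.card_sum
      have h3 := ih₁ (fun s hs => hbag s (Or.inr (Or.inl hs)))
      have h4 := ih₂ (fun s hs => hbag s (Or.inr (Or.inr hs)))
      calc Fintype.card (VarIdx G (NiceTree.join t₁ t₂))
          = Fintype.card (VarIdx G t₁) + Fintype.card (VarIdx G t₂) := h1
        _ ≤ 2 ^ (τ + 1) * t₁.size + 2 ^ (τ + 1) * t₂.size := Nat.add_le_add h3 h4
        _ ≤ 2 ^ (τ + 1) * (t₁.size + t₂.size + 1) := by
            rw [← Nat.mul_add]
            exact Nat.mul_le_mul_left _ (by omega)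
        _ = 2 ^ (τ + 1) * (NiceTree.join t₁ t₂).size := rfl

lemma card_eqIdx_le (G : SimpleGraph (Fin n)) (τ : ℕ) :
    ∀ t : NiceTree n, (∀ s : NiceTree n, s.isSubtree t → s.bag.card ≤ τ + 1) →
      Fintype.card (EqIdx G t) ≤ 2 ^ (τ + 1) * t.size := by
  intro t
  induction t with
  | leaf v =>
      intro _
      calc Fintype.card (EqIdx G (NiceTree.leaf v)) = 1 := Fintype.card_unit
        _ ≤ 2 ^ (τ + 1) * (NiceTree.leaf v : NiceTree n).size := by
            show 1 ≤ 2 ^ (τ + 1) * 1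
            have := Nat.one_le_two_pow (n := τ + 1)
            omega
  | introduce v t ih =>
      intro hbag
      have hb : t.bag.card ≤ τ + 1 := hbag t (Or.inr (isSubtree_refl t))
      have h1 : Fintype.card (EqIdx G (NiceTree.introduce v t))
          = Fintype.card (Cfg G t.bag) + Fintype.card (EqIdx G t) := Fintype.card_sum
      have h3 := ih (fun s hs => hbag s (Or.inr hs))
      calc Fintype.card (EqIdx G (NiceTree.introduce v t))
          = Fintype.card (Cfg G t.bag) + Fintype.card (EqIdx G t) := h1
        _ ≤ 2 ^ (τ + 1) + 2 ^ (τ + 1) * t.size := Nat.add_le_add (card_cfg_le' G hb) h3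
        _ = 2 ^ (τ + 1) * (t.size + 1) := by ring
        _ = 2 ^ (τ + 1) * (NiceTree.introduce v t).size := rfl
  | forget v t ih =>
      intro hbag
      have hb : (t.bag.erase v).card ≤ τ + 1 :=
        (Finset.card_erase_le).trans (hbag t (Or.inr (isSubtree_refl t)))
      have h1 : Fintype.card (EqIdx G (NiceTree.forget v t))
          = Fintype.card (Cfg G (t.bag.erase v)) + Fintype.card (EqIdx G t) := Fintype.card_sum
      have h3 := ih (fun s hs => hbag s (Or.inr hs))
      calc Fintype.card (EqIdx G (NiceTree.forget v t))
          = Fintype.card (Cfg G (t.bag.erase v)) + Fintype.card (EqIdx G t) := h1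
        _ ≤ 2 ^ (τ + 1) + 2 ^ (τ + 1) * t.size := Nat.add_le_add (card_cfg_le' G hb) h3
        _ = 2 ^ (τ + 1) * (t.size + 1) := by ring
        _ = 2 ^ (τ + 1) * (NiceTree.forget v t).size := rfl
  | join t₁ t₂ ih₁ ih₂ =>
      intro hbag
      have hb : t₁.bag.card ≤ τ + 1 := hbag t₁ (Or.inr (Or.inl (isSubtree_refl t₁)))
      have h1 : Fintype.card (EqIdx G (NiceTree.join t₁ t₂))
          = Fintype.card (Cfg G t₁.bag) + (Fintype.card (EqIdx G t₁)
            + Fintype.card (EqIdx G t₂)) := by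
        have ha : Fintype.card (EqIdx G (NiceTree.join t₁ t₂))
            = Fintype.card (Cfg G t₁.bag) + Fintype.card (EqIdx G t₁ ⊕ EqIdx G t₂) :=
          Fintype.card_sum
        rw [ha, Fintype.card_sum]
      have h3 := ih₁ (fun s hs => hbag s (Or.inr (Or.inl hs)))
      have h4 := ih₂ (fun s hs => hbag s (Or.inr (Or.inr hs)))
      calc Fintype.card (EqIdx G (NiceTree.join t₁ t₂))
          = Fintype.card (Cfg G t₁.bag)
            + (Fintype.card (EqIdx G t₁) + Fintype.card (EqIdx G t₂)) := h1
        _ ≤ 2 ^ (τ + 1) + (2 ^ (τ + 1) * t₁.size + 2 ^ (τ + 1) * t₂.size) :=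
            Nat.add_le_add (card_cfg_le' G hb) (Nat.add_le_add h3 h4)
        _ = 2 ^ (τ + 1) * (t₁.size + t₂.size + 1) := by ring
        _ = 2 ^ (τ + 1) * (NiceTree.join t₁ t₂).size := rfl

/-! ### The projection rows -/

/-- The coefficient row of the projection onto coordinate `u`. -/
def xrow (G : SimpleGraph (Fin n)) : (t : NiceTree n) → Fin n → VarIdx G t → ℝ
  | .leaf _, u, K => if u ∈ K.1 then 1 else 0
  | .introduce v t, u, i =>
      if u = v then
        Sum.elim (fun K : Cfg G (insert v t.bag) => if u ∈ K.1 then (1:ℝ) else 0)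
          (fun _ => 0) i
      else Sum.elim (fun _ => 0) (xrow G t u) i
  | .forget _ t, u, i => Sum.elim (fun _ => 0) (xrow G t u) i
  | .join t₁ t₂, u, i =>
      if u ∈ t₁.verts then Sum.elim (xrow G t₁ u) (fun _ => 0) i
      else Sum.elim (fun _ => 0) (xrow G t₂ u) i

lemma sum_xrow_vec (G : SimpleGraph (Fin n)) :
    ∀ t : NiceTree n, ∀ S : Finset (Fin n),
      (∀ B ∈ bags t, coversIn G S B) → ∀ u ∈ t.verts,
      (∑ i, xrow G t u i * vec G t S i) = if u ∈ S then 1 else 0 := by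
  intro t
  induction t with
  | leaf v =>
      intro S hS u hu
      have hu' : u = v := Finset.mem_singleton.1 hu
      subst hu'
      have e : ∀ K : Cfg G {u}, xrow G (NiceTree.leaf u) u K * vec G (NiceTree.leaf u) S K
          = (if K.1 = S ∩ {u} then (if u ∈ K.1 then (1:ℝ) else 0) else 0) := by
        intro K
        show (if u ∈ K.1 then (1:ℝ) else 0) * (if K.1 = S ∩ {u} then 1 else 0) = _
        by_cases h : K.1 = S ∩ {u}
        · rw [if_pos h, if_pos h, mul_one]
        · rw [if_neg h, if_neg h, mul_zero]
      show (∑ K : Cfg G {u}, xrow G (NiceTree.leaf u) u K * vec G (NiceTree.leaf u) S K)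
        = if u ∈ S then 1 else 0
      rw [Finset.sum_congr rfl fun K _ => e K,
        sum_cfg (fun X => if u ∈ X then (1:ℝ) else 0),
        if_pos ⟨Finset.inter_subset_right, coversIn_singleton _ u⟩]
      by_cases h : u ∈ S
      · rw [if_pos (Finset.mem_inter.2 ⟨h, Finset.mem_singleton_self u⟩), if_pos h]
      · rw [if_neg fun hh => h (Finset.mem_inter.1 hh).1, if_neg h]
  | introduce v t ih =>
      intro S hS u hu
      have hsp := sum_split (fun i : Cfg G (insert v t.bag) ⊕ VarIdx G t =>
        xrow G (NiceTree.introduce v t) u i * vec G (NiceTree.introduce v t) S i)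
      by_cases huv : u = v
      · refine hsp.trans ?_
        have h2 : (∑ j : VarIdx G t, xrow G (NiceTree.introduce v t) u (Sum.inr j)
            * vec G (NiceTree.introduce v t) S (Sum.inr j)) = 0 := by
          apply Finset.sum_eq_zero
          intro j _
          have hx : xrow G (NiceTree.introduce v t) u (Sum.inr j) = 0 := by
            show (if u = v then (0:ℝ) else xrow G t u j) = 0
            rw [if_pos huv]
          rw [hx, zero_mul]
        rw [h2, add_zero]
        have e : ∀ K : Cfg G (insert v t.bag),
            xrow G (NiceTree.introduce v t) u (Sum.inl K)
              * vec G (NiceTree.introduce v t) S (Sum.inl K)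
              = (if K.1 = S ∩ insert v t.bag then (if u ∈ K.1 then (1:ℝ) else 0) else 0) := by
          intro K
          have hx : xrow G (NiceTree.introduce v t) u (Sum.inl K)
              = if u ∈ K.1 then (1:ℝ) else 0 := by
            show (if u = v then (if u ∈ K.1 then (1:ℝ) else 0) else 0) = _
            rw [if_pos huv]
          rw [hx]
          show _ * (if K.1 = S ∩ insert v t.bag then (1:ℝ) else 0) = _
          by_cases h : K.1 = S ∩ insert v t.bag
          · rw [if_pos h, if_pos h, mul_one]
          · rw [if_neg h, if_neg h, mul_zero]
        rw [Finset.sum_congr rfl fun K _ => e K,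
          sum_cfg (fun X => if u ∈ X then (1:ℝ) else 0),
          if_pos ⟨Finset.inter_subset_right,
            coversIn_inter (hS _ (Finset.mem_insert_self _ _))⟩]
        by_cases h : u ∈ S
        · rw [if_pos, if_pos h]
          exact Finset.mem_inter.2 ⟨h, by rw [huv]; exact Finset.mem_insert_self v t.bag⟩
        · rw [if_neg fun hh => h (Finset.mem_inter.1 hh).1, if_neg h]
      · have hu' : u ∈ t.verts := by
          rcases Finset.mem_insert.1 hu with h | h
          · exact absurd h huv
          · exact h
        refine hsp.trans ?_
        have h1 : (∑ K : Cfg G (insert v t.bag), xrow G (NiceTree.introduce v t) u (Sum.inl K)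
            * vec G (NiceTree.introduce v t) S (Sum.inl K)) = 0 := by
          apply Finset.sum_eq_zero
          intro K _
          have hx : xrow G (NiceTree.introduce v t) u (Sum.inl K) = 0 := by
            show (if u = v then (if u ∈ K.1 then (1:ℝ) else 0) else 0) = 0
            rw [if_neg huv]
          rw [hx, zero_mul]
        rw [h1, zero_add]
        have e : ∀ j : VarIdx G t, xrow G (NiceTree.introduce v t) u (Sum.inr j)
            * vec G (NiceTree.introduce v t) S (Sum.inr j) = xrow G t u j * vec G t S j := by
          intro j
          have hx : xrow G (NiceTree.introduce v t) u (Sum.inr j) = xrow G t u j := by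
            show (if u = v then (0:ℝ) else xrow G t u j) = _
            rw [if_neg huv]
          rw [hx]
          rfl
        rw [Finset.sum_congr rfl fun j _ => e j]
        exact ih S (fun B hB => hS B (Finset.mem_insert_of_mem hB)) u hu'
  | forget v t ih =>
      intro S hS u hu
      have hsp := sum_split (fun i : Cfg G (t.bag.erase v) ⊕ VarIdx G t =>
        xrow G (NiceTree.forget v t) u i * vec G (NiceTree.forget v t) S i)
      refine hsp.trans ?_
      have h1 : (∑ K : Cfg G (t.bag.erase v), xrow G (NiceTree.forget v t) u (Sum.inl K)
          * vec G (NiceTree.forget v t) S (Sum.inl K)) = 0 :=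
        Finset.sum_eq_zero fun K _ => zero_mul _
      rw [h1, zero_add]
      have e : ∀ j : VarIdx G t, xrow G (NiceTree.forget v t) u (Sum.inr j)
          * vec G (NiceTree.forget v t) S (Sum.inr j) = xrow G t u j * vec G t S j :=
        fun j => rfl
      rw [Finset.sum_congr rfl fun j _ => e j]
      exact ih S (fun B hB => hS B (Finset.mem_insert_of_mem hB)) u hu
  | join t₁ t₂ ih₁ ih₂ =>
      intro S hS u hu
      have hsp := sum_split (fun i : VarIdx G t₁ ⊕ VarIdx G t₂ =>
        xrow G (NiceTree.join t₁ t₂) u i * vec G (NiceTree.join t₁ t₂) S i)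
      refine hsp.trans ?_
      by_cases hu1 : u ∈ t₁.verts
      · have h2 : (∑ j : VarIdx G t₂, xrow G (NiceTree.join t₁ t₂) u (Sum.inr j)
            * vec G (NiceTree.join t₁ t₂) S (Sum.inr j)) = 0 := by
          apply Finset.sum_eq_zero
          intro j _
          have hx : xrow G (NiceTree.join t₁ t₂) u (Sum.inr j) = 0 := by
            show (if u ∈ t₁.verts then (0:ℝ) else xrow G t₂ u j) = 0
            rw [if_pos hu1]
          rw [hx, zero_mul]
        rw [h2, add_zero]
        have e : ∀ j : VarIdx G t₁, xrow G (NiceTree.join t₁ t₂) u (Sum.inl j)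
            * vec G (NiceTree.join t₁ t₂) S (Sum.inl j) = xrow G t₁ u j * vec G t₁ S j := by
          intro j
          have hx : xrow G (NiceTree.join t₁ t₂) u (Sum.inl j) = xrow G t₁ u j := by
            show (if u ∈ t₁.verts then xrow G t₁ u j else (0:ℝ)) = _
            rw [if_pos hu1]
          rw [hx]
          rfl
        rw [Finset.sum_congr rfl fun j _ => e j]
        exact ih₁ S (fun B hB => hS B (Finset.mem_union_left _ hB)) u hu1
      · have hu2 : u ∈ t₂.verts := by
          rcases Finset.mem_union.1 hu with h | h
          · exact absurd h hu1
          · exact h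
        have h1 : (∑ j : VarIdx G t₁, xrow G (NiceTree.join t₁ t₂) u (Sum.inl j)
            * vec G (NiceTree.join t₁ t₂) S (Sum.inl j)) = 0 := by
          apply Finset.sum_eq_zero
          intro j _
          have hx : xrow G (NiceTree.join t₁ t₂) u (Sum.inl j) = 0 := by
            show (if u ∈ t₁.verts then xrow G t₁ u j else (0:ℝ)) = 0
            rw [if_neg hu1]
          rw [hx, zero_mul]
        rw [h1, zero_add]
        have e : ∀ j : VarIdx G t₂, xrow G (NiceTree.join t₁ t₂) u (Sum.inr j)
            * vec G (NiceTree.join t₁ t₂) S (Sum.inr j) = xrow G t₂ u j * vec G t₂ S j := by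
          intro j
          have hx : xrow G (NiceTree.join t₁ t₂) u (Sum.inr j) = xrow G t₂ u j := by
            show (if u ∈ t₁.verts then (0:ℝ) else xrow G t₂ u j) = _
            rw [if_neg hu1]
          rw [hx]
          rfl
        rw [Finset.sum_congr rfl fun j _ => e j]
        exact ih₂ S (fun B hB => hS B (Finset.mem_union_right _ hB)) u hu2
/-! ### Final assembly -/

/-- The projection map. -/
noncomputable def projMap (G : SimpleGraph (Fin n)) (T : NiceTree n) {m : ℕ}
    (ev : VarIdx G T ≃ Fin m) : (Fin m → ℝ) →ₗ[ℝ] (Fin n → ℝ) where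
  toFun x := fun v => ∑ i : Fin m, xrow G T v (ev.symm i) * x i
  map_add' x y := by
    funext v
    show (∑ i : Fin m, xrow G T v (ev.symm i) * (x i + y i))
      = (∑ i : Fin m, xrow G T v (ev.symm i) * x i) + ∑ i : Fin m, xrow G T v (ev.symm i) * y i
    rw [← Finset.sum_add_distrib]
    exact Finset.sum_congr rfl fun i _ => by ring
  map_smul' cc x := by
    funext v
    show (∑ i : Fin m, xrow G T v (ev.symm i) * (cc * x i))
      = cc * ∑ i : Fin m, xrow G T v (ev.symm i) * x i
    rw [Finset.mul_sum]
    exact Finset.sum_congr rfl fun i _ => by ring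

/-- Minus the identity matrix (nonnegativity rows). -/
noncomputable def negIdMat (m : ℕ) : Matrix (Fin m) (Fin m) ℝ :=
  fun r i => if r = i then (-1:ℝ) else 0

/-- The equality-constraint matrix. -/
noncomputable def eqMat (G : SimpleGraph (Fin n)) (T : NiceTree n) {m q : ℕ}
    (ev : VarIdx G T ≃ Fin m) (ee : EqIdx G T ≃ Fin q) : Matrix (Fin q) (Fin m) ℝ :=
  fun e i => coef G T (ee.symm e) (ev.symm i)

/-- The right-hand side of the equality constraints. -/
noncomputable def eqVec (G : SimpleGraph (Fin n)) (T : NiceTree n) {q : ℕ}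
    (ee : EqIdx G T ≃ Fin q) : Fin q → ℝ :=
  fun e => rhsv G T (ee.symm e)

lemma negId_mulVec {m : ℕ} (x : Fin m → ℝ) (r : Fin m) :
    ((negIdMat m).mulVec x) r = - x r := by
  show (∑ i : Fin m, (if r = i then (-1:ℝ) else 0) * x i) = - x r
  have e : ∀ i : Fin m, (if r = i then (-1:ℝ) else 0) * x i
      = if r = i then -(x i) else 0 := by
    intro i
    split_ifs <;> ring
  rw [Finset.sum_congr rfl fun i _ => e i, Finset.sum_ite_eq, if_pos (Finset.mem_univ r)]

lemma eq_mulVec (G : SimpleGraph (Fin n)) (T : NiceTree n) {m q : ℕ}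
    (ev : VarIdx G T ≃ Fin m) (ee : EqIdx G T ≃ Fin q) (x : Fin m → ℝ) (r : Fin q) :
    ((eqMat G T ev ee).mulVec x) r
      = ∑ i' : VarIdx G T, coef G T (ee.symm r) i' * x (ev i') := by
  show (∑ i : Fin m, coef G T (ee.symm r) (ev.symm i) * x i) = _
  have h1 : (∑ i : Fin m, coef G T (ee.symm r) (ev.symm i) * x i)
      = ∑ i : Fin m, coef G T (ee.symm r) (ev.symm i) * x (ev (ev.symm i)) :=
    Finset.sum_congr rfl fun i _ => by rw [Equiv.apply_symm_apply]
  rw [h1]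
  exact Equiv.sum_comp ev.symm (fun i' => coef G T (ee.symm r) i' * x (ev i'))

lemma mem_poly_iff (G : SimpleGraph (Fin n)) (T : NiceTree n) {m q : ℕ}
    (ev : VarIdx G T ≃ Fin m) (ee : EqIdx G T ≃ Fin q) (x : Fin m → ℝ) :
    ((negIdMat m).mulVec x ≤ 0 ∧ (eqMat G T ev ee).mulVec x = eqVec G T ee)
      ↔ Feas G T (x ∘ ev) := by
  classical
  rw [feas_iff_rows]
  constructor
  · rintro ⟨h1, h2⟩
    refine ⟨fun i' => ?_, fun e => ?_⟩
    · have h3 := h1 (ev i')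
      rw [negId_mulVec] at h3
      show (0:ℝ) ≤ x (ev i')
      have h4 : - x (ev i') ≤ 0 := h3
      linarith
    · have h3 := congrFun h2 (ee e)
      rw [eq_mulVec] at h3
      simp only [eqVec] at h3
      rw [Equiv.symm_apply_apply] at h3
      exact h3
  · rintro ⟨h0, hrows⟩
    constructor
    · intro r
      show ((negIdMat m).mulVec x) r ≤ 0
      rw [negId_mulVec]
      have h3 : (0:ℝ) ≤ (x ∘ ev) (ev.symm r) := h0 (ev.symm r)
      have h4 : (x ∘ ev) (ev.symm r) = x r := by
        show x (ev (ev.symm r)) = x r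
        rw [Equiv.apply_symm_apply]
      rw [h4] at h3
      linarith
    · funext r
      rw [eq_mulVec]
      exact hrows (ee.symm r)

theorem image_eq (G : SimpleGraph (Fin n)) (T : NiceTree n)
    (hdec : IsNiceTreeDecompGraph G T) {m q : ℕ}
    (ev : VarIdx G T ≃ Fin m) (ee : EqIdx G T ≃ Fin q) :
    (projMap G T ev) ''
        {x | (negIdMat m).mulVec x ≤ 0 ∧ (eqMat G T ev ee).mulVec x = eqVec G T ee}
      = convexHull ℝ {x : Fin n → ℝ | ∃ S : Finset (Fin n),
          (∀ u v : Fin n, G.Adj u v → u ∈ S ∨ v ∈ S) ∧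
          x = fun v => if v ∈ S then (1 : ℝ) else 0} := by
  classical
  obtain ⟨hvalid, hverts, hedges⟩ := hdec
  apply Set.Subset.antisymm
  · rintro y ⟨x, hx, rfl⟩
    have hFeas : Feas G T (x ∘ ev) := (mem_poly_iff G T ev ee x).1 hx
    obtain ⟨w, hw0, hwsup, hwsum, hwco⟩ := feas_decomp G T hvalid (x ∘ ev) hFeas
    have hπ : ∀ v : Fin n, projMap G T ev x v
        = ∑ S ∈ T.verts.powerset, w S * (if v ∈ S then 1 else 0) := by
      intro v
      show (∑ i : Fin m, xrow G T v (ev.symm i) * x i) = _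
      have h1 : (∑ i : Fin m, xrow G T v (ev.symm i) * x i)
          = ∑ i : Fin m, xrow G T v (ev.symm i) * x (ev (ev.symm i)) :=
        Finset.sum_congr rfl fun i _ => by rw [Equiv.apply_symm_apply]
      rw [h1, Equiv.sum_comp ev.symm (fun i' => xrow G T v i' * x (ev i'))]
      have h2 : ∀ i' : VarIdx G T, xrow G T v i' * x (ev i')
          = ∑ S ∈ T.verts.powerset, w S * (xrow G T v i' * vec G T S i') := by
        intro i'
        have h3 : x (ev i') = ∑ S ∈ T.verts.powerset, w S * vec G T S i' := hwco i'
        rw [h3, Finset.mul_sum]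
        exact Finset.sum_congr rfl fun S _ => by ring
      rw [Finset.sum_congr rfl fun i' _ => h2 i', Finset.sum_comm]
      refine Finset.sum_congr rfl fun S hS => ?_
      rw [← Finset.mul_sum]
      by_cases hw : w S = 0
      · rw [hw, zero_mul, zero_mul]
      · rw [sum_xrow_vec G T S (hwsup S hw).2 v (hverts v)]
    have hsumF : (∑ S ∈ T.verts.powerset.filter (fun S => w S ≠ 0), w S) = 1 := by
      rw [← hwsum]
      apply Finset.sum_subset (Finset.filter_subset _ _)
      intro S hS hnS
      by_contra hh
      exact hnS (Finset.mem_filter.2 ⟨hS, hh⟩)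
    have hπ2 : projMap G T ev x
        = ∑ S ∈ T.verts.powerset.filter (fun S => w S ≠ 0),
            w S • (fun v' => if v' ∈ S then (1:ℝ) else 0) := by
      funext v
      rw [hπ v]
      have hre : (∑ S ∈ T.verts.powerset.filter (fun S => w S ≠ 0),
          w S • (fun v' => if v' ∈ S then (1:ℝ) else 0)) v
            = ∑ S ∈ T.verts.powerset.filter (fun S => w S ≠ 0),
                w S * (if v ∈ S then 1 else 0) := by
        rw [Finset.sum_apply]
        rfl
      rw [hre]
      symm
      apply Finset.sum_subset (Finset.filter_subset _ _)
      intro S hS hnS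
      have hw0' : w S = 0 := by
        by_contra hh
        exact hnS (Finset.mem_filter.2 ⟨hS, hh⟩)
      rw [hw0', zero_mul]
    rw [hπ2]
    apply Convex.sum_mem (convex_convexHull ℝ _)
    · intro S _
      exact hw0 S
    · exact hsumF
    · intro S hS
      apply subset_convexHull
      refine ⟨S, ?_, rfl⟩
      intro u v' hadj
      obtain ⟨s, hs, hus, hvs⟩ := hedges u v' hadj
      exact (hwsup S (Finset.mem_filter.1 hS).2).2 s.bag
        (bags_subtree hs (bag_mem_bags s)) u hus v' hvs hadj
  · apply convexHull_min
    · rintro x' ⟨S, hcov, rfl⟩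
      refine ⟨vec G T S ∘ ev.symm, ?_, ?_⟩
      · apply (mem_poly_iff G T ev ee _).2
        have hx : ((vec G T S ∘ ev.symm) ∘ ev) = vec G T S := by
          funext i'
          show vec G T S (ev.symm (ev i')) = _
          rw [Equiv.symm_apply_apply]
        rw [hx]
        exact good_vec_feas G T hvalid S (fun B _ u hu v' hv' hadj => hcov u v' hadj)
      · funext v
        show (∑ i : Fin m, xrow G T v (ev.symm i) * (vec G T S ∘ ev.symm) i) = _
        have h1 : (∑ i : Fin m, xrow G T v (ev.symm i) * (vec G T S ∘ ev.symm) i)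
            = ∑ i : Fin m, xrow G T v (ev.symm i) * vec G T S (ev.symm i) := rfl
        rw [h1, Equiv.sum_comp ev.symm (fun i' => xrow G T v i' * vec G T S i'),
          sum_xrow_vec G T S (fun B _ u hu v' hv' hadj => hcov u v' hadj) v (hverts v)]
    · have hPconv : Convex ℝ {x : Fin m → ℝ |
          (negIdMat m).mulVec x ≤ 0 ∧ (eqMat G T ev ee).mulVec x = eqVec G T ee} := by
        rintro x ⟨hx1, hx2⟩ y ⟨hy1, hy2⟩ a b ha hb hab
        constructor
        · intro r
          show ((negIdMat m).mulVec (a • x + b • y)) r ≤ 0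
          have h1 : ((negIdMat m).mulVec (a • x + b • y)) r
              = a * ((negIdMat m).mulVec x) r + b * ((negIdMat m).mulVec y) r := by
            rw [Matrix.mulVec_add, Matrix.mulVec_smul, Matrix.mulVec_smul]
            rfl
          rw [h1]
          have h2 : ((negIdMat m).mulVec x) r ≤ 0 := hx1 r
          have h3 : ((negIdMat m).mulVec y) r ≤ 0 := hy1 r
          nlinarith
        · rw [Matrix.mulVec_add, Matrix.mulVec_smul, Matrix.mulVec_smul, hx2, hy2]
          funext e
          show a * eqVec G T ee e + b * eqVec G T ee e = eqVec G T ee e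
          rw [← add_mul, hab, one_mul]
      exact hPconv.linear_image (projMap G T ev)
end VCEF
/-- Extended formulation of size `O(2^(τ+1)·N)` for the
vertex cover polytope of a graph of treewidth `τ`. -/
theorem vertex_cover_extended_formulation :
    ∃ c : ℕ, 0 < c ∧
      ∀ (n : ℕ) (G : SimpleGraph (Fin n)) (T : NiceTree n) (τ : ℕ),
        IsNiceTreeDecompGraph G T →
        (∀ s : NiceTree n, s.isSubtree T → s.bag.card ≤ τ + 1) →
        ∃ (m p q : ℕ) (A : Matrix (Fin p) (Fin m) ℝ) (bvec : Fin p → ℝ)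
          (Cmat : Matrix (Fin q) (Fin m) ℝ) (dvec : Fin q → ℝ)
          (π : (Fin m → ℝ) →ₗ[ℝ] (Fin n → ℝ)),
          m ≤ c * 2 ^ (τ + 1) * T.size ∧ p + q ≤ c * 2 ^ (τ + 1) * T.size ∧
          π '' {x | A.mulVec x ≤ bvec ∧ Cmat.mulVec x = dvec}
            = convexHull ℝ {x : Fin n → ℝ | ∃ S : Finset (Fin n),
                (∀ u v : Fin n, G.Adj u v → u ∈ S ∨ v ∈ S) ∧
                x = fun v => if v ∈ S then (1 : ℝ) else 0} := by
  classical
  refine ⟨2, by norm_num, ?_⟩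
  intro n G T τ hdec hbags
  refine ⟨Fintype.card (VCEF.VarIdx G T), Fintype.card (VCEF.VarIdx G T),
    Fintype.card (VCEF.EqIdx G T),
    VCEF.negIdMat _, 0,
    VCEF.eqMat G T (Fintype.equivFin _) (Fintype.equivFin _),
    VCEF.eqVec G T (Fintype.equivFin _),
    VCEF.projMap G T (Fintype.equivFin _), ?_, ?_, ?_⟩
  · calc Fintype.card (VCEF.VarIdx G T) ≤ 2 ^ (τ + 1) * T.size :=
        VCEF.card_varIdx_le G τ T hbags
      _ ≤ 2 * 2 ^ (τ + 1) * T.size := by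
          rw [Nat.mul_assoc]
          exact Nat.le_mul_of_pos_left _ (by norm_num)
  · have h2 := VCEF.card_varIdx_le G τ T hbags
    have h3 := VCEF.card_eqIdx_le G τ T hbags
    calc Fintype.card (VCEF.VarIdx G T) + Fintype.card (VCEF.EqIdx G T)
        ≤ 2 ^ (τ + 1) * T.size + 2 ^ (τ + 1) * T.size := Nat.add_le_add h2 h3
      _ = 2 * 2 ^ (τ + 1) * T.size := by ring
  · exact VCEF.image_eq G T hdec (Fintype.equivFin _) (Fintype.equivFin _)
end

section
/- Let G = (V, E) be a graph that admits a nice tree decomposition of width τ with N nodes. Then there exist a polytope P = {x ∈ ℝ^m : Ax ≤ b, Cx = d}, where m and the total number of rows of A and C are at most c·2^(τ+1)·N for an absolute constant c, and a linear map π : ℝ^m → ℝ^E, such that π(P) equals the cut polytope of G, i.e., the convex hull of the cut vectors δ(S) ∈ {0,1}^E over all S ⊆ V, where (δ(S))_{uv} = 1 iff exactly one of u, v belongs to S. -/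
variable {n : ℕ}

deriving instance DecidableEq for NiceTree

namespace CutEF
open NiceTree Finset Classical
variable {n : ℕ}

lemma subtree_refl (t : NiceTree n) : t.isSubtree t := by
  cases t <;> simp [isSubtree]

lemma isSubtree_trans {a b c : NiceTree n} (h1 : a.isSubtree b) (h2 : b.isSubtree c) :
    a.isSubtree c := by
  induction c with
  | leaf v => rw [isSubtree] at h2 ⊢; subst h2; exact h1
  | introduce v t ih =>
      rcases h2 with h2 | h2
      · subst h2; exact h1
      · exact Or.inr (ih h2)
  | forget v t ih =>
      rcases h2 with h2 | h2
      · subst h2; exact h1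
      · exact Or.inr (ih h2)
  | join t₁ t₂ ih₁ ih₂ =>
      rcases h2 with h2 | h2 | h2
      · subst h2; exact h1
      · exact Or.inr (Or.inl (ih₁ h2))
      · exact Or.inr (Or.inr (ih₂ h2))

lemma bag_subset_verts (t : NiceTree n) : t.bag ⊆ t.verts := by
  induction t with
  | leaf v => simp [bag, verts]
  | introduce v t ih => simpa [bag, verts] using Finset.insert_subset_insert _ ih
  | forget v t ih => exact (Finset.erase_subset _ _).trans ih
  | join t₁ t₂ ih₁ ih₂ => exact ih₁.trans Finset.subset_union_left

lemma verts_subset_of_subtree {s t : NiceTree n} (h : s.isSubtree t) : s.verts ⊆ t.verts := by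
  induction t with
  | leaf v => rw [isSubtree] at h; subst h; exact subset_rfl
  | introduce v t ih =>
      rcases h with h | h
      · subst h; exact subset_rfl
      · exact (ih h).trans (Finset.subset_insert _ _)
  | forget v t ih =>
      rcases h with h | h
      · subst h; exact subset_rfl
      · exact ih h
  | join t₁ t₂ ih₁ ih₂ =>
      rcases h with h | h | h
      · subst h; exact subset_rfl
      · exact (ih₁ h).trans Finset.subset_union_left
      · exact (ih₂ h).trans Finset.subset_union_right

lemma valid_subtree {s t : NiceTree n} (hv : t.valid) (h : s.isSubtree t) : s.valid := by
  induction t with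
  | leaf v => rw [isSubtree] at h; subst h; exact hv
  | introduce v t ih =>
      rcases h with h | h
      · subst h; exact hv
      · exact ih hv.2 h
  | forget v t ih =>
      rcases h with h | h
      · subst h; exact hv
      · exact ih hv.2 h
  | join t₁ t₂ ih₁ ih₂ =>
      rcases h with h | h | h
      · subst h; exact hv
      · exact ih₁ hv.2.2.1 h
      · exact ih₂ hv.2.2.2 h

def nodesF : NiceTree n → Finset (NiceTree n)
  | .leaf v => {.leaf v}
  | .introduce v t => insert (.introduce v t) (nodesF t)
  | .forget v t => insert (.forget v t) (nodesF t)
  | .join t₁ t₂ => insert (.join t₁ t₂) (nodesF t₁ ∪ nodesF t₂)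

lemma mem_nodesF {s t : NiceTree n} : s ∈ nodesF t ↔ s.isSubtree t := by
  induction t with
  | leaf v => simp [nodesF, isSubtree]
  | introduce v t ih => simp [nodesF, isSubtree, ih]
  | forget v t ih => simp [nodesF, isSubtree, ih]
  | join t₁ t₂ ih₁ ih₂ => simp [nodesF, isSubtree, ih₁, ih₂, or_assoc]

lemma card_nodesF_le (t : NiceTree n) : (nodesF t).card ≤ t.size := by
  induction t with
  | leaf v => simp [nodesF, size]
  | introduce v t ih => exact (Finset.card_insert_le _ _).trans (by simpa [size] using ih)
  | forget v t ih => exact (Finset.card_insert_le _ _).trans (by simpa [size] using ih)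
  | join t₁ t₂ ih₁ ih₂ =>
      refine (Finset.card_insert_le _ _).trans ?_
      have := Finset.card_union_le (nodesF t₁) (nodesF t₂)
      simp only [size]; omega

end CutEF

namespace CutEF
open NiceTree Finset Classical
variable {n : ℕ}

noncomputable section
open scoped Classical

/-- the `j`-th local constraint of node `s` with parameter `K`. -/
def LocalEq (f : NiceTree n → Finset (Fin n) → ℝ) (s : NiceTree n) (K : Finset (Fin n))
    (j : Fin 3) : Prop :=
  if j = 0 then (∑ K' ∈ s.bag.powerset, f s K' = 1)
  else if j = 1 then
    match s with
    | .leaf _ => True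
    | .introduce v t =>
        ∑ K' ∈ (insert v t.bag).powerset, (if K' ∩ t.bag = K then f (.introduce v t) K' else 0)
          = (if K ∈ t.bag.powerset then f t K else 0)
    | .forget v t =>
        ∑ K' ∈ t.bag.powerset, (if K' ∩ (t.bag.erase v) = K then f t K' else 0)
          = (if K ∈ (t.bag.erase v).powerset then f (.forget v t) K else 0)
    | .join t₁ t₂ =>
        (if K ∈ t₁.bag.powerset then f (.join t₁ t₂) K else 0)
          = (if K ∈ t₁.bag.powerset then f t₁ K else 0)
  else
    match s with
    | .join t₁ t₂ =>
        (if K ∈ t₁.bag.powerset then f (.join t₁ t₂) K else 0)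
          = (if K ∈ t₂.bag.powerset then f t₂ K else 0)
    | _ => True

def AllCons (f : NiceTree n → Finset (Fin n) → ℝ) (T : NiceTree n) : Prop :=
  ∀ s, s.isSubtree T → ∀ K ∈ s.bag.powerset, ∀ j : Fin 3, LocalEq f s K j

lemma allCons_mono {f : NiceTree n → Finset (Fin n) → ℝ} {t T : NiceTree n}
    (h : AllCons f T) (ht : t.isSubtree T) : AllCons f t :=
  fun s hs => h s (isSubtree_trans hs ht)


lemma subtree_introduce (v : Fin n) (t : NiceTree n) : t.isSubtree (.introduce v t) :=
  Or.inr (subtree_refl t)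
lemma subtree_forget (v : Fin n) (t : NiceTree n) : t.isSubtree (.forget v t) :=
  Or.inr (subtree_refl t)
lemma subtree_join₁ (t₁ t₂ : NiceTree n) : t₁.isSubtree (.join t₁ t₂) :=
  Or.inr (Or.inl (subtree_refl t₁))
lemma subtree_join₂ (t₁ t₂ : NiceTree n) : t₂.isSubtree (.join t₁ t₂) :=
  Or.inr (Or.inr (subtree_refl t₂))

lemma cons_norm {f : NiceTree n → Finset (Fin n) → ℝ} {T s : NiceTree n}
    (h : AllCons f T) (hs : s.isSubtree T) : ∑ K' ∈ s.bag.powerset, f s K' = 1 := by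
  have := h s hs ∅ (by simp) 0
  simpa [LocalEq] using this

lemma cons_intro {f : NiceTree n → Finset (Fin n) → ℝ} {T t : NiceTree n} {v : Fin n}
    (h : AllCons f T) (hs : (NiceTree.introduce v t).isSubtree T) {K : Finset (Fin n)}
    (hK : K ⊆ t.bag) :
    ∑ K' ∈ (insert v t.bag).powerset, (if K' ∩ t.bag = K then f (.introduce v t) K' else 0)
      = f t K := by
  have := h _ hs K (by simp [bag]; exact hK.trans (Finset.subset_insert _ _)) 1
  simpa [LocalEq, Finset.mem_powerset, hK] using this

lemma cons_forget {f : NiceTree n → Finset (Fin n) → ℝ} {T t : NiceTree n} {v : Fin n}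
    (h : AllCons f T) (hs : (NiceTree.forget v t).isSubtree T) {K : Finset (Fin n)}
    (hK : K ⊆ t.bag.erase v) :
    ∑ K' ∈ t.bag.powerset, (if K' ∩ (t.bag.erase v) = K then f t K' else 0)
      = f (.forget v t) K := by
  have := h _ hs K (by simpa [bag, Finset.mem_powerset] using hK) 1
  simpa [LocalEq, Finset.mem_powerset, hK] using this

lemma cons_join₁ {f : NiceTree n → Finset (Fin n) → ℝ} {T t₁ t₂ : NiceTree n}
    (h : AllCons f T) (hs : (NiceTree.join t₁ t₂).isSubtree T) {K : Finset (Fin n)}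
    (hK : K ⊆ t₁.bag) : f (.join t₁ t₂) K = f t₁ K := by
  have := h _ hs K (by simpa [bag, Finset.mem_powerset] using hK) 1
  simpa [LocalEq, Finset.mem_powerset, hK] using this

lemma cons_join₂ {f : NiceTree n → Finset (Fin n) → ℝ} {T t₁ t₂ : NiceTree n}
    (h : AllCons f T) (hs : (NiceTree.join t₁ t₂).isSubtree T) (hb : t₁.bag = t₂.bag)
    {K : Finset (Fin n)} (hK : K ⊆ t₁.bag) : f (.join t₁ t₂) K = f t₂ K := by
  have := h _ hs K (by simpa [bag, Finset.mem_powerset] using hK) 2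
  simpa [LocalEq, Finset.mem_powerset, hK, hb ▸ hK] using this

/-- the integral point associated with a set `S`. -/
def dS (T : NiceTree n) (S : Finset (Fin n)) : NiceTree n → Finset (Fin n) → ℝ :=
  fun s K => if s.isSubtree T ∧ K = S ∩ s.bag then 1 else 0

lemma dS_allCons (T : NiceTree n) (hT : T.valid) (S : Finset (Fin n)) :
    AllCons (dS T S) T := by
  intro s hs K hK j
  rw [Finset.mem_powerset] at hK
  unfold LocalEq
  split
  · -- normalization
    have h0 : ∀ K' ∈ s.bag.powerset, dS T S s K' = if K' = S ∩ s.bag then 1 else 0 := by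
      intro K' _; simp [dS, hs]
    rw [Finset.sum_congr rfl h0, Finset.sum_ite_eq']
    simp [Finset.inter_subset_right]
  split
  · -- consistency
    match s, hs, hK with
    | .leaf v, hs, hK => trivial
    | .introduce v t, hs, hK =>
        have ht : t.isSubtree T := isSubtree_trans (subtree_introduce v t) hs
        show (∑ K' ∈ (insert v t.bag).powerset,
            if K' ∩ t.bag = K then dS T S (.introduce v t) K' else 0)
          = if K ∈ t.bag.powerset then dS T S t K else 0
        have h1 : ∀ K' ∈ (insert v t.bag).powerset,
            (if K' ∩ t.bag = K then dS T S (.introduce v t) K' else 0)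
            = if K' = S ∩ insert v t.bag then (if K' ∩ t.bag = K then (1:ℝ) else 0) else 0 := by
          intro K' _
          simp only [dS, hs, true_and, bag]
          split_ifs <;> simp_all
        rw [Finset.sum_congr rfl h1, Finset.sum_ite_eq']
        have hmem : S ∩ (insert v t.bag) ∈ (insert v t.bag).powerset := by
          simp [Finset.inter_subset_right]
        rw [if_pos hmem]
        have harr : S ∩ insert v t.bag ∩ t.bag = S ∩ t.bag := by
          rw [Finset.inter_assoc]; congr 1
          exact Finset.inter_eq_right.mpr (Finset.subset_insert _ _)
        rw [harr]
        simp only [dS, ht, true_and, Finset.mem_powerset]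
        by_cases hc : S ∩ t.bag = K
        · rw [if_pos hc, if_pos (hc ▸ Finset.inter_subset_right), if_pos hc.symm]
        · rw [if_neg hc]
          split_ifs with h2 h3
          · exact absurd h3.symm hc
          · rfl
          · rfl
    | .forget v t, hs, hK =>
        have ht : t.isSubtree T := isSubtree_trans (subtree_forget v t) hs
        show (∑ K' ∈ t.bag.powerset,
            if K' ∩ (t.bag.erase v) = K then dS T S t K' else 0)
          = if K ∈ (t.bag.erase v).powerset then dS T S (.forget v t) K else 0
        have h1 : ∀ K' ∈ t.bag.powerset,
            (if K' ∩ (t.bag.erase v) = K then dS T S t K' else 0)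
            = if K' = S ∩ t.bag then (if K' ∩ (t.bag.erase v) = K then (1:ℝ) else 0) else 0 := by
          intro K' _
          simp only [dS, ht, true_and]
          split_ifs <;> simp_all
        rw [Finset.sum_congr rfl h1, Finset.sum_ite_eq']
        have hmem : S ∩ t.bag ∈ t.bag.powerset := by simp [Finset.inter_subset_right]
        rw [if_pos hmem]
        have harr : S ∩ t.bag ∩ (t.bag.erase v) = S ∩ (t.bag.erase v) := by
          rw [Finset.inter_assoc]; congr 1
          exact Finset.inter_eq_right.mpr (Finset.erase_subset _ _)
        rw [harr]
        simp only [dS, hs, true_and, Finset.mem_powerset, bag]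
        by_cases hc : S ∩ t.bag.erase v = K
        · rw [if_pos hc, if_pos (hc ▸ Finset.inter_subset_right), if_pos hc.symm]
        · rw [if_neg hc]
          split_ifs with h2 h3
          · exact absurd h3.symm hc
          · rfl
          · rfl
    | .join t₁ t₂, hs, hK =>
        have ht : t₁.isSubtree T := isSubtree_trans (subtree_join₁ t₁ t₂) hs
        show (if K ∈ t₁.bag.powerset then dS T S (.join t₁ t₂) K else 0)
          = if K ∈ t₁.bag.powerset then dS T S t₁ K else 0
        simp only [dS, hs, ht, true_and, bag]
  · -- j = 2
    match s, hs, hK with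
    | .leaf v, hs, hK => trivial
    | .introduce v t, hs, hK => trivial
    | .forget v t, hs, hK => trivial
    | .join t₁ t₂, hs, hK =>
        have ht : t₂.isSubtree T := isSubtree_trans (subtree_join₂ t₁ t₂) hs
        have hb : t₁.bag = t₂.bag := (valid_subtree hT hs).1
        show (if K ∈ t₁.bag.powerset then dS T S (.join t₁ t₂) K else 0)
          = if K ∈ t₂.bag.powerset then dS T S t₂ K else 0
        simp only [dS, hs, ht, true_and, bag, hb]

end
end CutEF

namespace CutEF
open NiceTree Finset Classical
variable {n : ℕ}

noncomputable section
open scoped Classical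

lemma decomp (f : NiceTree n → Finset (Fin n) → ℝ) (t : NiceTree n) :
    t.valid → AllCons f t →
    (∀ s, s.isSubtree t → ∀ K ∈ s.bag.powerset, 0 ≤ f s K) →
    ∃ w : Finset (Fin n) → ℝ, (∀ S, 0 ≤ w S) ∧ (∑ S ∈ t.verts.powerset, w S = 1) ∧
      ∀ s, s.isSubtree t → ∀ K ∈ s.bag.powerset,
        f s K = ∑ S ∈ t.verts.powerset, (if S ∩ s.bag = K then w S else 0) := by
  induction t with
  | leaf v =>
      intro hval hcons hnn
      refine ⟨fun S => if S ⊆ {v} then f (.leaf v) S else 0, ?_, ?_, ?_⟩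
      · intro S
        dsimp only
        split_ifs with h
        · exact hnn _ (subtree_refl _) S (Finset.mem_powerset.mpr h)
        · exact le_refl 0
      · show ∑ S ∈ ({v} : Finset (Fin n)).powerset, _ = 1
        have e : ∀ S ∈ ({v} : Finset (Fin n)).powerset,
            (if S ⊆ {v} then f (.leaf v) S else 0) = f (.leaf v) S := by
          intro S hS; rw [if_pos (Finset.mem_powerset.mp hS)]
        rw [Finset.sum_congr rfl e]
        exact cons_norm hcons (subtree_refl _)
      · intro s hs K hK
        rw [isSubtree] at hs; subst hs
        show f (.leaf v) K = ∑ S ∈ ({v} : Finset (Fin n)).powerset, _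
        dsimp only
        have e : ∀ S ∈ ({v} : Finset (Fin n)).powerset,
            (if S ∩ (NiceTree.leaf v).bag = K then (if S ⊆ {v} then f (.leaf v) S else 0) else 0)
              = if S = K then f (.leaf v) S else 0 := by
          intro S hS; rw [Finset.mem_powerset] at hS
          have : S ∩ (NiceTree.leaf v).bag = S := Finset.inter_eq_left.mpr hS
          rw [this, if_pos hS]
        have hK' : K ∈ ({v} : Finset (Fin n)).powerset := hK
        rw [Finset.sum_congr rfl e, Finset.sum_ite_eq', if_pos hK']
  | introduce v t ih =>
      intro hval hcons hnn
      obtain ⟨hv, hval'⟩ := hval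
      have hv' : v ∉ t.bag := fun h => hv (bag_subset_verts _ h)
      obtain ⟨w', hw0, hw1, hwm⟩ := ih hval' (allCons_mono hcons (subtree_introduce v t))
        (fun s hs K hK => hnn s (isSubtree_trans hs (subtree_introduce v t)) K hK)
      have hbag_a : (NiceTree.introduce v t).bag = insert v t.bag := rfl
      have pairsum : ∀ K, K ⊆ t.bag → f (NiceTree.introduce v t) K + f (NiceTree.introduce v t) (insert v K) = f t K := by
        intro K hK
        have h := cons_intro hcons (subtree_refl (NiceTree.introduce v t)) hK
        rw [Finset.sum_powerset_insert hv'] at h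
        have e1 : ∀ K' ∈ t.bag.powerset,
            (if K' ∩ t.bag = K then f (NiceTree.introduce v t) K' else 0) = (if K' = K then f (NiceTree.introduce v t) K' else 0) := by
          intro K' hK'; rw [Finset.mem_powerset] at hK'
          rw [Finset.inter_eq_left.mpr hK']
        have e2 : ∀ K' ∈ t.bag.powerset,
            (if (insert v K') ∩ t.bag = K then f (NiceTree.introduce v t) (insert v K') else 0)
              = (if K' = K then f (NiceTree.introduce v t) (insert v K') else 0) := by
          intro K' hK'; rw [Finset.mem_powerset] at hK'
          rw [Finset.insert_inter_of_notMem hv', Finset.inter_eq_left.mpr hK']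
        rw [Finset.sum_congr rfl e1, Finset.sum_congr rfl e2, Finset.sum_ite_eq',
          Finset.sum_ite_eq', if_pos (Finset.mem_powerset.mpr hK),
          if_pos (Finset.mem_powerset.mpr hK)] at h
        exact h
      set r0 : Finset (Fin n) → ℝ := fun K => if f t K = 0 then 1 else f (NiceTree.introduce v t) K / f t K with hr0
      set r1 : Finset (Fin n) → ℝ := fun K => if f t K = 0 then 0 else f (NiceTree.introduce v t) (insert v K) / f t K
        with hr1
      have hfa_nn : ∀ K ∈ (insert v t.bag).powerset, 0 ≤ f (NiceTree.introduce v t) K := fun K hK =>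
        hnn (NiceTree.introduce v t) (subtree_refl (NiceTree.introduce v t)) K hK
      have hft_nn : ∀ K, K ⊆ t.bag → 0 ≤ f t K := fun K hK =>
        hnn t (subtree_introduce v t) K (Finset.mem_powerset.mpr hK)
      have r0nn : ∀ K, K ⊆ t.bag → 0 ≤ r0 K := by
        intro K hK; rw [hr0]; dsimp only; split_ifs with h
        · exact zero_le_one
        · exact div_nonneg (hfa_nn K (by simp [Finset.mem_powerset]; exact hK.trans (Finset.subset_insert _ _)))
            (hft_nn K hK)
      have r1nn : ∀ K, K ⊆ t.bag → 0 ≤ r1 K := by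
        intro K hK; rw [hr1]; dsimp only; split_ifs with h
        · exact le_refl 0
        · exact div_nonneg (hfa_nn _ (by rw [Finset.mem_powerset]; exact Finset.insert_subset_insert _ hK))
            (hft_nn K hK)
      have key : ∀ S, S ⊆ t.verts →
          w' S * r0 (S ∩ t.bag) + w' S * r1 (S ∩ t.bag) = w' S := by
        intro S hS
        rw [hr0, hr1]; dsimp only
        by_cases h0 : f t (S ∩ t.bag) = 0
        · rw [if_pos h0, if_pos h0, mul_one, mul_zero, add_zero]
        · rw [if_neg h0, if_neg h0, ← mul_add, ← add_div,
            pairsum _ Finset.inter_subset_right, div_self h0, mul_one]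
      refine ⟨fun S' => if v ∈ S' then w' (S'.erase v) * r1 (S'.erase v ∩ t.bag)
          else w' S' * r0 (S' ∩ t.bag), ?_, ?_, ?_⟩
      · intro S'
        dsimp only
        split_ifs with h
        · exact mul_nonneg (hw0 _) (r1nn _ Finset.inter_subset_right)
        · exact mul_nonneg (hw0 _) (r0nn _ Finset.inter_subset_right)
      · show ∑ S' ∈ (insert v t.verts).powerset, _ = 1
        rw [Finset.sum_powerset_insert hv, ← Finset.sum_add_distrib, ← hw1]
        refine Finset.sum_congr rfl ?_
        intro S hS; rw [Finset.mem_powerset] at hS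
        have hvS : v ∉ S := fun h => hv (hS h)
        rw [if_neg hvS, if_pos (Finset.mem_insert_self v S), Finset.erase_insert hvS]
        exact key S hS
      · intro s hs K hK
        rcases hs with rfl | hs
        · -- root node
          show f (NiceTree.introduce v t) K = ∑ S' ∈ (insert v t.verts).powerset, _
          dsimp only
          rw [Finset.sum_powerset_insert hv]
          rw [Finset.mem_powerset, hbag_a] at hK
          by_cases hvK : v ∈ K
          · -- only the insert-v parts contribute
            have hKe : K.erase v ⊆ t.bag := by
              have := Finset.erase_subset_erase v hK
              rwa [Finset.erase_insert hv'] at this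
            have e1 : ∀ S ∈ t.verts.powerset,
                (if S ∩ (NiceTree.introduce v t).bag = K then (if v ∈ S then w' (S.erase v) * r1 (S.erase v ∩ t.bag)
                  else w' S * r0 (S ∩ t.bag)) else 0) = 0 := by
              intro S hS; rw [Finset.mem_powerset] at hS
              have hvS : v ∉ S := fun h => hv (hS h)
              have : S ∩ (NiceTree.introduce v t).bag = S ∩ t.bag := by
                rw [hbag_a, Finset.inter_insert_of_notMem hvS]
              rw [this, if_neg]
              intro h; exact hvS (by rw [← h] at hvK; exact (Finset.mem_inter.mp hvK).1)
            have e2 : ∀ S ∈ t.verts.powerset,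
                (if (insert v S) ∩ (NiceTree.introduce v t).bag = K then
                  (if v ∈ insert v S then w' ((insert v S).erase v) * r1 ((insert v S).erase v ∩ t.bag)
                  else w' (insert v S) * r0 ((insert v S) ∩ t.bag)) else 0)
                = (if S ∩ t.bag = K.erase v then w' S * r1 (K.erase v) else 0) := by
              intro S hS; rw [Finset.mem_powerset] at hS
              have hvS : v ∉ S := fun h => hv (hS h)
              have hvSb : v ∉ S ∩ t.bag := fun h => hv' (Finset.mem_inter.mp h).2
              have h1 : (insert v S) ∩ (NiceTree.introduce v t).bag = insert v (S ∩ t.bag) := by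
                rw [hbag_a, ← Finset.insert_inter_distrib]
              rw [h1, if_pos (Finset.mem_insert_self v S), Finset.erase_insert hvS]
              have hiff : insert v (S ∩ t.bag) = K ↔ S ∩ t.bag = K.erase v := by
                constructor
                · intro h; rw [← h, Finset.erase_insert hvSb]
                · intro h; rw [h, Finset.insert_erase hvK]
              by_cases hc : S ∩ t.bag = K.erase v
              · rw [if_pos (hiff.mpr hc), if_pos hc, hc]
              · rw [if_neg (fun h => hc (hiff.mp h)), if_neg hc]
            rw [Finset.sum_congr rfl e1, Finset.sum_congr rfl e2, Finset.sum_const_zero, zero_add]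
            have e3 : ∀ S ∈ t.verts.powerset,
                (if S ∩ t.bag = K.erase v then w' S * r1 (K.erase v) else 0)
                = (if S ∩ t.bag = K.erase v then w' S else 0) * r1 (K.erase v) := by
              intro S _; split_ifs <;> simp
            rw [Finset.sum_congr rfl e3, ← Finset.sum_mul,
              ← hwm t (subtree_refl t) (K.erase v) (Finset.mem_powerset.mpr hKe)]
            rw [hr1]; dsimp only
            by_cases h0 : f t (K.erase v) = 0
            · rw [if_pos h0, mul_zero]
              have hp := pairsum (K.erase v) hKe
              rw [Finset.insert_erase hvK] at hp
              have h1 : 0 ≤ f (NiceTree.introduce v t) (K.erase v) := hfa_nn _ (Finset.mem_powerset.mpr (hKe.trans (Finset.subset_insert _ _)))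
              have h2 : 0 ≤ f (NiceTree.introduce v t) K := hfa_nn _ (Finset.mem_powerset.mpr hK)
              rw [h0] at hp; linarith
            · rw [if_neg h0, Finset.insert_erase hvK, mul_comm, div_mul_cancel₀ _ h0]
          · -- v ∉ K
            have hKt : K ⊆ t.bag := by
              intro x hx
              rcases Finset.mem_insert.mp (hK hx) with h | h
              · exact absurd (h ▸ hx) hvK
              · exact h
            have e1 : ∀ S ∈ t.verts.powerset,
                (if S ∩ (NiceTree.introduce v t).bag = K then (if v ∈ S then w' (S.erase v) * r1 (S.erase v ∩ t.bag)
                  else w' S * r0 (S ∩ t.bag)) else 0)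
                = (if S ∩ t.bag = K then w' S else 0) * r0 K := by
              intro S hS; rw [Finset.mem_powerset] at hS
              have hvS : v ∉ S := fun h => hv (hS h)
              have h1 : S ∩ (NiceTree.introduce v t).bag = S ∩ t.bag := by
                rw [hbag_a, Finset.inter_insert_of_notMem hvS]
              rw [h1, if_neg hvS]
              by_cases hc : S ∩ t.bag = K
              · rw [if_pos hc, if_pos hc, hc]
              · rw [if_neg hc, if_neg hc, zero_mul]
            have e2 : ∀ S ∈ t.verts.powerset,
                (if (insert v S) ∩ (NiceTree.introduce v t).bag = K then
                  (if v ∈ insert v S then w' ((insert v S).erase v) * r1 ((insert v S).erase v ∩ t.bag)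
                  else w' (insert v S) * r0 ((insert v S) ∩ t.bag)) else 0) = 0 := by
              intro S hS; rw [Finset.mem_powerset] at hS
              have hvS : v ∉ S := fun h => hv (hS h)
              have h1 : (insert v S) ∩ (NiceTree.introduce v t).bag = insert v (S ∩ t.bag) := by
                rw [hbag_a, ← Finset.insert_inter_distrib]
              rw [h1, if_neg]
              intro h; exact hvK (h ▸ Finset.mem_insert_self v _)
            rw [Finset.sum_congr rfl e1, Finset.sum_congr rfl e2, Finset.sum_const_zero, add_zero,
              ← Finset.sum_mul, ← hwm t (subtree_refl t) K (Finset.mem_powerset.mpr hKt)]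
            rw [hr0]; dsimp only
            by_cases h0 : f t K = 0
            · rw [if_pos h0, h0, zero_mul]
              have hp := pairsum K hKt
              have h1 : 0 ≤ f (NiceTree.introduce v t) K := hfa_nn _ (Finset.mem_powerset.mpr hK)
              have h2 : 0 ≤ f (NiceTree.introduce v t) (insert v K) := hfa_nn _ (Finset.mem_powerset.mpr (Finset.insert_subset_insert _ hKt))
              rw [h0] at hp; linarith
            · rw [if_neg h0, mul_comm, div_mul_cancel₀ _ h0]
        · -- s a subtree of t
          have hvbs : v ∉ s.bag := fun h =>
            hv (verts_subset_of_subtree hs (bag_subset_verts s h))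
          show f s K = ∑ S' ∈ (insert v t.verts).powerset, _
          dsimp only
          rw [Finset.sum_powerset_insert hv, ← Finset.sum_add_distrib,
            hwm s hs K hK]
          refine Finset.sum_congr rfl ?_
          intro S hS; rw [Finset.mem_powerset] at hS
          have hvS : v ∉ S := fun h => hv (hS h)
          have h1 : (insert v S) ∩ s.bag = S ∩ s.bag := Finset.insert_inter_of_notMem hvbs
          rw [h1, if_neg hvS, if_pos (Finset.mem_insert_self v S), Finset.erase_insert hvS]
          by_cases hc : S ∩ s.bag = K
          · rw [if_pos hc, if_pos hc, if_pos hc]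
            exact (key S hS).symm
          · rw [if_neg hc, if_neg hc, if_neg hc, add_zero]
  | forget v t ih =>
      intro hval hcons hnn
      obtain ⟨hvb, hval'⟩ := hval
      obtain ⟨w', hw0, hw1, hwm⟩ := ih hval' (allCons_mono hcons (subtree_forget v t))
        (fun s hs K hK => hnn s (isSubtree_trans hs (subtree_forget v t)) K hK)
      have hbag_a : (NiceTree.forget v t).bag = t.bag.erase v := rfl
      refine ⟨w', hw0, hw1, ?_⟩
      intro s hs K hK
      rcases hs with rfl | hs
      · -- root
        rw [Finset.mem_powerset, hbag_a] at hK
        have h := cons_forget hcons (subtree_refl (NiceTree.forget v t)) hK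
        show f (NiceTree.forget v t) K = ∑ S ∈ t.verts.powerset, _
        rw [← h]
        have e1 : ∀ K' ∈ t.bag.powerset,
            (if K' ∩ (t.bag.erase v) = K then f t K' else 0)
            = ∑ S ∈ t.verts.powerset,
                (if S ∩ t.bag = K' then (if K' ∩ (t.bag.erase v) = K then w' S else 0) else 0) := by
          intro K' hK'
          rw [hwm t (subtree_refl t) K' hK']
          split_ifs with hc
          · rfl
          · exact (Finset.sum_eq_zero fun S _ => by simp [hc]).symm
        rw [Finset.sum_congr rfl e1, Finset.sum_comm]
        refine Finset.sum_congr rfl ?_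
        intro S hS
        have e2 : ∀ K' ∈ t.bag.powerset,
            (if S ∩ t.bag = K' then (if K' ∩ (t.bag.erase v) = K then w' S else 0) else 0)
            = (if K' = S ∩ t.bag then (if K' ∩ (t.bag.erase v) = K then w' S else 0) else 0) := by
          intro K' _
          by_cases hc : S ∩ t.bag = K'
          · rw [if_pos hc, if_pos hc.symm]
          · rw [if_neg hc, if_neg (fun h => hc h.symm)]
        rw [Finset.sum_congr rfl e2, Finset.sum_ite_eq',
          if_pos (Finset.mem_powerset.mpr Finset.inter_subset_right)]
        have : S ∩ t.bag ∩ (t.bag.erase v) = S ∩ (t.bag.erase v) := by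
          rw [Finset.inter_assoc]; congr 1
          exact Finset.inter_eq_right.mpr (Finset.erase_subset _ _)
        rw [this, hbag_a]
      · exact hwm s hs K hK
  | join t₁ t₂ ih₁ ih₂ =>
      intro hval hcons hnn
      obtain ⟨hbag, hI, hval₁, hval₂⟩ := hval
      obtain ⟨w₁, hw₁0, hw₁1, hwm₁⟩ := ih₁ hval₁ (allCons_mono hcons (subtree_join₁ t₁ t₂))
        (fun s hs K hK => hnn s (isSubtree_trans hs (subtree_join₁ t₁ t₂)) K hK)
      obtain ⟨w₂, hw₂0, hw₂1, hwm₂⟩ := ih₂ hval₂ (allCons_mono hcons (subtree_join₂ t₁ t₂))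
        (fun s hs K hK => hnn s (isSubtree_trans hs (subtree_join₂ t₁ t₂)) K hK)
      have hBV₁ : t₁.bag ⊆ t₁.verts := bag_subset_verts t₁
      have hBV₂ : t₁.bag ⊆ t₂.verts := hbag ▸ bag_subset_verts t₂
      set g : Finset (Fin n) → ℝ := fun K => if f t₁ K = 0 then 0 else (f t₁ K)⁻¹ with hg
      have hft₁nn : ∀ K, K ⊆ t₁.bag → 0 ≤ f t₁ K := fun K hK =>
        hnn t₁ (subtree_join₁ t₁ t₂) K (Finset.mem_powerset.mpr hK)
      have gnn : ∀ K, K ⊆ t₁.bag → 0 ≤ g K := by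
        intro K hK; rw [hg]; dsimp only; split_ifs with h
        · exact le_refl 0
        · exact inv_nonneg.mpr (hft₁nn K hK)
      have feq : ∀ K, K ⊆ t₁.bag → f t₁ K = f t₂ K := by
        intro K hK
        rw [← cons_join₁ hcons (subtree_refl _) hK, cons_join₂ hcons (subtree_refl _) hbag hK]
      have w₁zero : ∀ S₁, S₁ ⊆ t₁.verts → f t₁ (S₁ ∩ t₁.bag) = 0 → w₁ S₁ = 0 := by
        intro S₁ hS₁ h0
        have hm := hwm₁ t₁ (subtree_refl t₁) (S₁ ∩ t₁.bag)
          (Finset.mem_powerset.mpr Finset.inter_subset_right)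
        rw [h0] at hm
        have hnn' : ∀ S ∈ t₁.verts.powerset,
            0 ≤ (if S ∩ t₁.bag = S₁ ∩ t₁.bag then w₁ S else 0) := by
          intro S _; split_ifs; exacts [hw₁0 S, le_refl 0]
        have := (Finset.sum_eq_zero_iff_of_nonneg hnn').mp hm.symm S₁
          (Finset.mem_powerset.mpr hS₁)
        rwa [if_pos rfl] at this
      have w₂zero : ∀ S₂, S₂ ⊆ t₂.verts → f t₁ (S₂ ∩ t₁.bag) = 0 → w₂ S₂ = 0 := by
        intro S₂ hS₂ h0
        have h0' : f t₂ (S₂ ∩ t₂.bag) = 0 := by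
          rw [← hbag, ← feq _ Finset.inter_subset_right]; exact h0
        have hm := hwm₂ t₂ (subtree_refl t₂) (S₂ ∩ t₂.bag)
          (Finset.mem_powerset.mpr Finset.inter_subset_right)
        rw [h0'] at hm
        have hnn' : ∀ S ∈ t₂.verts.powerset,
            0 ≤ (if S ∩ t₂.bag = S₂ ∩ t₂.bag then w₂ S else 0) := by
          intro S _; split_ifs; exacts [hw₂0 S, le_refl 0]
        have := (Finset.sum_eq_zero_iff_of_nonneg hnn').mp hm.symm S₂
          (Finset.mem_powerset.mpr hS₂)
        rwa [if_pos rfl] at this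
      have pf₁ : ∀ S₁ S₂ W : Finset (Fin n), S₂ ⊆ t₂.verts →
          S₁ ∩ t₁.bag = S₂ ∩ t₁.bag → W ⊆ t₁.verts → (S₁ ∪ S₂) ∩ W = S₁ ∩ W := by
        intro S₁ S₂ W h2 hc hW
        rw [Finset.union_inter_distrib_right]
        refine Finset.union_eq_left.mpr ?_
        intro x hx
        have hx2 := Finset.mem_inter.mp hx
        have hxB : x ∈ t₁.bag := hI (Finset.mem_inter.mpr ⟨hW hx2.2, h2 hx2.1⟩)
        have hxS₁ : x ∈ S₁ := by
          have hx3 : x ∈ S₁ ∩ t₁.bag := hc ▸ Finset.mem_inter.mpr ⟨hx2.1, hxB⟩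
          exact (Finset.mem_inter.mp hx3).1
        exact Finset.mem_inter.mpr ⟨hxS₁, hx2.2⟩
      have pf₂ : ∀ S₁ S₂ W : Finset (Fin n), S₁ ⊆ t₁.verts →
          S₁ ∩ t₁.bag = S₂ ∩ t₁.bag → W ⊆ t₂.verts → (S₁ ∪ S₂) ∩ W = S₂ ∩ W := by
        intro S₁ S₂ W h1 hc hW
        rw [Finset.union_inter_distrib_right]
        refine Finset.union_eq_right.mpr ?_
        intro x hx
        have hx2 := Finset.mem_inter.mp hx
        have hxB : x ∈ t₁.bag := hI (Finset.mem_inter.mpr ⟨h1 hx2.1, hW hx2.2⟩)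
        have hxS₂ : x ∈ S₂ := by
          have hx3 : x ∈ S₂ ∩ t₁.bag := hc ▸ Finset.mem_inter.mpr ⟨hx2.1, hxB⟩
          exact (Finset.mem_inter.mp hx3).1
        exact Finset.mem_inter.mpr ⟨hxS₂, hx2.2⟩
      have hreidx : ∀ φ : Finset (Fin n) → ℝ,
          ∑ S ∈ (t₁.verts ∪ t₂.verts).powerset, φ S
          = ∑ S₁ ∈ t₁.verts.powerset, ∑ S₂ ∈ t₂.verts.powerset,
              (if S₁ ∩ t₁.bag = S₂ ∩ t₁.bag then φ (S₁ ∪ S₂) else 0) := by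
        intro φ
        have step1 : ∑ S ∈ (t₁.verts ∪ t₂.verts).powerset, φ S
            = ∑ p ∈ (t₁.verts.powerset ×ˢ t₂.verts.powerset).filter
                (fun p => p.1 ∩ t₁.bag = p.2 ∩ t₁.bag), φ (p.1 ∪ p.2) := by
          refine Finset.sum_nbij' (fun S => (S ∩ t₁.verts, S ∩ t₂.verts))
            (fun p => p.1 ∪ p.2) ?_ ?_ ?_ ?_ ?_
          · intro S hS
            rw [Finset.mem_powerset] at hS
            rw [Finset.mem_filter, Finset.mem_product]
            refine ⟨⟨Finset.mem_powerset.mpr Finset.inter_subset_right,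
              Finset.mem_powerset.mpr Finset.inter_subset_right⟩, ?_⟩
            dsimp only
            rw [Finset.inter_assoc, Finset.inter_assoc,
              Finset.inter_eq_right.mpr hBV₁, Finset.inter_eq_right.mpr hBV₂]
          · intro p hp
            rw [Finset.mem_filter, Finset.mem_product] at hp
            rw [Finset.mem_powerset]
            exact Finset.union_subset_union (Finset.mem_powerset.mp hp.1.1)
              (Finset.mem_powerset.mp hp.1.2)
          · intro S hS
            rw [Finset.mem_powerset] at hS
            dsimp only
            rw [← Finset.inter_union_distrib_left]
            exact Finset.inter_eq_left.mpr hS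
          · intro p hp
            rw [Finset.mem_filter, Finset.mem_product] at hp
            obtain ⟨⟨h1, h2⟩, hc⟩ := hp
            rw [Finset.mem_powerset] at h1 h2
            have u1 : (p.1 ∪ p.2) ∩ t₁.verts = p.1 := by
              rw [pf₁ p.1 p.2 t₁.verts h2 hc subset_rfl]
              exact Finset.inter_eq_left.mpr h1
            have u2 : (p.1 ∪ p.2) ∩ t₂.verts = p.2 := by
              rw [pf₂ p.1 p.2 t₂.verts h1 hc subset_rfl]
              exact Finset.inter_eq_left.mpr h2
            rw [u1, u2]
          · intro S hS
            rw [Finset.mem_powerset] at hS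
            dsimp only
            rw [← Finset.inter_union_distrib_left, Finset.inter_eq_left.mpr hS]
        rw [step1, Finset.sum_filter, Finset.sum_product]
      have marg₁ : ∀ s, s.isSubtree t₁ → ∀ K ∈ s.bag.powerset,
          ∑ S ∈ (t₁.verts ∪ t₂.verts).powerset,
            (if S ∩ s.bag = K then
              w₁ (S ∩ t₁.verts) * w₂ (S ∩ t₂.verts) * g (S ∩ t₁.bag) else 0) = f s K := by
        intro s hs K hK
        have hbs : s.bag ⊆ t₁.verts := (bag_subset_verts s).trans (verts_subset_of_subtree hs)
        rw [hreidx]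
        have e : ∀ S₁ ∈ t₁.verts.powerset, ∀ S₂ ∈ t₂.verts.powerset,
            (if S₁ ∩ t₁.bag = S₂ ∩ t₁.bag then
              (if (S₁ ∪ S₂) ∩ s.bag = K then
                w₁ ((S₁ ∪ S₂) ∩ t₁.verts) * w₂ ((S₁ ∪ S₂) ∩ t₂.verts)
                  * g ((S₁ ∪ S₂) ∩ t₁.bag) else 0) else 0)
            = (if S₁ ∩ s.bag = K then
                (w₁ S₁ * g (S₁ ∩ t₁.bag)) * (if S₂ ∩ t₂.bag = S₁ ∩ t₁.bag then w₂ S₂ else 0)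
              else 0) := by
          intro S₁ h1 S₂ h2; rw [Finset.mem_powerset] at h1 h2
          by_cases hc : S₁ ∩ t₁.bag = S₂ ∩ t₁.bag
          · rw [if_pos hc]
            have u1 : (S₁ ∪ S₂) ∩ t₁.verts = S₁ := by
              rw [pf₁ S₁ S₂ t₁.verts h2 hc subset_rfl]
              exact Finset.inter_eq_left.mpr h1
            have u2 : (S₁ ∪ S₂) ∩ t₂.verts = S₂ := by
              rw [pf₂ S₁ S₂ t₂.verts h1 hc subset_rfl]
              exact Finset.inter_eq_left.mpr h2
            have u3 : (S₁ ∪ S₂) ∩ t₁.bag = S₁ ∩ t₁.bag := pf₁ S₁ S₂ t₁.bag h2 hc hBV₁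
            have u4 : (S₁ ∪ S₂) ∩ s.bag = S₁ ∩ s.bag := pf₁ S₁ S₂ s.bag h2 hc hbs
            rw [u1, u2, u3, u4]
            have hc2 : S₂ ∩ t₂.bag = S₁ ∩ t₁.bag := by rw [← hbag, ← hc]
            rw [if_pos hc2]
            split_ifs <;> ring
          · rw [if_neg hc]
            have hc2 : ¬ (S₂ ∩ t₂.bag = S₁ ∩ t₁.bag) := by
              rw [← hbag]; exact fun h => hc h.symm
            rw [if_neg hc2]
            split_ifs <;> simp
        rw [Finset.sum_congr rfl (fun S₁ h1 => Finset.sum_congr rfl (fun S₂ h2 => e S₁ h1 S₂ h2))]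
        have e2 : ∀ S₁ ∈ t₁.verts.powerset,
            (∑ S₂ ∈ t₂.verts.powerset,
              (if S₁ ∩ s.bag = K then
                (w₁ S₁ * g (S₁ ∩ t₁.bag)) * (if S₂ ∩ t₂.bag = S₁ ∩ t₁.bag then w₂ S₂ else 0)
              else 0))
            = (if S₁ ∩ s.bag = K then w₁ S₁ else 0) := by
          intro S₁ h1; rw [Finset.mem_powerset] at h1
          by_cases hc : S₁ ∩ s.bag = K
          · rw [Finset.sum_congr rfl (fun S₂ _ => if_pos hc), ← Finset.mul_sum, if_pos hc]
            have hmem : S₁ ∩ t₁.bag ∈ t₂.bag.powerset := by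
              rw [Finset.mem_powerset, ← hbag]; exact Finset.inter_subset_right
            have hm := hwm₂ t₂ (subtree_refl t₂) (S₁ ∩ t₁.bag) hmem
            rw [← hm, ← feq _ Finset.inter_subset_right]
            by_cases h0 : f t₁ (S₁ ∩ t₁.bag) = 0
            · rw [w₁zero S₁ h1 h0]; simp
            · rw [hg]; dsimp only; rw [if_neg h0, mul_assoc, inv_mul_cancel₀ h0, mul_one]
          · rw [Finset.sum_congr rfl (fun S₂ _ => if_neg hc), Finset.sum_const_zero, if_neg hc]
        rw [Finset.sum_congr rfl e2, ← hwm₁ s hs K hK]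
      have marg₂ : ∀ s, s.isSubtree t₂ → ∀ K ∈ s.bag.powerset,
          ∑ S ∈ (t₁.verts ∪ t₂.verts).powerset,
            (if S ∩ s.bag = K then
              w₁ (S ∩ t₁.verts) * w₂ (S ∩ t₂.verts) * g (S ∩ t₁.bag) else 0) = f s K := by
        intro s hs K hK
        have hbs : s.bag ⊆ t₂.verts := (bag_subset_verts s).trans (verts_subset_of_subtree hs)
        rw [hreidx, Finset.sum_comm]
        have e : ∀ S₂ ∈ t₂.verts.powerset, ∀ S₁ ∈ t₁.verts.powerset,
            (if S₁ ∩ t₁.bag = S₂ ∩ t₁.bag then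
              (if (S₁ ∪ S₂) ∩ s.bag = K then
                w₁ ((S₁ ∪ S₂) ∩ t₁.verts) * w₂ ((S₁ ∪ S₂) ∩ t₂.verts)
                  * g ((S₁ ∪ S₂) ∩ t₁.bag) else 0) else 0)
            = (if S₂ ∩ s.bag = K then
                (w₂ S₂ * g (S₂ ∩ t₁.bag)) * (if S₁ ∩ t₁.bag = S₂ ∩ t₁.bag then w₁ S₁ else 0)
              else 0) := by
          intro S₂ h2 S₁ h1; rw [Finset.mem_powerset] at h1 h2
          by_cases hc : S₁ ∩ t₁.bag = S₂ ∩ t₁.bag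
          · rw [if_pos hc]
            have u1 : (S₁ ∪ S₂) ∩ t₁.verts = S₁ := by
              rw [pf₁ S₁ S₂ t₁.verts h2 hc subset_rfl]
              exact Finset.inter_eq_left.mpr h1
            have u2 : (S₁ ∪ S₂) ∩ t₂.verts = S₂ := by
              rw [pf₂ S₁ S₂ t₂.verts h1 hc subset_rfl]
              exact Finset.inter_eq_left.mpr h2
            have u3 : (S₁ ∪ S₂) ∩ t₁.bag = S₂ ∩ t₁.bag := by
              rw [pf₁ S₁ S₂ t₁.bag h2 hc hBV₁, hc]
            have u4 : (S₁ ∪ S₂) ∩ s.bag = S₂ ∩ s.bag := pf₂ S₁ S₂ s.bag h1 hc hbs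
            rw [u1, u2, u3, u4, if_pos hc]
            split_ifs <;> ring
          · rw [if_neg hc, if_neg hc]
            split_ifs <;> simp
        rw [Finset.sum_congr rfl (fun S₂ h2 => Finset.sum_congr rfl (fun S₁ h1 => e S₂ h2 S₁ h1))]
        have e2 : ∀ S₂ ∈ t₂.verts.powerset,
            (∑ S₁ ∈ t₁.verts.powerset,
              (if S₂ ∩ s.bag = K then
                (w₂ S₂ * g (S₂ ∩ t₁.bag)) * (if S₁ ∩ t₁.bag = S₂ ∩ t₁.bag then w₁ S₁ else 0)
              else 0))
            = (if S₂ ∩ s.bag = K then w₂ S₂ else 0) := by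
          intro S₂ h2; rw [Finset.mem_powerset] at h2
          by_cases hc : S₂ ∩ s.bag = K
          · rw [Finset.sum_congr rfl (fun S₁ _ => if_pos hc), ← Finset.mul_sum, if_pos hc]
            have hmem : S₂ ∩ t₁.bag ∈ t₁.bag.powerset :=
              Finset.mem_powerset.mpr Finset.inter_subset_right
            have hm := hwm₁ t₁ (subtree_refl t₁) (S₂ ∩ t₁.bag) hmem
            rw [← hm]
            by_cases h0 : f t₁ (S₂ ∩ t₁.bag) = 0
            · rw [w₂zero S₂ h2 h0]; simp
            · rw [hg]; dsimp only; rw [if_neg h0, mul_assoc, inv_mul_cancel₀ h0, mul_one]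
          · rw [Finset.sum_congr rfl (fun S₁ _ => if_neg hc), Finset.sum_const_zero, if_neg hc]
        rw [Finset.sum_congr rfl e2, ← hwm₂ s hs K hK]
      refine ⟨fun S => w₁ (S ∩ t₁.verts) * w₂ (S ∩ t₂.verts) * g (S ∩ t₁.bag), ?_, ?_, ?_⟩
      · intro S
        dsimp only
        exact mul_nonneg (mul_nonneg (hw₁0 _) (hw₂0 _)) (gnn _ Finset.inter_subset_right)
      · show ∑ S ∈ (t₁.verts ∪ t₂.verts).powerset, _ = 1
        have e : ∀ S ∈ (t₁.verts ∪ t₂.verts).powerset,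
            w₁ (S ∩ t₁.verts) * w₂ (S ∩ t₂.verts) * g (S ∩ t₁.bag)
            = ∑ K ∈ t₁.bag.powerset, (if S ∩ t₁.bag = K then
                w₁ (S ∩ t₁.verts) * w₂ (S ∩ t₂.verts) * g (S ∩ t₁.bag) else 0) := by
          intro S _
          rw [Finset.sum_ite_eq,
            if_pos (Finset.mem_powerset.mpr Finset.inter_subset_right)]
        rw [Finset.sum_congr rfl e, Finset.sum_comm,
          Finset.sum_congr rfl (fun K hK => marg₁ t₁ (subtree_refl t₁) K hK)]
        exact cons_norm hcons (subtree_join₁ t₁ t₂)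
      · intro s hs K hK
        rcases hs with rfl | hs | hs
        · show f (NiceTree.join t₁ t₂) K
            = ∑ S ∈ (t₁.verts ∪ t₂.verts).powerset, (if S ∩ t₁.bag = K then _ else 0)
          rw [cons_join₁ hcons (subtree_refl _) (Finset.mem_powerset.mp hK)]
          exact (marg₁ t₁ (subtree_refl t₁) K hK).symm
        · show f s K = ∑ S ∈ (t₁.verts ∪ t₂.verts).powerset, _
          dsimp only
          exact (marg₁ s hs K hK).symm
        · show f s K = ∑ S ∈ (t₁.verts ∪ t₂.verts).powerset, _
          dsimp only
          exact (marg₂ s hs K hK).symm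

end
end CutEF

namespace CutEF
open NiceTree Finset Classical
variable {n : ℕ}

noncomputable section
open scoped Classical

def Idx (T : NiceTree n) : Finset (Σ _ : NiceTree n, Finset (Fin n)) :=
  (nodesF T).sigma (fun s => s.bag.powerset)

def mm (T : NiceTree n) : ℕ := (Idx T).card

def colE (T : NiceTree n) : Fin (mm T) ≃ {x // x ∈ Idx T} := (Idx T).equivFin.symm

def F (T : NiceTree n) (x : Fin (mm T) → ℝ) : NiceTree n → Finset (Fin n) → ℝ :=
  fun s K => if h : (⟨s, K⟩ : Σ _ : NiceTree n, Finset (Fin n)) ∈ Idx T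
    then x ((Idx T).equivFin ⟨⟨s, K⟩, h⟩) else 0

lemma F_apply_colE (T : NiceTree n) (x : Fin (mm T) → ℝ) (j : Fin (mm T)) :
    F T x ((colE T j).1.1) ((colE T j).1.2) = x j := by
  rw [F]
  have h2 : (⟨(colE T j).1.1, (colE T j).1.2⟩ : Σ _ : NiceTree n, Finset (Fin n)) ∈ Idx T :=
    (colE T j).2
  rw [dif_pos h2]
  congr 1
  show (Idx T).equivFin (colE T j) = j
  exact (Idx T).equivFin.apply_symm_apply j

lemma F_nonneg (T : NiceTree n) (x : Fin (mm T) → ℝ) (hx : ∀ j, 0 ≤ x j) (s : NiceTree n)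
    (K : Finset (Fin n)) : 0 ≤ F T x s K := by
  rw [F]
  split_ifs with h
  · exact hx _
  · exact le_refl 0

lemma sum_Idx (T : NiceTree n) (ψ : (Σ _ : NiceTree n, Finset (Fin n)) → ℝ)
    (x : Fin (mm T) → ℝ) :
    ∑ j : Fin (mm T), ψ (colE T j).1 * x j
      = ∑ s ∈ nodesF T, ∑ K ∈ s.bag.powerset, ψ ⟨s, K⟩ * F T x s K := by
  have h1 : ∑ j : Fin (mm T), ψ (colE T j).1 * x j
      = ∑ p ∈ Idx T, ψ p * F T x p.1 p.2 := by
    rw [← Finset.sum_coe_sort (Idx T) (fun p => ψ p * F T x p.1 p.2),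
      ← Equiv.sum_comp (colE T) (fun p : {p // p ∈ Idx T} => ψ p.1 * F T x p.1.1 p.1.2)]
    refine Finset.sum_congr rfl fun j _ => ?_
    rw [F_apply_colE T x j]
  rw [h1, Idx, Finset.sum_sigma]

lemma collapseA (T : NiceTree n) (x : Fin (mm T) → ℝ) (s : NiceTree n) (hs : s ∈ nodesF T) :
    ∑ s' ∈ nodesF T, ∑ K' ∈ s'.bag.powerset, (if s' = s then (1:ℝ) else 0) * F T x s' K'
      = ∑ K' ∈ s.bag.powerset, F T x s K' := by
  have e : ∀ s' ∈ nodesF T,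
      (∑ K' ∈ s'.bag.powerset, (if s' = s then (1:ℝ) else 0) * F T x s' K')
        = if s' = s then ∑ K' ∈ s.bag.powerset, F T x s K' else 0 := by
    intro s' _
    by_cases h : s' = s
    · subst h
      have e2 : ∀ K' ∈ s'.bag.powerset,
          (if s' = s' then (1:ℝ) else 0) * F T x s' K' = F T x s' K' := fun K' _ => by
        rw [if_pos rfl, one_mul]
      rw [Finset.sum_congr rfl e2, if_pos rfl]
    · have e2 : ∀ K' ∈ s'.bag.powerset,
          (if s' = s then (1:ℝ) else 0) * F T x s' K' = 0 := fun K' _ => by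
        rw [if_neg h, zero_mul]
      rw [Finset.sum_congr rfl e2, Finset.sum_const_zero, if_neg h]
  rw [Finset.sum_congr rfl e, Finset.sum_ite_eq', if_pos hs]

lemma collapseB (T : NiceTree n) (x : Fin (mm T) → ℝ) (s : NiceTree n) (hs : s ∈ nodesF T)
    (W K : Finset (Fin n)) :
    ∑ s' ∈ nodesF T, ∑ K' ∈ s'.bag.powerset,
        (if s' = s ∧ K' ∩ W = K then (1:ℝ) else 0) * F T x s' K'
      = ∑ K' ∈ s.bag.powerset, (if K' ∩ W = K then F T x s K' else 0) := by
  have e : ∀ s' ∈ nodesF T,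
      (∑ K' ∈ s'.bag.powerset, (if s' = s ∧ K' ∩ W = K then (1:ℝ) else 0) * F T x s' K')
        = if s' = s then (∑ K' ∈ s.bag.powerset, if K' ∩ W = K then F T x s K' else 0)
          else 0 := by
    intro s' _
    by_cases h1 : s' = s
    · subst h1
      rw [if_pos rfl]
      refine Finset.sum_congr rfl fun K' _ => ?_
      by_cases h2 : K' ∩ W = K
      · rw [if_pos ⟨rfl, h2⟩, if_pos h2, one_mul]
      · rw [if_neg (fun h => h2 h.2), if_neg h2, zero_mul]
    · rw [if_neg h1]
      refine Finset.sum_eq_zero fun K' _ => ?_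
      rw [if_neg (fun h => h1 h.1), zero_mul]
  rw [Finset.sum_congr rfl e, Finset.sum_ite_eq', if_pos hs]

lemma collapseC (T : NiceTree n) (x : Fin (mm T) → ℝ) (s : NiceTree n) (hs : s ∈ nodesF T)
    (K : Finset (Fin n)) :
    ∑ s' ∈ nodesF T, ∑ K' ∈ s'.bag.powerset,
        (if s' = s ∧ K' = K then (1:ℝ) else 0) * F T x s' K'
      = if K ∈ s.bag.powerset then F T x s K else 0 := by
  have e : ∀ s' ∈ nodesF T,
      (∑ K' ∈ s'.bag.powerset, (if s' = s ∧ K' = K then (1:ℝ) else 0) * F T x s' K')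
        = if s' = s then (if K ∈ s.bag.powerset then F T x s K else 0) else 0 := by
    intro s' _
    by_cases h1 : s' = s
    · subst h1
      rw [if_pos rfl]
      have e2 : ∀ K' ∈ s'.bag.powerset,
          (if s' = s' ∧ K' = K then (1:ℝ) else 0) * F T x s' K'
            = if K' = K then F T x s' K' else 0 := by
        intro K' _
        by_cases h2 : K' = K
        · rw [if_pos ⟨rfl, h2⟩, if_pos h2, one_mul]
        · rw [if_neg (fun h => h2 h.2), if_neg h2, zero_mul]
      rw [Finset.sum_congr rfl e2, Finset.sum_ite_eq']
    · rw [if_neg h1]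
      refine Finset.sum_eq_zero fun K' _ => ?_
      rw [if_neg (fun h => h1 h.1), zero_mul]
  rw [Finset.sum_congr rfl e, Finset.sum_ite_eq', if_pos hs]

def coefC (s : NiceTree n) (K : Finset (Fin n)) (j3 : Fin 3)
    (p : Σ _ : NiceTree n, Finset (Fin n)) : ℝ :=
  if j3 = 0 then (if p.1 = s then 1 else 0)
  else if j3 = 1 then
    match s with
    | .leaf _ => 0
    | .introduce v t =>
        (if p.1 = NiceTree.introduce v t ∧ p.2 ∩ t.bag = K then (1:ℝ) else 0)
          - (if p.1 = t ∧ p.2 = K then 1 else 0)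
    | .forget v t =>
        (if p.1 = t ∧ p.2 ∩ (t.bag.erase v) = K then (1:ℝ) else 0)
          - (if p.1 = NiceTree.forget v t ∧ p.2 = K then 1 else 0)
    | .join t₁ t₂ =>
        (if p.1 = NiceTree.join t₁ t₂ ∧ p.2 = K then (1:ℝ) else 0)
          - (if p.1 = t₁ ∧ p.2 = K then 1 else 0)
  else
    match s with
    | .join t₁ t₂ =>
        (if p.1 = NiceTree.join t₁ t₂ ∧ p.2 = K then (1:ℝ) else 0)
          - (if p.1 = t₂ ∧ p.2 = K then 1 else 0)
    | _ => 0

def rhsC (j3 : Fin 3) : ℝ := if j3 = 0 then 1 else 0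

lemma row_eval (T : NiceTree n) (x : Fin (mm T) → ℝ) (s : NiceTree n) (hs : s ∈ nodesF T)
    (K : Finset (Fin n)) (j3 : Fin 3) :
    ((∑ j : Fin (mm T), coefC s K j3 (colE T j).1 * x j = rhsC j3))
      ↔ LocalEq (F T x) s K j3 := by
  rw [sum_Idx T (coefC s K j3) x]
  by_cases h0 : j3 = 0
  case pos =>
    subst h0
    -- j3 = 0
    have hc : ∀ (s' : NiceTree n) (K' : Finset (Fin n)),
        coefC s K 0 (⟨s', K'⟩ : Σ _ : NiceTree n, Finset (Fin n))
          = if s' = s then (1:ℝ) else 0 := fun _ _ => rfl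
    simp only [hc]
    rw [collapseA T x s hs]
    exact Iff.rfl
  case neg =>
  by_cases h1 : j3 = 1
  case pos =>
    subst h1
    -- j3 = 1
    cases s with
    | leaf v =>
        have hc : ∀ (s' : NiceTree n) (K' : Finset (Fin n)),
            coefC (NiceTree.leaf v) K 1 (⟨s', K'⟩ : Σ _ : NiceTree n, Finset (Fin n))
              = 0 := fun _ _ => rfl
        simp only [hc, zero_mul, Finset.sum_const_zero]
        exact iff_of_true rfl trivial
    | introduce v t =>
        have ht : t ∈ nodesF T :=
          mem_nodesF.mpr (isSubtree_trans (subtree_introduce v t) (mem_nodesF.mp hs))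
        have hc : ∀ (s' : NiceTree n) (K' : Finset (Fin n)),
            coefC (NiceTree.introduce v t) K 1 (⟨s', K'⟩ : Σ _ : NiceTree n, Finset (Fin n))
            = (if s' = NiceTree.introduce v t ∧ K' ∩ t.bag = K then (1:ℝ) else 0)
              - (if s' = t ∧ K' = K then 1 else 0) := fun _ _ => rfl
        simp only [hc, sub_mul, Finset.sum_sub_distrib]
        rw [collapseB T x _ hs t.bag K, collapseC T x t ht K]
        rw [show rhsC 1 = (0:ℝ) from rfl, sub_eq_zero]
        exact Iff.rfl
    | forget v t =>
        have ht : t ∈ nodesF T :=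
          mem_nodesF.mpr (isSubtree_trans (subtree_forget v t) (mem_nodesF.mp hs))
        have hc : ∀ (s' : NiceTree n) (K' : Finset (Fin n)),
            coefC (NiceTree.forget v t) K 1 (⟨s', K'⟩ : Σ _ : NiceTree n, Finset (Fin n))
            = (if s' = t ∧ K' ∩ (t.bag.erase v) = K then (1:ℝ) else 0)
              - (if s' = NiceTree.forget v t ∧ K' = K then 1 else 0) := fun _ _ => rfl
        simp only [hc, sub_mul, Finset.sum_sub_distrib]
        rw [collapseB T x t ht (t.bag.erase v) K, collapseC T x _ hs K]
        rw [show rhsC 1 = (0:ℝ) from rfl, sub_eq_zero]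
        exact Iff.rfl
    | join t₁ t₂ =>
        have ht : t₁ ∈ nodesF T :=
          mem_nodesF.mpr (isSubtree_trans (subtree_join₁ t₁ t₂) (mem_nodesF.mp hs))
        have hc : ∀ (s' : NiceTree n) (K' : Finset (Fin n)),
            coefC (NiceTree.join t₁ t₂) K 1 (⟨s', K'⟩ : Σ _ : NiceTree n, Finset (Fin n))
            = (if s' = NiceTree.join t₁ t₂ ∧ K' = K then (1:ℝ) else 0)
              - (if s' = t₁ ∧ K' = K then 1 else 0) := fun _ _ => rfl
        simp only [hc, sub_mul, Finset.sum_sub_distrib]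
        rw [collapseC T x _ hs K, collapseC T x t₁ ht K]
        rw [show rhsC 1 = (0:ℝ) from rfl, sub_eq_zero]
        exact Iff.rfl
  case neg =>
    have h2 : j3 = 2 := by
      have hlt := j3.isLt
      simp only [Fin.ext_iff] at h0 h1 ⊢
      omega
    subst h2
    -- j3 = 2
    cases s with
    | leaf v =>
        have hc : ∀ (s' : NiceTree n) (K' : Finset (Fin n)),
            coefC (NiceTree.leaf v) K 2 (⟨s', K'⟩ : Σ _ : NiceTree n, Finset (Fin n))
              = 0 := fun _ _ => rfl
        simp only [hc, zero_mul, Finset.sum_const_zero]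
        exact iff_of_true rfl trivial
    | introduce v t =>
        have hc : ∀ (s' : NiceTree n) (K' : Finset (Fin n)),
            coefC (NiceTree.introduce v t) K 2 (⟨s', K'⟩ : Σ _ : NiceTree n, Finset (Fin n))
              = 0 := fun _ _ => rfl
        simp only [hc, zero_mul, Finset.sum_const_zero]
        exact iff_of_true rfl trivial
    | forget v t =>
        have hc : ∀ (s' : NiceTree n) (K' : Finset (Fin n)),
            coefC (NiceTree.forget v t) K 2 (⟨s', K'⟩ : Σ _ : NiceTree n, Finset (Fin n))
              = 0 := fun _ _ => rfl
        simp only [hc, zero_mul, Finset.sum_const_zero]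
        exact iff_of_true rfl trivial
    | join t₁ t₂ =>
        have ht : t₂ ∈ nodesF T :=
          mem_nodesF.mpr (isSubtree_trans (subtree_join₂ t₁ t₂) (mem_nodesF.mp hs))
        have hc : ∀ (s' : NiceTree n) (K' : Finset (Fin n)),
            coefC (NiceTree.join t₁ t₂) K 2 (⟨s', K'⟩ : Σ _ : NiceTree n, Finset (Fin n))
            = (if s' = NiceTree.join t₁ t₂ ∧ K' = K then (1:ℝ) else 0)
              - (if s' = t₂ ∧ K' = K then 1 else 0) := fun _ _ => rfl
        simp only [hc, sub_mul, Finset.sum_sub_distrib]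
        rw [collapseC T x _ hs K, collapseC T x t₂ ht K]
        rw [show rhsC 2 = (0:ℝ) from rfl, sub_eq_zero]
        exact Iff.rfl

def EqIdx (T : NiceTree n) : Finset (Σ _ : NiceTree n, Finset (Fin n) × Fin 3) :=
  (nodesF T).sigma (fun s => s.bag.powerset ×ˢ (Finset.univ : Finset (Fin 3)))

def qq (T : NiceTree n) : ℕ := (EqIdx T).card

def rowE (T : NiceTree n) : Fin (qq T) ≃ {e // e ∈ EqIdx T} := (EqIdx T).equivFin.symm

def Cmat (T : NiceTree n) : Matrix (Fin (qq T)) (Fin (mm T)) ℝ :=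
  fun i j => coefC (rowE T i).1.1 (rowE T i).1.2.1 (rowE T i).1.2.2 (colE T j).1

def dvec (T : NiceTree n) : Fin (qq T) → ℝ := fun i => rhsC (rowE T i).1.2.2

lemma Cmat_iff (T : NiceTree n) (x : Fin (mm T) → ℝ) :
    (Cmat T).mulVec x = dvec T ↔ AllCons (F T x) T := by
  constructor
  · intro h s hs K hK j3
    have he : (⟨s, (K, j3)⟩ : Σ _ : NiceTree n, Finset (Fin n) × Fin 3) ∈ EqIdx T :=
      Finset.mem_sigma.mpr ⟨mem_nodesF.mpr hs,
        Finset.mem_product.mpr ⟨hK, Finset.mem_univ _⟩⟩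
    have hv := congrFun h ((rowE T).symm ⟨_, he⟩)
    simp only [Matrix.mulVec, dotProduct, Cmat, dvec, Equiv.apply_symm_apply] at hv
    exact (row_eval T x s (mem_nodesF.mpr hs) K j3).mp hv
  · intro h
    funext i
    rcases hre : rowE T i with ⟨⟨s, K, j3⟩, he⟩
    have hmem := Finset.mem_sigma.mp he
    have hKmem := (Finset.mem_product.mp hmem.2).1
    show Matrix.mulVec _ x i = _
    simp only [Matrix.mulVec, dotProduct, Cmat, dvec, hre]
    exact (row_eval T x s hmem.1 K j3).mpr (h s (mem_nodesF.mp hmem.1) K hKmem j3)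

end
end CutEF

namespace CutEF
open NiceTree Finset Classical
variable {n : ℕ}

noncomputable section
open scoped Classical

def xS (T : NiceTree n) (S : Finset (Fin n)) : Fin (mm T) → ℝ :=
  fun j => if (colE T j).1.2 = S ∩ (colE T j).1.1.bag then 1 else 0

lemma xS_nonneg (T : NiceTree n) (S : Finset (Fin n)) (j : Fin (mm T)) : 0 ≤ xS T S j := by
  rw [xS]; split_ifs
  · exact zero_le_one
  · exact le_refl 0

lemma F_xS (T : NiceTree n) (S : Finset (Fin n)) (s : NiceTree n) (K : Finset (Fin n)) :
    F T (xS T S) s K = dS T S s K := by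
  rw [F, dS]
  by_cases h1 : (⟨s, K⟩ : Σ _ : NiceTree n, Finset (Fin n)) ∈ Idx T
  · rw [dif_pos h1]; simp only [xS]
    have hcol : colE T ((Idx T).equivFin ⟨⟨s, K⟩, h1⟩) = ⟨⟨s, K⟩, h1⟩ :=
      (Idx T).equivFin.symm_apply_apply _
    rw [hcol]
    have hsub : s.isSubtree T := mem_nodesF.mp (Finset.mem_sigma.mp h1).1
    by_cases h2 : K = S ∩ s.bag
    · rw [if_pos h2, if_pos ⟨hsub, h2⟩]
    · rw [if_neg h2, if_neg (fun h => h2 h.2)]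
  · rw [dif_neg h1]
    have h3 : ¬ (s.isSubtree T ∧ K = S ∩ s.bag) := by
      rintro ⟨ha, hb⟩
      exact h1 (Finset.mem_sigma.mpr ⟨mem_nodesF.mpr ha,
        Finset.mem_powerset.mpr (hb ▸ Finset.inter_subset_right)⟩)
    rw [if_neg h3]

lemma F_xS_funext (T : NiceTree n) (S : Finset (Fin n)) : F T (xS T S) = dS T S :=
  funext fun s => funext fun K => F_xS T S s K

lemma F_add (T : NiceTree n) (x y : Fin (mm T) → ℝ) (s : NiceTree n) (K : Finset (Fin n)) :
    F T (x + y) s K = F T x s K + F T y s K := by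
  rw [F, F, F]
  split_ifs with h
  · rfl
  · rw [add_zero]

lemma F_smul (T : NiceTree n) (c : ℝ) (x : Fin (mm T) → ℝ) (s : NiceTree n)
    (K : Finset (Fin n)) : F T (c • x) s K = c * F T x s K := by
  rw [F, F]
  split_ifs with h
  · rfl
  · rw [mul_zero]

def feas (T : NiceTree n) : Set (Fin (mm T) → ℝ) :=
  {x | (-(1 : Matrix (Fin (mm T)) (Fin (mm T)) ℝ)).mulVec x ≤ 0 ∧ (Cmat T).mulVec x = dvec T}

lemma feas_iff (T : NiceTree n) (x : Fin (mm T) → ℝ) :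
    x ∈ feas T ↔ (∀ j, 0 ≤ x j) ∧ AllCons (F T x) T := by
  constructor
  · rintro ⟨h1, h2⟩
    refine ⟨fun j => ?_, (Cmat_iff T x).mp h2⟩
    have h3 := h1 j
    rw [Matrix.neg_mulVec, Matrix.one_mulVec] at h3
    simpa using h3
  · rintro ⟨h1, h2⟩
    constructor
    · rw [Matrix.neg_mulVec, Matrix.one_mulVec]
      intro j
      simpa using h1 j
    · exact (Cmat_iff T x).mpr h2

lemma feas_convex (T : NiceTree n) : Convex ℝ (feas T) := by
  rintro x ⟨hx1, hx2⟩ y ⟨hy1, hy2⟩ a b ha hb hab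
  constructor
  · rw [Matrix.mulVec_add, Matrix.mulVec_smul, Matrix.mulVec_smul]
    intro j
    have h1 := hx1 j
    have h2 := hy1 j
    simp only [Pi.add_apply, Pi.smul_apply, smul_eq_mul, Pi.zero_apply] at h1 h2 ⊢
    nlinarith
  · rw [Matrix.mulVec_add, Matrix.mulVec_smul, Matrix.mulVec_smul, hx2, hy2, ← add_smul,
      hab, one_smul]

lemma feas_eq_hull (T : NiceTree n) (hT : T.valid) :
    feas T = convexHull ℝ (Set.range (xS T)) := by
  apply Set.Subset.antisymm
  · intro x hx
    obtain ⟨hx0, hxc⟩ := (feas_iff T x).mp hx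
    obtain ⟨w, hw0, hw1, hwm⟩ := decomp (F T x) T hT hxc
      (fun s _ K _ => F_nonneg T x hx0 s K)
    have hxeq : x = T.verts.powerset.centerMass w (fun S => xS T S) := by
      rw [Finset.centerMass, hw1, inv_one, one_smul]
      funext j
      rw [Finset.sum_apply]
      have hmem := (colE T j).2
      have hsig := Finset.mem_sigma.mp hmem
      have hd := hwm ((colE T j).1.1) (mem_nodesF.mp hsig.1) ((colE T j).1.2) hsig.2
      rw [← F_apply_colE T x j, hd]
      refine Finset.sum_congr rfl fun S _ => ?_
      rw [Pi.smul_apply, smul_eq_mul, xS]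
      by_cases hc : S ∩ ((colE T j).1.1).bag = (colE T j).1.2
      · rw [if_pos hc, if_pos hc.symm, mul_one]
      · rw [if_neg hc, if_neg (fun h => hc h.symm), mul_zero]
    rw [hxeq]
    exact Finset.centerMass_mem_convexHull _ (fun S _ => hw0 S) (by rw [hw1]; norm_num)
      (fun S _ => Set.mem_range_self S)
  · refine convexHull_min ?_ (feas_convex T)
    rintro y ⟨S, rfl⟩
    exact (feas_iff T (xS T S)).mpr ⟨xS_nonneg T S, by
      rw [F_xS_funext]; exact dS_allCons T hT S⟩

lemma mm_card (T : NiceTree n) (τ : ℕ) (hb : ∀ s : NiceTree n, s.isSubtree T → s.bag.card ≤ τ + 1) :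
    mm T ≤ 2 ^ (τ + 1) * T.size := by
  rw [mm, Idx, Finset.card_sigma]
  have h1 : ∀ s ∈ nodesF T, s.bag.powerset.card ≤ 2 ^ (τ + 1) := by
    intro s hs
    rw [Finset.card_powerset]
    exact Nat.pow_le_pow_right (by norm_num) (hb s (mem_nodesF.mp hs))
  calc (∑ s ∈ nodesF T, s.bag.powerset.card) ≤ ∑ _s ∈ nodesF T, 2 ^ (τ + 1) :=
        Finset.sum_le_sum h1
    _ = (nodesF T).card * 2 ^ (τ + 1) := by rw [Finset.sum_const, smul_eq_mul]
    _ ≤ T.size * 2 ^ (τ + 1) := Nat.mul_le_mul_right _ (card_nodesF_le T)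
    _ = 2 ^ (τ + 1) * T.size := Nat.mul_comm _ _

lemma qq_card (T : NiceTree n) (τ : ℕ) (hb : ∀ s : NiceTree n, s.isSubtree T → s.bag.card ≤ τ + 1) :
    qq T ≤ 3 * (2 ^ (τ + 1) * T.size) := by
  rw [qq, EqIdx, Finset.card_sigma]
  have h1 : ∀ s ∈ nodesF T,
      (s.bag.powerset ×ˢ (Finset.univ : Finset (Fin 3))).card ≤ 2 ^ (τ + 1) * 3 := by
    intro s hs
    rw [Finset.card_product, Finset.card_powerset, Finset.card_univ, Fintype.card_fin]
    exact Nat.mul_le_mul_right 3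
      (Nat.pow_le_pow_right (by norm_num) (hb s (mem_nodesF.mp hs)))
  calc (∑ s ∈ nodesF T, (s.bag.powerset ×ˢ (Finset.univ : Finset (Fin 3))).card)
      ≤ ∑ _s ∈ nodesF T, 2 ^ (τ + 1) * 3 := Finset.sum_le_sum h1
    _ = (nodesF T).card * (2 ^ (τ + 1) * 3) := by rw [Finset.sum_const, smul_eq_mul]
    _ ≤ T.size * (2 ^ (τ + 1) * 3) := Nat.mul_le_mul_right _ (card_nodesF_le T)
    _ = 3 * (2 ^ (τ + 1) * T.size) := by ring

def cutCoef (K : Finset (Fin n)) : Sym2 (Fin n) → ℝ :=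
  Sym2.lift ⟨fun u v => if ((u ∈ K) ↔ (v ∈ K)) then 0 else 1, by
    intro a b
    by_cases ha : a ∈ K <;> by_cases hb : b ∈ K <;> simp [ha, hb]⟩

lemma cutCoef_mk (K : Finset (Fin n)) (u v : Fin n) :
    cutCoef K s(u, v) = if ((u ∈ K) ↔ (v ∈ K)) then 0 else 1 := Sym2.lift_mk _ u v

end
end CutEF

/-- Extended formulation of size `O(2^(τ+1)·N)` for the cut
polytope of a graph of treewidth `τ`. -/
theorem cut_polytope_extended_formulation :
    ∃ c : ℕ, 0 < c ∧
      ∀ (n : ℕ) (G : SimpleGraph (Fin n)) (T : NiceTree n) (τ : ℕ),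
        IsNiceTreeDecompGraph G T →
        (∀ s : NiceTree n, s.isSubtree T → s.bag.card ≤ τ + 1) →
        ∃ (m p q : ℕ) (A : Matrix (Fin p) (Fin m) ℝ) (bvec : Fin p → ℝ)
          (Cmat : Matrix (Fin q) (Fin m) ℝ) (dvec : Fin q → ℝ)
          (π : (Fin m → ℝ) →ₗ[ℝ] (↥G.edgeSet → ℝ)),
          m ≤ c * 2 ^ (τ + 1) * T.size ∧ p + q ≤ c * 2 ^ (τ + 1) * T.size ∧
          π '' {x | A.mulVec x ≤ bvec ∧ Cmat.mulVec x = dvec}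
            = convexHull ℝ {x : ↥G.edgeSet → ℝ | ∃ S : Finset (Fin n),
                ∀ (u v : Fin n) (h : G.Adj u v),
                  x ⟨s(u, v), (G.mem_edgeSet).mpr h⟩ =
                    if (u ∈ S ∧ v ∉ S) ∨ (v ∈ S ∧ u ∉ S) then (1 : ℝ) else 0} := by

  classical
  refine ⟨4, by norm_num, ?_⟩
  intro n G T τ hdec hbags
  obtain ⟨hval, hverts, hedge⟩ := hdec
  have hch : ∀ e : ↥G.edgeSet, ∃ p : NiceTree n × Fin n × Fin n,
      p.1.isSubtree T ∧ p.2.1 ∈ p.1.bag ∧ p.2.2 ∈ p.1.bag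
        ∧ (e : Sym2 (Fin n)) = s(p.2.1, p.2.2) := by
    intro e
    obtain ⟨q, hq⟩ := e
    revert hq
    induction q using Sym2.ind with
    | _ u v =>
      intro hq
      have hadj : G.Adj u v := (G.mem_edgeSet).mp hq
      obtain ⟨s, hsub, hu, hv⟩ := hedge u v hadj
      exact ⟨(s, u, v), hsub, hu, hv, rfl⟩
  choose pick hp₁ hp₂ hp₃ hp₄ using hch
  obtain ⟨πmap, hπ⟩ : ∃ π : (Fin (CutEF.mm T) → ℝ) →ₗ[ℝ] (↥G.edgeSet → ℝ),
      ∀ x e, π x e = ∑ K ∈ (pick e).1.bag.powerset,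
        CutEF.cutCoef K (e : Sym2 (Fin n)) * CutEF.F T x (pick e).1 K := by
    refine ⟨⟨⟨fun x e => (∑ K ∈ (pick e).1.bag.powerset,
        CutEF.cutCoef K (e : Sym2 (Fin n)) * CutEF.F T x (pick e).1 K), ?_⟩, ?_⟩,
      fun x e => rfl⟩
    · intro x y
      funext e
      simp only [Pi.add_apply]
      rw [← Finset.sum_add_distrib]
      refine Finset.sum_congr rfl fun K _ => ?_
      rw [CutEF.F_add, mul_add]
    · intro c x
      funext e
      simp only [RingHom.id_apply, Pi.smul_apply, smul_eq_mul]
      rw [Finset.mul_sum]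
      refine Finset.sum_congr rfl fun K _ => ?_
      rw [CutEF.F_smul]
      ring
  have heval : ∀ (S : Finset (Fin n)) (e : ↥G.edgeSet),
      πmap (CutEF.xS T S) e
        = if (((pick e).2.1 ∈ S) ↔ ((pick e).2.2 ∈ S)) then 0 else 1 := by
    intro S e
    rw [hπ]
    have e1 : ∀ K ∈ (pick e).1.bag.powerset,
        CutEF.cutCoef K (e : Sym2 (Fin n)) * CutEF.F T (CutEF.xS T S) (pick e).1 K
          = if K = S ∩ (pick e).1.bag then CutEF.cutCoef K (e : Sym2 (Fin n)) else 0 := by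
      intro K _
      rw [CutEF.F_xS, CutEF.dS]
      by_cases h2 : K = S ∩ (pick e).1.bag
      · rw [if_pos ⟨hp₁ e, h2⟩, if_pos h2, mul_one]
      · rw [if_neg (fun h => h2 h.2), if_neg h2, mul_zero]
    rw [Finset.sum_congr rfl e1, Finset.sum_ite_eq',
      if_pos (Finset.mem_powerset.mpr Finset.inter_subset_right), hp₄ e, CutEF.cutCoef_mk]
    have hiff : (((pick e).2.1 ∈ S ∩ (pick e).1.bag) ↔ ((pick e).2.2 ∈ S ∩ (pick e).1.bag))
        ↔ (((pick e).2.1 ∈ S) ↔ ((pick e).2.2 ∈ S)) := by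
      rw [Finset.mem_inter, Finset.mem_inter]
      simp [hp₂ e, hp₃ e]
    rw [if_congr hiff rfl rfl]
  refine ⟨CutEF.mm T, CutEF.mm T, CutEF.qq T,
    -(1 : Matrix (Fin (CutEF.mm T)) (Fin (CutEF.mm T)) ℝ), 0, CutEF.Cmat T, CutEF.dvec T,
    πmap, ?_, ?_, ?_⟩
  · calc CutEF.mm T ≤ 2 ^ (τ + 1) * T.size := CutEF.mm_card T τ hbags
      _ ≤ 4 * 2 ^ (τ + 1) * T.size := by
          rw [mul_assoc]
          exact Nat.le_mul_of_pos_left _ (by norm_num)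
  · calc CutEF.mm T + CutEF.qq T
        ≤ 2 ^ (τ + 1) * T.size + 3 * (2 ^ (τ + 1) * T.size) :=
          Nat.add_le_add (CutEF.mm_card T τ hbags) (CutEF.qq_card T τ hbags)
      _ = 4 * 2 ^ (τ + 1) * T.size := by ring
  · have hfs : {x | (-(1 : Matrix (Fin (CutEF.mm T)) (Fin (CutEF.mm T)) ℝ)).mulVec x ≤ 0
        ∧ (CutEF.Cmat T).mulVec x = CutEF.dvec T} = CutEF.feas T := rfl
    rw [hfs, CutEF.feas_eq_hull T hval, πmap.image_convexHull]
    congr 1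
    apply Set.Subset.antisymm
    · rintro y ⟨x, ⟨S, rfl⟩, rfl⟩
      refine ⟨S, ?_⟩
      intro u v hadj
      set e : ↥G.edgeSet := ⟨s(u, v), (G.mem_edgeSet).mpr hadj⟩ with he
      rw [heval S e]
      have hq : s(u, v) = s((pick e).2.1, (pick e).2.2) := hp₄ e
      rcases Sym2.eq_iff.mp hq with ⟨h1, h2⟩ | ⟨h1, h2⟩
      · rw [← h1, ← h2]
        by_cases hu : u ∈ S <;> by_cases hv : v ∈ S <;> simp [hu, hv]
      · rw [← h1, ← h2]
        by_cases hu : u ∈ S <;> by_cases hv : v ∈ S <;> simp [hu, hv]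
    · rintro y ⟨S, hy⟩
      refine ⟨CutEF.xS T S, Set.mem_range_self S, ?_⟩
      funext e
      have hadj : G.Adj (pick e).2.1 (pick e).2.2 := by
        have h := e.2
        rw [hp₄ e] at h
        exact (G.mem_edgeSet).mp h
      have h1 := hy (pick e).2.1 (pick e).2.2 hadj
      have h2 : (⟨s((pick e).2.1, (pick e).2.2), (G.mem_edgeSet).mpr hadj⟩ : ↥G.edgeSet) = e :=
        Subtype.ext (hp₄ e).symm
      rw [h2] at h1
      rw [heval S e, h1]
      by_cases hu : (pick e).2.1 ∈ S <;> by_cases hv : (pick e).2.2 ∈ S <;> simp [hu, hv]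
end
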